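/- arXiv:1002.0540 — 4 statements merged into one kernel-verified Lean document; each statement's English description precedes it below -/
import Mathlib

section
/- For every s > 1/2 there exists a constant C = C(s) > 0 such that for all f, g ∈ H^s(ℝ), the pointwise product f·g again belongs to H^s(ℝ) and ‖f·g‖_{H^s} ≤ C·‖f‖_{H^s}·‖g‖_{H^s}. (Thus, for s > 1/2, H^s(ℝ) is closed under pointwise multiplication and becomes a Banach algebra upon introducing an equivalent norm.) -/
open MeasureTheory Real FourierTransform ENNReal

private lemma lint_CS {a b : ℝ → ℝ≥0∞} (ha : AEMeasurable a volume) (hb : AEMeasurable b volume) :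
    (∫⁻ x, a x * b x) ^ 2 ≤ (∫⁻ x, a x ^ 2) * (∫⁻ x, b x ^ 2) := by
  have hpq : Real.HolderConjugate 2 2 := Real.HolderConjugate.two_two
  have h := ENNReal.lintegral_mul_le_Lp_mul_Lq volume hpq ha hb
  calc (∫⁻ x, a x * b x) ^ 2 ≤ ((∫⁻ x, a x ^ (2:ℝ)) ^ (1/(2:ℝ)) * (∫⁻ x, b x ^ (2:ℝ)) ^ (1/(2:ℝ))) ^ 2 := by
        exact pow_le_pow_left' (by simpa [Pi.mul_apply] using h) 2
    _ = (∫⁻ x, a x ^ 2) * (∫⁻ x, b x ^ 2) := by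
        rw [mul_pow, ← ENNReal.rpow_natCast (_ ^ (1/(2:ℝ))) 2, ← ENNReal.rpow_natCast (_ ^ (1/(2:ℝ))) 2,
          ← ENNReal.rpow_mul, ← ENNReal.rpow_mul]
        norm_num [show ((2:ℕ):ℝ) = (2:ℝ) by norm_num]

private lemma ae_meas_sub {v : ℝ → ℝ≥0∞} (hv : AEMeasurable v volume) :
    AEMeasurable (fun p : ℝ × ℝ => v (p.1 - p.2)) ((volume : Measure ℝ).prod volume) :=
  hv.comp_quasiMeasurePreserving (quasiMeasurePreserving_sub_of_right_invariant volume volume)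

private lemma aemeas_lintegral {k : ℝ × ℝ → ℝ≥0∞}
    (hk : AEMeasurable k ((volume : Measure ℝ).prod volume)) :
    AEMeasurable (fun ξ => ∫⁻ η, k (ξ, η)) volume := by
  obtain ⟨k', hk'm, hkk'⟩ := hk
  refine ⟨fun ξ => ∫⁻ η, k' (ξ, η), hk'm.lintegral_prod_right', ?_⟩
  filter_upwards [Measure.ae_ae_of_ae_prod hkk'] with ξ hξ using lintegral_congr_ae hξ

private lemma lint_refl_sub (v : ℝ → ℝ≥0∞) (ξ : ℝ) :
    ∫⁻ η, v (ξ - η) = ∫⁻ η, v η := by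
  have h1 : ∀ η : ℝ, v (ξ - η) = (fun t => v (-t)) (η - ξ) := by intro η; simp [neg_sub]
  simp_rw [h1, lintegral_sub_right_eq_self (fun t => v (-t)) ξ]
  exact ((Measure.measurePreserving_neg (volume : Measure ℝ)).lintegral_map_equiv v
    (MeasurableEquiv.neg ℝ)).symm

/-- Young: `‖u ⋆ v‖₂² ≤ ‖v‖₁² ‖u‖₂²` (v in L¹). -/
private lemma young_right {u v : ℝ → ℝ≥0∞} (hu : AEMeasurable u volume)
    (hv : AEMeasurable v volume) (hu' : ∀ x, u x ≠ ∞) :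
    ∫⁻ ξ, (∫⁻ η, u η * v (ξ - η)) ^ 2 ≤ (∫⁻ η, v η) ^ 2 * ∫⁻ η, u η ^ 2 := by
  have key : ∀ ξ : ℝ, (∫⁻ η, u η * v (ξ - η)) ^ 2
      ≤ (∫⁻ η, v η) * ∫⁻ η, u η ^ 2 * v (ξ - η) := by
    intro ξ
    have hsplit : ∀ η : ℝ, u η * v (ξ - η)
        = (v (ξ - η) ^ (1/2:ℝ)) * (u η * v (ξ - η) ^ (1/2:ℝ)) := by
      intro η
      rw [mul_comm (v (ξ - η) ^ (1/2:ℝ)), mul_assoc,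
        ← ENNReal.rpow_add_of_nonneg _ _ (by norm_num) (by norm_num)]
      norm_num
    have hvm : AEMeasurable (fun η => v (ξ - η) ^ (1/2:ℝ)) volume := by
      refine AEMeasurable.pow_const ?_ _
      exact hv.comp_quasiMeasurePreserving
        (quasiMeasurePreserving_sub_left_of_right_invariant volume ξ)
    calc (∫⁻ η, u η * v (ξ - η)) ^ 2
        = (∫⁻ η, (v (ξ - η) ^ (1/2:ℝ)) * (u η * v (ξ - η) ^ (1/2:ℝ))) ^ 2 := by
          simp_rw [hsplit]
      _ ≤ (∫⁻ η, (v (ξ - η) ^ (1/2:ℝ)) ^ 2) * ∫⁻ η, (u η * v (ξ - η) ^ (1/2:ℝ)) ^ 2 :=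
          lint_CS hvm (hu.mul hvm)
      _ = (∫⁻ η, v (ξ - η)) * ∫⁻ η, u η ^ 2 * v (ξ - η) := by
          congr 1 <;> refine lintegral_congr fun η => ?_
          · rw [← ENNReal.rpow_natCast (v (ξ - η) ^ (1/2:ℝ)) 2, ← ENNReal.rpow_mul]; norm_num
          · rw [mul_pow, ← ENNReal.rpow_natCast (v (ξ - η) ^ (1/2:ℝ)) 2, ← ENNReal.rpow_mul]
            norm_num
      _ = (∫⁻ η, v η) * ∫⁻ η, u η ^ 2 * v (ξ - η) := by rw [lint_refl_sub]
  have hk : AEMeasurable (fun p : ℝ × ℝ => u p.2 ^ 2 * v (p.1 - p.2))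
      ((volume : Measure ℝ).prod volume) := ((hu.pow_const 2).comp_snd.fun_mul (ae_meas_sub hv))
  calc ∫⁻ ξ, (∫⁻ η, u η * v (ξ - η)) ^ 2
      ≤ ∫⁻ ξ, (∫⁻ η, v η) * ∫⁻ η, u η ^ 2 * v (ξ - η) := lintegral_mono key
    _ = (∫⁻ η, v η) * ∫⁻ ξ, ∫⁻ η, u η ^ 2 * v (ξ - η) :=
        lintegral_const_mul'' _ (aemeas_lintegral hk)
    _ = (∫⁻ η, v η) * ∫⁻ η, ∫⁻ ξ, u η ^ 2 * v (ξ - η) := by rw [lintegral_lintegral_swap hk]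
    _ = (∫⁻ η, v η) ^ 2 * ∫⁻ η, u η ^ 2 := by
        have : ∀ η : ℝ, ∫⁻ ξ, u η ^ 2 * v (ξ - η) = u η ^ 2 * ∫⁻ ζ, v ζ := fun η => by
          rw [lintegral_const_mul' _ _ (pow_ne_top (hu' η)),
            lintegral_sub_right_eq_self v η]
        simp_rw [this]
        rw [lintegral_mul_const'' _ (hu.pow_const 2), sq, mul_comm (∫⁻ η, u η ^ 2), mul_assoc]

/-- Young: `‖u ⋆ v‖₂² ≤ ‖u‖₁² ‖v‖₂²` (u in L¹). -/
private lemma young_left {u v : ℝ → ℝ≥0∞} (hu : AEMeasurable u volume)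
    (hv : AEMeasurable v volume) (hu' : ∀ x, u x ≠ ∞) :
    ∫⁻ ξ, (∫⁻ η, u η * v (ξ - η)) ^ 2 ≤ (∫⁻ η, u η) ^ 2 * ∫⁻ η, v η ^ 2 := by
  have key : ∀ ξ : ℝ, (∫⁻ η, u η * v (ξ - η)) ^ 2
      ≤ (∫⁻ η, u η) * ∫⁻ η, u η * v (ξ - η) ^ 2 := by
    intro ξ
    have hsplit : ∀ η : ℝ, u η * v (ξ - η)
        = (u η ^ (1/2:ℝ)) * (u η ^ (1/2:ℝ) * v (ξ - η)) := by
      intro η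
      rw [← mul_assoc, ← ENNReal.rpow_add_of_nonneg _ _ (by norm_num) (by norm_num)]
      norm_num
    have hum : AEMeasurable (fun η => u η ^ (1/2:ℝ)) volume := hu.pow_const _
    have hvm : AEMeasurable (fun η : ℝ => v (ξ - η)) volume :=
      hv.comp_quasiMeasurePreserving
        (quasiMeasurePreserving_sub_left_of_right_invariant volume ξ)
    calc (∫⁻ η, u η * v (ξ - η)) ^ 2
        = (∫⁻ η, (u η ^ (1/2:ℝ)) * (u η ^ (1/2:ℝ) * v (ξ - η))) ^ 2 := by simp_rw [hsplit]
      _ ≤ (∫⁻ η, (u η ^ (1/2:ℝ)) ^ 2) * ∫⁻ η, (u η ^ (1/2:ℝ) * v (ξ - η)) ^ 2 :=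
          lint_CS hum (hum.mul hvm)
      _ = (∫⁻ η, u η) * ∫⁻ η, u η * v (ξ - η) ^ 2 := by
          congr 1 <;> refine lintegral_congr fun η => ?_
          · rw [← ENNReal.rpow_natCast (u η ^ (1/2:ℝ)) 2, ← ENNReal.rpow_mul]; norm_num
          · rw [mul_pow, ← ENNReal.rpow_natCast (u η ^ (1/2:ℝ)) 2, ← ENNReal.rpow_mul]
            norm_num
  have hk : AEMeasurable (fun p : ℝ × ℝ => u p.2 * v (p.1 - p.2) ^ 2)
      ((volume : Measure ℝ).prod volume) := (hu.comp_snd.fun_mul ((ae_meas_sub hv).pow_const 2))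
  calc ∫⁻ ξ, (∫⁻ η, u η * v (ξ - η)) ^ 2
      ≤ ∫⁻ ξ, (∫⁻ η, u η) * ∫⁻ η, u η * v (ξ - η) ^ 2 := lintegral_mono key
    _ = (∫⁻ η, u η) * ∫⁻ ξ, ∫⁻ η, u η * v (ξ - η) ^ 2 :=
        lintegral_const_mul'' _ (aemeas_lintegral hk)
    _ = (∫⁻ η, u η) * ∫⁻ η, ∫⁻ ξ, u η * v (ξ - η) ^ 2 := by rw [lintegral_lintegral_swap hk]
    _ = (∫⁻ η, u η) ^ 2 * ∫⁻ η, v η ^ 2 := by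
        have : ∀ η : ℝ, ∫⁻ ξ, u η * v (ξ - η) ^ 2 = u η * ∫⁻ ζ, v ζ ^ 2 := fun η => by
          rw [lintegral_const_mul' _ _ (hu' η),
            lintegral_sub_right_eq_self (fun t => v t ^ 2) η]
        simp_rw [this]
        rw [lintegral_mul_const'' _ hu, sq, mul_assoc]

private lemma jbr_pos (s ξ : ℝ) : 0 < (1 + ξ^2) ^ (s/2) :=
  Real.rpow_pos_of_pos (by positivity) _

private lemma weight_triangle {s : ℝ} (hs0 : 0 ≤ s) (ξ η : ℝ) :
    (1 + ξ^2) ^ (s/2) ≤ 2^s * ((1 + η^2) ^ (s/2) + (1 + (ξ-η)^2) ^ (s/2)) := by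
  set a : ℝ := 1 + η^2 with ha
  set b : ℝ := 1 + (ξ-η)^2 with hb
  have ha0 : (0:ℝ) < a := by positivity
  have hb0 : (0:ℝ) < b := by positivity
  have hM : 1 + ξ^2 ≤ 4 * max a b := by
    have h1 : a ≤ max a b := le_max_left a b
    have h2 : b ≤ max a b := le_max_right a b
    nlinarith [sq_nonneg (η - (ξ - η)), sq_nonneg ξ]
  have hstep : (1 + ξ^2) ^ (s/2) ≤ (4 * max a b) ^ (s/2) :=
    Real.rpow_le_rpow (by positivity) hM (by positivity)
  have h4 : ((4:ℝ) * max a b) ^ (s/2) = 2^s * (max a b) ^ (s/2) := by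
    rw [Real.mul_rpow (by norm_num) (le_max_of_le_left ha0.le),
      show (4:ℝ) = 2^(2:ℝ) by norm_num [Real.rpow_natCast],
      ← Real.rpow_mul (by norm_num)]
    ring_nf
  have hmax : (max a b) ^ (s/2) ≤ a ^ (s/2) + b ^ (s/2) := by
    rcases le_total a b with h | h
    · rw [max_eq_right h]
      exact le_add_of_nonneg_left (by positivity)
    · rw [max_eq_left h]
      exact le_add_of_nonneg_right (by positivity)
  calc (1 + ξ^2) ^ (s/2) ≤ 2^s * (max a b) ^ (s/2) := by rw [← h4]; exact hstep
    _ ≤ 2^s * (a ^ (s/2) + b ^ (s/2)) := by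
        have : (0:ℝ) < 2^s := Real.rpow_pos_of_pos (by norm_num) s
        exact mul_le_mul_of_nonneg_left hmax this.le

private lemma integrable_weight {s : ℝ} (hs : 1/2 < s) :
    Integrable (fun ξ : ℝ => (1 + ξ^2) ^ (-s)) volume := by
  have h := integrable_rpow_neg_one_add_norm_sq (E := ℝ) (μ := volume)
    (r := 2*s) (by simpa using by linarith)
  refine h.congr (ae_of_all _ fun ξ => ?_)
  simp only [Real.norm_eq_abs, sq_abs]
  congr 1
  ring

private lemma eW_meas (s : ℝ) : Measurable (fun ξ : ℝ => ENNReal.ofReal ((1 + ξ^2) ^ (s/2))) := by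
  apply Measurable.ennreal_ofReal
  fun_prop

private lemma L1_le (s : ℝ) {φ : ℝ → ℝ≥0∞} (hφ : AEMeasurable φ volume) :
    (∫⁻ ξ, φ ξ) ^ 2 ≤ (∫⁻ ξ, ENNReal.ofReal ((1 + ξ^2) ^ (-s)))
      * ∫⁻ ξ, (ENNReal.ofReal ((1 + ξ^2) ^ (s/2)) * φ ξ) ^ 2 := by
  have hsplit : ∀ ξ : ℝ, φ ξ
      = ENNReal.ofReal ((1 + ξ^2) ^ (-(s/2))) * (ENNReal.ofReal ((1 + ξ^2) ^ (s/2)) * φ ξ) := by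
    intro ξ
    rw [← mul_assoc, ← ENNReal.ofReal_mul (by positivity),
      ← Real.rpow_add (by positivity : (0:ℝ) < 1 + ξ^2)]
    norm_num
  have hm : Measurable (fun ξ : ℝ => ENNReal.ofReal ((1 + ξ^2) ^ (-(s/2)))) := by
    apply Measurable.ennreal_ofReal; fun_prop
  calc (∫⁻ ξ, φ ξ) ^ 2
      = (∫⁻ ξ, ENNReal.ofReal ((1 + ξ^2) ^ (-(s/2)))
          * (ENNReal.ofReal ((1 + ξ^2) ^ (s/2)) * φ ξ)) ^ 2 := by
          congr 1; exact lintegral_congr hsplit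
    _ ≤ (∫⁻ ξ, (ENNReal.ofReal ((1 + ξ^2) ^ (-(s/2)))) ^ 2)
          * ∫⁻ ξ, (ENNReal.ofReal ((1 + ξ^2) ^ (s/2)) * φ ξ) ^ 2 :=
        lint_CS hm.aemeasurable (((eW_meas s).aemeasurable).mul hφ)
    _ = (∫⁻ ξ, ENNReal.ofReal ((1 + ξ^2) ^ (-s)))
          * ∫⁻ ξ, (ENNReal.ofReal ((1 + ξ^2) ^ (s/2)) * φ ξ) ^ 2 := by
        congr 1
        refine lintegral_congr fun ξ => ?_
        rw [sq, ← ENNReal.ofReal_mul (by positivity),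
          ← Real.rpow_add (by positivity : (0:ℝ) < 1 + ξ^2)]
        congr 1
        ring

private lemma fourierInv_eq_mul (F : ℝ → ℂ) (x : ℝ) :
    𝓕⁻ F x = ∫ ξ : ℝ, (Real.fourierChar (ξ * x) : ℂ) * F ξ := by
  rw [Real.fourierInv_eq]
  simp [RCLike.inner_apply, Circle.smul_def]
  simp_rw [mul_comm x]

private lemma fourierInv_conv {F G : ℝ → ℂ} (hF : Integrable F) (hG : Integrable G) (x : ℝ) :
    𝓕⁻ (fun ξ => ∫ η, F η * G (ξ - η)) x
      = 𝓕⁻ F x * 𝓕⁻ G x := by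
  have hconv : Integrable (fun p : ℝ × ℝ => F p.2 * G (p.1 - p.2))
      ((volume : Measure ℝ).prod volume) := by
    have := hF.convolution_integrand (ContinuousLinearMap.mul ℝ ℂ) hG
    simpa using this
  have hchar : ∀ ξ η : ℝ, (Real.fourierChar (ξ * x) : ℂ)
      = (Real.fourierChar (η * x) : ℂ) * (Real.fourierChar ((ξ - η) * x) : ℂ) := by
    intro ξ η
    rw [← Circle.coe_mul, ← AddChar.map_add_eq_mul]
    rw [show η * x + (ξ - η) * x = ξ * x by ring]
  have hI : Integrable (fun p : ℝ × ℝ => (Real.fourierChar (p.1 * x) : ℂ) * (F p.2 * G (p.1 - p.2)))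
      ((volume : Measure ℝ).prod volume) := by
    refine hconv.bdd_mul (c := 1) ?_ (ae_of_all _ fun p => (Circle.norm_coe _).le)
    apply Continuous.aestronglyMeasurable
    continuity
  rw [fourierInv_eq_mul]
  calc ∫ ξ : ℝ, (Real.fourierChar (ξ * x) : ℂ) * ∫ η, F η * G (ξ - η)
      = ∫ ξ : ℝ, ∫ η, (Real.fourierChar (ξ * x) : ℂ) * (F η * G (ξ - η)) := by
        refine integral_congr_ae (ae_of_all _ fun ξ => ?_)
        beta_reduce
        rw [integral_const_mul]
    _ = ∫ η : ℝ, ∫ ξ, (Real.fourierChar (ξ * x) : ℂ) * (F η * G (ξ - η)) :=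
        integral_integral_swap hI
    _ = ∫ η : ℝ, ((Real.fourierChar (η * x) : ℂ) * F η)
          * ∫ ξ, (Real.fourierChar ((ξ - η) * x) : ℂ) * G (ξ - η) := by
        refine integral_congr_ae (ae_of_all _ fun η => ?_)
        beta_reduce
        rw [show (∫ ξ : ℝ, (Real.fourierChar (ξ * x) : ℂ) * (F η * G (ξ - η)))
            = ∫ ξ : ℝ, ((Real.fourierChar (η * x) : ℂ) * F η)
              * ((Real.fourierChar ((ξ - η) * x) : ℂ) * G (ξ - η)) from
          integral_congr_ae (ae_of_all _ fun ξ => by beta_reduce; rw [hchar ξ η]; ring),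
          integral_const_mul]
    _ = ∫ η : ℝ, ((Real.fourierChar (η * x) : ℂ) * F η)
          * ∫ ζ, (Real.fourierChar (ζ * x) : ℂ) * G ζ := by
        refine integral_congr_ae (ae_of_all _ fun η => ?_)
        beta_reduce
        congr 1
        exact integral_sub_right_eq_self (fun ζ => (Real.fourierChar (ζ * x) : ℂ) * G ζ) η
    _ = 𝓕⁻ F x * 𝓕⁻ G x := by
        rw [integral_mul_const, ← fourierInv_eq_mul, ← fourierInv_eq_mul]

private lemma norm_fourierInv_le (F : ℝ → ℂ) (x : ℝ) :
    ‖𝓕⁻ F x‖ ≤ ∫ ξ, ‖F ξ‖ :=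
  VectorFourier.norm_fourierIntegral_le_integral_norm _ _ _ _ _

private lemma continuous_fourierInv {F : ℝ → ℂ} (hF : Integrable F) :
    Continuous (𝓕⁻ F) :=
  VectorFourier.fourierIntegral_continuous (L := -innerₗ ℝ) Real.continuous_fourierChar
    (by simp only [LinearMap.neg_apply, innerₗ_apply_apply]; exact continuous_inner.neg) hF

private lemma eLpNorm_weighted (s : ℝ) (u : ℝ → ℂ) :
    eLpNorm (fun ξ : ℝ => (((1 + ξ ^ 2) ^ (s / 2) : ℝ) : ℂ) * u ξ) 2 volume
      = (∫⁻ ξ : ℝ, (ENNReal.ofReal ((1 + ξ^2) ^ (s/2)) * (‖u ξ‖₊ : ℝ≥0∞)) ^ 2) ^ (1/2 : ℝ) := by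
  rw [eLpNorm_eq_lintegral_rpow_enorm_toReal (by norm_num) (by norm_num)]
  norm_num
  congr 1
  refine lintegral_congr fun ξ => ?_
  rw [enorm_eq_nnnorm, Complex.nnnorm_real, ← Real.enorm_eq_ofReal (jbr_pos s ξ).le]; rfl

private lemma sq_add_le (a b : ℝ≥0∞) : (a + b) ^ 2 ≤ 4 * (a ^ 2 + b ^ 2) := by
  have h1 : a + b ≤ 2 * (a ⊔ b) := by
    rw [two_mul]
    exact add_le_add le_sup_left le_sup_right
  calc (a + b) ^ 2 ≤ (2 * (a ⊔ b)) ^ 2 := pow_le_pow_left' h1 2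
    _ = 4 * (a ⊔ b) ^ 2 := by rw [mul_pow]; norm_num
    _ ≤ 4 * (a ^ 2 + b ^ 2) := by
        refine mul_le_mul_right ?_ 4
        rcases le_total a b with h | h
        · rw [sup_eq_right.mpr h]; exact le_add_self
        · rw [sup_eq_left.mpr h]; exact le_self_add

private lemma main_estimate {s : ℝ} (hs : 1/2 < s) {F G : ℝ → ℂ}
    (hF : Integrable F volume) (hG : Integrable G volume) :
    ∫⁻ ξ : ℝ, (ENNReal.ofReal ((1 + ξ^2) ^ (s/2)) * (‖∫ η, F η * G (ξ - η)‖₊ : ℝ≥0∞)) ^ 2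
      ≤ ((8 * ENNReal.ofReal (2^s) ^ 2 * ∫⁻ ξ : ℝ, ENNReal.ofReal ((1 + ξ^2) ^ (-s)))
          * ∫⁻ ξ : ℝ, (ENNReal.ofReal ((1 + ξ^2) ^ (s/2)) * (‖F ξ‖₊ : ℝ≥0∞)) ^ 2)
          * ∫⁻ ξ : ℝ, (ENNReal.ofReal ((1 + ξ^2) ^ (s/2)) * (‖G ξ‖₊ : ℝ≥0∞)) ^ 2 := by
  have hs0 : (0:ℝ) ≤ s := by linarith
  set eW : ℝ → ℝ≥0∞ := fun ξ => ENNReal.ofReal ((1 + ξ^2) ^ (s/2)) with heW_def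
  set φ : ℝ → ℝ≥0∞ := fun η => (‖F η‖₊ : ℝ≥0∞) with hφ_def
  set ψ : ℝ → ℝ≥0∞ := fun η => (‖G η‖₊ : ℝ≥0∞) with hψ_def
  set c2 : ℝ≥0∞ := ENNReal.ofReal (2^s) with hc2_def
  set Iw : ℝ≥0∞ := ∫⁻ ξ : ℝ, ENNReal.ofReal ((1 + ξ^2) ^ (-s)) with hIw_def
  set A : ℝ → ℝ≥0∞ := fun ξ => ∫⁻ η, (eW η * φ η) * ψ (ξ - η) with hA_def
  set B : ℝ → ℝ≥0∞ := fun ξ => ∫⁻ η, φ η * (eW (ξ - η) * ψ (ξ - η)) with hB_def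
  have heWm : Measurable eW := eW_meas s
  have heWt : ∀ ξ, eW ξ ≠ ⊤ := fun ξ => ENNReal.ofReal_ne_top
  have hφm : AEMeasurable φ volume := hF.aestronglyMeasurable.enorm
  have hψm : AEMeasurable ψ volume := hG.aestronglyMeasurable.enorm
  have hc2 : c2 ≠ ⊤ := ENNReal.ofReal_ne_top
  have hψsub : ∀ ξ : ℝ, AEMeasurable (fun η => ψ (ξ - η)) volume := fun ξ =>
    hψm.comp_quasiMeasurePreserving (quasiMeasurePreserving_sub_left_of_right_invariant volume ξ)
  have heWψsub : ∀ ξ : ℝ, AEMeasurable (fun η => eW (ξ - η) * ψ (ξ - η)) volume := fun ξ =>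
    (heWm.aemeasurable.mul hψm).comp_quasiMeasurePreserving
      (quasiMeasurePreserving_sub_left_of_right_invariant volume ξ)
  have hWsplit : ∀ ξ η : ℝ, eW ξ ≤ c2 * (eW η + eW (ξ - η)) := by
    intro ξ η
    calc eW ξ ≤ ENNReal.ofReal (2^s * ((1 + η^2) ^ (s/2) + (1 + (ξ-η)^2) ^ (s/2))) :=
          ENNReal.ofReal_le_ofReal (weight_triangle hs0 ξ η)
      _ = c2 * (eW η + eW (ξ - η)) := by
          rw [ENNReal.ofReal_mul (by positivity),
            ENNReal.ofReal_add (by positivity) (by positivity)]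
  have hHpt : ∀ ξ : ℝ, ((‖∫ η, F η * G (ξ - η)‖₊ : ℝ≥0∞))
      ≤ ∫⁻ η, φ η * ψ (ξ - η) := by
    intro ξ
    calc ((‖∫ η, F η * G (ξ - η)‖₊ : ℝ≥0∞))
        ≤ ∫⁻ η, (‖F η * G (ξ - η)‖₊ : ℝ≥0∞) := enorm_integral_le_lintegral_enorm _
      _ = ∫⁻ η, φ η * ψ (ξ - η) := lintegral_congr fun η => by
            rw [nnnorm_mul, ENNReal.coe_mul]
  have hpt : ∀ ξ : ℝ, eW ξ * ((‖∫ η, F η * G (ξ - η)‖₊ : ℝ≥0∞)) ≤ c2 * (A ξ + B ξ) := by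
    intro ξ
    calc eW ξ * ((‖∫ η, F η * G (ξ - η)‖₊ : ℝ≥0∞))
        ≤ eW ξ * ∫⁻ η, φ η * ψ (ξ - η) := mul_le_mul_right (hHpt ξ) _
      _ = ∫⁻ η, eW ξ * (φ η * ψ (ξ - η)) := (lintegral_const_mul' _ _ (heWt ξ)).symm
      _ ≤ ∫⁻ η, (c2 * (eW η + eW (ξ - η))) * (φ η * ψ (ξ - η)) :=
          lintegral_mono fun η => mul_le_mul_left (hWsplit ξ η) _
      _ = ∫⁻ η, c2 * ((eW η * φ η) * ψ (ξ - η) + φ η * (eW (ξ - η) * ψ (ξ - η))) :=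
          lintegral_congr fun η => by ring
      _ = c2 * (A ξ + B ξ) := by
          rw [lintegral_const_mul' _ _ hc2,
            lintegral_add_left' ((heWm.aemeasurable.fun_mul hφm).fun_mul (hψsub ξ))]
  have hAmeas : AEMeasurable A volume := aemeas_lintegral
    ((heWm.aemeasurable.fun_mul hφm).comp_snd.fun_mul (ae_meas_sub hψm))
  have hA2 : ∫⁻ ξ, A ξ ^ 2 ≤ (∫⁻ η, ψ η) ^ 2 * ∫⁻ η, (eW η * φ η) ^ 2 :=
    young_right (heWm.aemeasurable.mul hφm) hψm
      (fun x => ENNReal.mul_ne_top (heWt x) ENNReal.coe_ne_top)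
  have hB2 : ∫⁻ ξ, B ξ ^ 2 ≤ (∫⁻ η, φ η) ^ 2 * ∫⁻ η, (eW η * ψ η) ^ 2 :=
    young_left hφm (heWm.aemeasurable.mul hψm) (fun x => ENNReal.coe_ne_top)
  have hψ1 : (∫⁻ η, ψ η) ^ 2 ≤ Iw * ∫⁻ η, (eW η * ψ η) ^ 2 := L1_le s hψm
  have hφ1 : (∫⁻ η, φ η) ^ 2 ≤ Iw * ∫⁻ η, (eW η * φ η) ^ 2 := L1_le s hφm
  calc ∫⁻ ξ : ℝ, (eW ξ * ((‖∫ η, F η * G (ξ - η)‖₊ : ℝ≥0∞))) ^ 2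
      ≤ ∫⁻ ξ, (c2 * (A ξ + B ξ)) ^ 2 := lintegral_mono fun ξ => pow_le_pow_left' (hpt ξ) 2
    _ ≤ ∫⁻ ξ, c2 ^ 2 * (4 * (A ξ ^ 2 + B ξ ^ 2)) := lintegral_mono fun ξ => by
        rw [mul_pow]
        exact mul_le_mul_right (sq_add_le _ _) _
    _ = c2 ^ 2 * 4 * ∫⁻ ξ, (A ξ ^ 2 + B ξ ^ 2) := by
        rw [← lintegral_const_mul' (c2 ^ 2 * 4) (fun ξ => A ξ ^ 2 + B ξ ^ 2)
          (ENNReal.mul_ne_top (ENNReal.pow_ne_top hc2) (by norm_num))]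
        exact lintegral_congr fun ξ => by ring
    _ = c2 ^ 2 * 4 * ((∫⁻ ξ, A ξ ^ 2) + ∫⁻ ξ, B ξ ^ 2) := by
        rw [lintegral_add_left' (hAmeas.pow_const 2)]
    _ ≤ c2 ^ 2 * 4 * (((∫⁻ η, ψ η) ^ 2 * ∫⁻ η, (eW η * φ η) ^ 2)
          + ((∫⁻ η, φ η) ^ 2 * ∫⁻ η, (eW η * ψ η) ^ 2)) :=
        mul_le_mul_right (add_le_add hA2 hB2) _
    _ ≤ c2 ^ 2 * 4 * (((Iw * ∫⁻ η, (eW η * ψ η) ^ 2) * ∫⁻ η, (eW η * φ η) ^ 2)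
          + ((Iw * ∫⁻ η, (eW η * φ η) ^ 2) * ∫⁻ η, (eW η * ψ η) ^ 2)) :=
        mul_le_mul_right (add_le_add (mul_le_mul_left hψ1 _) (mul_le_mul_left hφ1 _)) _
    _ = ((8 * c2 ^ 2 * Iw) * ∫⁻ η, (eW η * φ η) ^ 2) * ∫⁻ η, (eW η * ψ η) ^ 2 := by ring

/-- `F` is the Fourier-side representative of `f` in `H^s(ℝ)`: `F` is integrable,
the weighted function `ξ ↦ (1+ξ²)^{s/2} F ξ` is in `L²`, and `f` is the inverse
Fourier(–Plancherel) transform of `F`.  For `s > 1/2` this encodes exactly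
`f ∈ L²(ℝ)` with `(1+ξ²)^{s/2} (𝓕 f)(ξ) ∈ L²` (the representative being continuous). -/
def IsHsRep (s : ℝ) (F f : ℝ → ℂ) : Prop :=
  Integrable F ∧
  MemLp (fun ξ : ℝ => (((1 + ξ ^ 2) ^ (s / 2) : ℝ) : ℂ) * F ξ) 2 volume ∧
  ∀ x : ℝ, f x = 𝓕⁻ F x

/-- The `Hˢ` norm, expressed through the Fourier-side representative `F` of `f`:
`‖f‖_{Hˢ} = ‖ξ ↦ (1+ξ²)^{s/2} F ξ‖_{L²}`. -/
noncomputable def hsNorm (s : ℝ) (F : ℝ → ℂ) : ℝ≥0∞ :=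
  eLpNorm (fun ξ : ℝ => (((1 + ξ ^ 2) ^ (s / 2) : ℝ) : ℂ) * F ξ) 2 volume

/-- For `s > 1/2` there is `C = C(s) > 0` such that for all
`f, g ∈ Hˢ(ℝ)` the pointwise product `f·g` is again in `Hˢ(ℝ)` and
`‖f·g‖_{Hˢ} ≤ C ‖f‖_{Hˢ} ‖g‖_{Hˢ}`; thus `Hˢ(ℝ)` is a Banach algebra for an
equivalent norm. -/
theorem hs_banach_algebra (s : ℝ) (hs : 1 / 2 < s) :
    ∃ C > (0 : ℝ), ∀ f g F G : ℝ → ℂ,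
      MemLp f 2 volume → MemLp g 2 volume →
      IsHsRep s F f → IsHsRep s G g →
      MemLp (fun x : ℝ => f x * g x) 2 volume ∧
      ∃ H : ℝ → ℂ, IsHsRep s H (fun x : ℝ => f x * g x) ∧
        hsNorm s H ≤ ENNReal.ofReal C * hsNorm s F * hsNorm s G := by
  have hIwt : (∫⁻ ξ : ℝ, ENNReal.ofReal ((1 + ξ^2) ^ (-s))) ≠ ⊤ := by
    have h1 : (∫⁻ ξ : ℝ, ENNReal.ofReal ((1 + ξ^2) ^ (-s)))
        = ∫⁻ ξ : ℝ, (‖(1 + ξ^2) ^ (-s)‖₊ : ℝ≥0∞) :=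
      lintegral_congr fun ξ => (Real.enorm_eq_ofReal (by positivity)).symm
    rw [h1]
    exact (integrable_weight hs).2.ne
  set K : ℝ≥0∞ := 8 * ENNReal.ofReal (2^s) ^ 2 * ∫⁻ ξ : ℝ, ENNReal.ofReal ((1 + ξ^2) ^ (-s))
    with hK_def
  have hK : K ≠ ⊤ := by
    rw [hK_def]
    exact ENNReal.mul_ne_top (ENNReal.mul_ne_top (by norm_num)
      (by simp [pow_ne_top, ENNReal.ofReal_ne_top])) hIwt
  set κ : ℝ≥0∞ := K ^ (1/2 : ℝ) with hκ_def
  have hκ : κ ≠ ⊤ := by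
    rw [hκ_def]
    exact (ENNReal.rpow_lt_top_of_nonneg (by norm_num) hK).ne
  refine ⟨κ.toReal + 1, by positivity, ?_⟩
  intro f g F G hf hg hFrep hGrep
  obtain ⟨hFint, hFw, hFeq⟩ := hFrep
  obtain ⟨hGint, hGw, hGeq⟩ := hGrep
  have hfc : Continuous f := by
    have : f = 𝓕⁻ F := funext hFeq
    rw [this]; exact continuous_fourierInv hFint
  have hfg_mem : MemLp (fun x : ℝ => f x * g x) 2 volume := by
    refine MemLp.of_le_mul (c := ∫ ξ, ‖F ξ‖) hg (hfc.aestronglyMeasurable.mul hg.aestronglyMeasurable)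
      (ae_of_all _ fun x => ?_)
    rw [norm_mul]
    refine mul_le_mul_of_nonneg_right ?_ (norm_nonneg _)
    rw [hFeq x]
    exact norm_fourierInv_le F x
  refine ⟨hfg_mem, ?_⟩
  set H : ℝ → ℂ := fun ξ => ∫ η, F η * G (ξ - η) with hH_def
  have hHint : Integrable H volume := by
    have h := hFint.integrable_convolution (ContinuousLinearMap.mul ℝ ℂ) hGint
    exact h
  have hmain := main_estimate hs hFint hGint
  have hsF : hsNorm s F
      = (∫⁻ ξ : ℝ, (ENNReal.ofReal ((1 + ξ^2) ^ (s/2)) * (‖F ξ‖₊ : ℝ≥0∞)) ^ 2) ^ (1/2 : ℝ) :=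
    eLpNorm_weighted s F
  have hsG : hsNorm s G
      = (∫⁻ ξ : ℝ, (ENNReal.ofReal ((1 + ξ^2) ^ (s/2)) * (‖G ξ‖₊ : ℝ≥0∞)) ^ 2) ^ (1/2 : ℝ) :=
    eLpNorm_weighted s G
  have hsH : hsNorm s H
      = (∫⁻ ξ : ℝ, (ENNReal.ofReal ((1 + ξ^2) ^ (s/2)) * (‖H ξ‖₊ : ℝ≥0∞)) ^ 2) ^ (1/2 : ℝ) :=
    eLpNorm_weighted s H
  have hbound : hsNorm s H ≤ κ * hsNorm s F * hsNorm s G := by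
    rw [hsH, hsF, hsG, hκ_def]
    calc (∫⁻ ξ : ℝ, (ENNReal.ofReal ((1 + ξ^2) ^ (s/2)) * (‖H ξ‖₊ : ℝ≥0∞)) ^ 2) ^ (1/2 : ℝ)
        ≤ ((K * ∫⁻ ξ : ℝ, (ENNReal.ofReal ((1 + ξ^2) ^ (s/2)) * (‖F ξ‖₊ : ℝ≥0∞)) ^ 2)
            * ∫⁻ ξ : ℝ, (ENNReal.ofReal ((1 + ξ^2) ^ (s/2)) * (‖G ξ‖₊ : ℝ≥0∞)) ^ 2) ^ (1/2 : ℝ) :=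
          ENNReal.rpow_le_rpow hmain (by norm_num)
      _ = _ := by
          rw [ENNReal.mul_rpow_of_nonneg _ _ (by norm_num),
            ENNReal.mul_rpow_of_nonneg _ _ (by norm_num)]
  have hsFfin : hsNorm s F < ⊤ := hFw.2
  have hsGfin : hsNorm s G < ⊤ := hGw.2
  refine ⟨H, ⟨hHint, ?_, fun x => ?_⟩, ?_⟩
  · constructor
    · have hwc : Continuous fun ξ : ℝ => ((1 + ξ ^ 2) ^ (s / 2) : ℝ) :=
        Continuous.rpow_const (by fun_prop) (fun ξ => Or.inl (by positivity))
      exact ((Complex.continuous_ofReal.comp hwc).aestronglyMeasurable).mul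
        hHint.aestronglyMeasurable
    · refine lt_of_le_of_lt hbound ?_
      exact ENNReal.mul_lt_top (ENNReal.mul_lt_top hκ.lt_top hsFfin) hsGfin
  · show f x * g x = 𝓕⁻ H x
    rw [hFeq x, hGeq x]
    exact (fourierInv_conv hFint hGint x).symm
  · refine le_trans hbound ?_
    refine mul_le_mul_left (mul_le_mul_left ?_ _) _
    rw [ENNReal.ofReal_add ENNReal.toReal_nonneg zero_le_one, ENNReal.ofReal_toReal hκ,
      ENNReal.ofReal_one]
    exact le_self_add
end

section
/- Let s ≥ 0, let m ≥ 1 be an integer, let x ≥ 0, let u : ℝ → ℝ be measurable with ∫₀^∞ |u(t)| dt < ∞ and ∫₀^∞ (1+t)^{2s} |u(t)|² dt < ∞, and let φ ∈ L²(ℝ). Then ∫_{Δ_m(x)} |u(y₁)| ⋯ |u(y_m)| · (1 + y_m)^s · |φ(ζ_m(y))| dy ≤ (‖u‖_{L¹(0,∞)}^{m−1} / (m−1)!) · ‖u‖_{L^{2,s}(0,∞)} · ‖φ‖_{L²(ℝ)}, where Δ_m(x) := { y ∈ ℝ^m : x ≤ y₁ ≤ y₂ ≤ ⋯ ≤ y_m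 } and ζ_m(y) := Σ_{j=0}^{m−1} (−1)^j y_{m−j}. (Taking m = 2n this gives the bound ‖A_n(x,·)‖_{L^{2,s}} ≤ ‖u‖_{L¹}^{2n−1}/(2n−1)! · ‖u‖_{L^{2,s}} on the n-th term of the multilinear expansion of the ZS–AKNS solution entry n₁₁⁺; taking m = 2n−1 it gives the analogous bound ‖B_n(x,·)‖_{L^{2,s}} ≤ ‖u‖_{L¹}^{2n−2}/(2n−2)! · ‖u‖_{L^{2,s}} for n₂₁⁺.) -/
open MeasureTheory ENNReal

namespace SimplexAux

noncomputable section

/-- The alternating sum `ζ_m(y)`. -/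
def zeta (m : ℕ) (y : Fin m → ℝ) : ℝ := ∑ j : Fin m, (-1 : ℝ) ^ (j : ℕ) * y j.rev

lemma measurable_zeta (m : ℕ) : Measurable (zeta m) :=
  Finset.measurable_sum _ fun j _ => (measurable_pi_apply _).const_mul _

/-- Append `t` as the last coordinate. -/
def insLast {n : ℕ} (t : ℝ) (z : Fin n → ℝ) : Fin (n + 1) → ℝ :=
  Fin.insertNth (Fin.last n) t z

lemma insLast_castSucc {n : ℕ} (t : ℝ) (z : Fin n → ℝ) (k : Fin n) :
    insLast t z k.castSucc = z k := by
  unfold insLast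
  rw [← Fin.succAbove_last, Fin.insertNth_apply_succAbove]

lemma insLast_last {n : ℕ} (t : ℝ) (z : Fin n → ℝ) :
    insLast t z (Fin.last n) = t := by
  unfold insLast
  exact Fin.insertNth_apply_same _ _ _

lemma zeta_insertNth {n : ℕ} (t : ℝ) (z : Fin n → ℝ) :
    zeta (n + 1) (insLast t z) = t - zeta n z := by
  unfold zeta
  rw [Fin.sum_univ_succ, Fin.rev_zero]
  simp only [Fin.val_zero, pow_zero, one_mul, insLast_last]
  have h : ∀ j : Fin n, (-1 : ℝ) ^ ((j.succ : Fin (n + 1)) : ℕ) *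
      (insLast t z j.succ.rev) = -((-1 : ℝ) ^ (j : ℕ) * z j.rev) := by
    intro j
    rw [Fin.rev_succ, insLast_castSucc, Fin.val_succ, pow_succ]
    ring
  rw [Finset.sum_congr rfl fun j _ => h j, Finset.sum_neg_distrib, sub_eq_add_neg]

lemma lintegral_comp_perm {n : ℕ} (σ : Equiv.Perm (Fin n)) (h : (Fin n → ℝ) → ℝ≥0∞) :
    ∫⁻ z : Fin n → ℝ, h (fun i => z (σ i)) = ∫⁻ z : Fin n → ℝ, h z := by
  have hmp := volume_measurePreserving_piCongrLeft (fun _ : Fin n => ℝ) σ.symm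
  have hco : ∀ z : Fin n → ℝ,
      (MeasurableEquiv.piCongrLeft (fun _ : Fin n => ℝ) σ.symm) z = fun i => z (σ i) := by
    intro z
    funext j
    rw [MeasurableEquiv.coe_piCongrLeft]
    have := Equiv.piCongrLeft_apply_apply (fun _ : Fin n => ℝ) σ.symm z (σ j)
    simpa using this
  calc ∫⁻ z : Fin n → ℝ, h (fun i => z (σ i))
      = ∫⁻ z : Fin n → ℝ, h ((MeasurableEquiv.piCongrLeft (fun _ : Fin n => ℝ) σ.symm) z) := by
        simp_rw [hco]
    _ = ∫⁻ z : Fin n → ℝ, h z :=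
        hmp.lintegral_comp_emb (MeasurableEquiv.measurableEmbedding _) h

lemma lintegral_prod_pow (m : ℕ) (f : ℝ → ℝ≥0∞) (hf : Measurable f) :
    ∫⁻ z : Fin m → ℝ, ∏ i, f (z i) = (∫⁻ t : ℝ, f t) ^ m := by
  induction m with
  | zero => simp [lintegral_const, volume_pi, Measure.pi_empty_univ]
  | succ k ih =>
    have hmp : MeasurePreserving
        (⇑(MeasurableEquiv.piFinSuccAbove (fun _ : Fin (k + 1) => ℝ) (Fin.last k)).symm)
        ((volume : Measure ℝ).prod (volume : Measure (Fin k → ℝ))) volume := by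
      have := (measurePreserving_piFinSuccAbove
        (fun _ : Fin (k + 1) => (volume : Measure ℝ)) (Fin.last k)).symm
      simpa only [← volume_pi] using this
    rw [← hmp.lintegral_comp_emb (MeasurableEquiv.measurableEmbedding _)]
    have hsymm : ∀ p : ℝ × (Fin k → ℝ),
        (MeasurableEquiv.piFinSuccAbove (fun _ : Fin (k + 1) => ℝ) (Fin.last k)).symm p
          = insLast p.1 p.2 := by
      intro p
      rw [MeasurableEquiv.piFinSuccAbove_symm_apply]
      rfl
    have hpt : ∀ p : ℝ × (Fin k → ℝ),
        (∏ i : Fin (k + 1), f ((insLast p.1 p.2) i))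
          = f p.1 * ∏ j : Fin k, f (p.2 j) := by
      intro p
      rw [Fin.prod_univ_castSucc]
      simp only [insLast_castSucc, insLast_last]
      exact mul_comm _ _
    simp_rw [hsymm, hpt]
    have hlpm : ∫⁻ a : ℝ × (Fin k → ℝ), f a.1 * ∏ j : Fin k, f (a.2 j)
          ∂((volume : Measure ℝ).prod (volume : Measure (Fin k → ℝ)))
        = (∫⁻ t : ℝ, f t) * ∫⁻ z : Fin k → ℝ, ∏ j : Fin k, f (z j) :=
      lintegral_prod_mul hf.aemeasurable
        (Finset.measurable_prod _ fun j _ => hf.comp (measurable_pi_apply j)).aemeasurable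
    rw [hlpm, ih, pow_succ]
    exact mul_comm _ _

lemma pair_null {n : ℕ} (i j : Fin (n + 1)) (hij : i ≠ j) :
    (volume : Measure (Fin (n + 1) → ℝ)) {z | z i = z j} = 0 := by
  obtain ⟨j', hj'⟩ := Fin.exists_succAbove_eq (Ne.symm hij)
  have hE : MeasurableSet {z : Fin (n + 1) → ℝ | z i = z j} :=
    measurableSet_eq_fun (measurable_pi_apply i) (measurable_pi_apply j)
  have hmp : MeasurePreserving
      (⇑(MeasurableEquiv.piFinSuccAbove (fun _ : Fin (n + 1) => ℝ) i).symm)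
      ((volume : Measure ℝ).prod (volume : Measure (Fin n → ℝ))) volume := by
    have := (measurePreserving_piFinSuccAbove
      (fun _ : Fin (n + 1) => (volume : Measure ℝ)) i).symm
    simpa only [← volume_pi] using this
  rw [← hmp.measure_preimage hE.nullMeasurableSet]
  have hpre : (⇑(MeasurableEquiv.piFinSuccAbove (fun _ : Fin (n + 1) => ℝ) i).symm) ⁻¹'
      {z : Fin (n + 1) → ℝ | z i = z j} = {p : ℝ × (Fin n → ℝ) | p.1 = p.2 j'} := by
    ext p
    have h1 : (MeasurableEquiv.piFinSuccAbove (fun _ : Fin (n + 1) => ℝ) i).symm p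
        = i.insertNth p.1 p.2 := by
      rw [MeasurableEquiv.piFinSuccAbove_symm_apply]; rfl
    simp only [Set.mem_preimage, Set.mem_setOf_eq, h1, Fin.insertNth_apply_same, ← hj',
      Fin.insertNth_apply_succAbove]
  have hFmeas : MeasurableSet {p : ℝ × (Fin n → ℝ) | p.1 = p.2 j'} :=
    measurableSet_eq_fun measurable_fst ((measurable_pi_apply j').comp measurable_snd)
  rw [hpre, Measure.prod_apply hFmeas]
  have hz : ∀ t : ℝ, (volume : Measure (Fin n → ℝ)) {z : Fin n → ℝ | t = z j'} = 0 := by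
    intro t
    have := Measure.pi_hyperplane (fun _ : Fin n => (volume : Measure ℝ)) j' t
    rw [volume_pi]
    simpa [eq_comm] using this
  have : ∀ t : ℝ, (volume : Measure (Fin n → ℝ))
      (Prod.mk t ⁻¹' {p : ℝ × (Fin n → ℝ) | p.1 = p.2 j'}) = 0 := by
    intro t
    simpa [Set.preimage_setOf_eq] using hz t
  exact (lintegral_congr this).trans lintegral_zero

lemma ae_injective (m : ℕ) : ∀ᵐ z : Fin m → ℝ, Function.Injective z := by
  rw [ae_iff]
  have hsub : {z : Fin m → ℝ | ¬Function.Injective z} ⊆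
      ⋃ (i : Fin m) (j : Fin m) (_ : i ≠ j), {z : Fin m → ℝ | z i = z j} := by
    intro z hz
    simp only [Set.mem_setOf_eq, Function.Injective] at hz
    push_neg at hz
    obtain ⟨a, b, hab, hne⟩ := hz
    exact Set.mem_iUnion.mpr ⟨a, Set.mem_iUnion.mpr ⟨b, Set.mem_iUnion.mpr ⟨hne, hab⟩⟩⟩
  refine measure_mono_null hsub ?_
  refine measure_iUnion_null fun i => measure_iUnion_null fun j => measure_iUnion_null fun hij => ?_
  obtain ⟨k, rfl⟩ : ∃ k, m = k + 1 := ⟨m - 1, by have := i.pos; omega⟩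
  exact pair_null i j hij

lemma measurableSet_monotone {m : ℕ} : MeasurableSet {y : Fin m → ℝ | Monotone y} := by
  have : {y : Fin m → ℝ | Monotone y}
      = ⋂ (i : Fin m) (j : Fin m) (_ : i ≤ j), {y : Fin m → ℝ | y i ≤ y j} := by
    ext y
    simp only [Set.mem_setOf_eq, Set.mem_iInter]
    exact ⟨fun h i j hij => h hij, fun h a b hab => h a b hab⟩
  rw [this]
  exact MeasurableSet.iInter fun i => MeasurableSet.iInter fun j => MeasurableSet.iInter fun _ =>
    measurableSet_le (measurable_pi_apply i) (measurable_pi_apply j)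

lemma measurableSet_monoCube {m : ℕ} (x : ℝ) :
    MeasurableSet {z : Fin m → ℝ | Monotone z ∧ ∀ i, x ≤ z i} := by
  have : {z : Fin m → ℝ | Monotone z ∧ ∀ i, x ≤ z i}
      = {z : Fin m → ℝ | Monotone z} ∩ ⋂ i, {z : Fin m → ℝ | x ≤ z i} := by
    ext z; simp [Set.mem_iInter]
  rw [this]
  exact measurableSet_monotone.inter (MeasurableSet.iInter fun i =>
    measurableSet_le measurable_const (measurable_pi_apply i))

lemma simplex_le (m : ℕ) (x : ℝ) (f : ℝ → ℝ≥0∞) (hf : Measurable f) :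
    ∫⁻ z : Fin m → ℝ,
        Set.indicator {z : Fin m → ℝ | Monotone z ∧ ∀ i, x ≤ z i} (fun z => ∏ i, f (z i)) z
      ≤ (∫⁻ t in Set.Ici x, f t) ^ m / (Nat.factorial m : ℝ≥0∞) := by
  classical
  set S := {z : Fin m → ℝ | Monotone z ∧ ∀ i, x ≤ z i} with hSdef
  have hSm : MeasurableSet S := measurableSet_monoCube x
  have hprodmeas : Measurable fun z : Fin m → ℝ => ∏ i, f (z i) :=
    Finset.measurable_prod _ fun i _ => hf.comp (measurable_pi_apply i)
  set h : (Fin m → ℝ) → ℝ≥0∞ := S.indicator (fun z => ∏ i, f (z i)) with hh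
  have hhm : Measurable h := hprodmeas.indicator hSm
  have hcube : ∫⁻ z : Fin m → ℝ, ∏ i, (Set.indicator (Set.Ici x) f) (z i)
      = (∫⁻ t in Set.Ici x, f t) ^ m := by
    rw [lintegral_prod_pow m _ (hf.indicator measurableSet_Ici),
      lintegral_indicator measurableSet_Ici]
  have key : (Nat.factorial m : ℝ≥0∞) * ∫⁻ z, h z ≤ (∫⁻ t in Set.Ici x, f t) ^ m := by
    have h1 : (Nat.factorial m : ℝ≥0∞) * ∫⁻ z, h z
        = ∑ σ : Equiv.Perm (Fin m), ∫⁻ z : Fin m → ℝ, h (fun i => z (σ i)) := by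
      simp_rw [lintegral_comp_perm]
      rw [Finset.sum_const, Finset.card_univ, Fintype.card_perm, Fintype.card_fin, nsmul_eq_mul]
    have h2 : ∑ σ : Equiv.Perm (Fin m), ∫⁻ z : Fin m → ℝ, h (fun i => z (σ i))
        = ∫⁻ z : Fin m → ℝ, ∑ σ : Equiv.Perm (Fin m), h (fun i => z (σ i)) := by
      refine (lintegral_finset_sum _ fun σ _ => ?_).symm
      exact hhm.comp (measurable_pi_lambda _ fun i => measurable_pi_apply (σ i))
    rw [h1, h2]
    refine le_trans (lintegral_mono_ae ?_) hcube.le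
    filter_upwards [ae_injective m] with z hz
    by_cases hex : ∃ σ₀ : Equiv.Perm (Fin m), (fun i => z (σ₀ i)) ∈ S
    · obtain ⟨σ₀, hσ₀⟩ := hex
      have hzx : ∀ i, x ≤ z i := fun i => by
        have := hσ₀.2 (σ₀.symm i)
        simpa using this
      have hrhs : ∏ i, (Set.Ici x).indicator f (z i) = ∏ i, f (z i) :=
        Finset.prod_congr rfl fun i _ => Set.indicator_of_mem (hzx i) f
      rw [hrhs]
      have hterm : ∀ σ : Equiv.Perm (Fin m),
          h (fun i => z (σ i)) ≤ if σ = σ₀ then ∏ i, f (z i) else 0 := by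
        intro σ
        by_cases hσ : σ = σ₀
        · subst hσ
          rw [if_pos rfl, hh]
          refine le_trans (Set.indicator_le_self _ _ _) ?_
          exact le_of_eq (Equiv.prod_comp σ fun i => f (z i))
        · rw [if_neg hσ, hh, Set.indicator_of_notMem]
          intro hmem
          apply hσ
          have hs1 : StrictMono fun i => z (σ i) :=
            hmem.1.strictMono_of_injective (hz.comp σ.injective)
          have hs2 : StrictMono fun i => z (σ₀ i) :=
            hσ₀.1.strictMono_of_injective (hz.comp σ₀.injective)
          have hr : Set.range (fun i => z (σ i)) = Set.range (fun i => z (σ₀ i)) := by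
            rw [show (fun i => z (σ i)) = z ∘ σ from rfl,
              show (fun i => z (σ₀ i)) = z ∘ σ₀ from rfl,
              σ.surjective.range_comp, σ₀.surjective.range_comp]
          have hwf : WellFoundedLT (Fin m) := inferInstance
          have heqf : (fun i => z (σ i)) = fun i => z (σ₀ i) :=
            (StrictMono.range_inj hs1 hs2).mp hr
          exact Equiv.ext fun i => hz (congrFun heqf i)
      calc ∑ σ : Equiv.Perm (Fin m), h (fun i => z (σ i))
          ≤ ∑ σ : Equiv.Perm (Fin m), if σ = σ₀ then ∏ i, f (z i) else 0 :=
            Finset.sum_le_sum fun σ _ => hterm σ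
        _ = ∏ i, f (z i) := by rw [Finset.sum_ite_eq' Finset.univ σ₀]; simp
    · push_neg at hex
      have hzero : ∀ σ : Equiv.Perm (Fin m), h (fun i => z (σ i)) = 0 := fun σ =>
        Set.indicator_of_notMem (hex σ) _
      simp only [hzero, Finset.sum_const_zero]
      exact zero_le
  rw [ENNReal.le_div_iff_mul_le (Or.inl (by exact_mod_cast m.factorial_ne_zero))
    (Or.inl (ENNReal.natCast_ne_top _)), mul_comm]
  exact key

lemma zeta_preimage_null {n : ℕ} {N : Set ℝ} (hN : MeasurableSet N) (h0 : volume N = 0) :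
    (volume : Measure (Fin (n + 1) → ℝ)) {y | zeta (n + 1) y ∈ N} = 0 := by
  have hE : MeasurableSet {y : Fin (n + 1) → ℝ | zeta (n + 1) y ∈ N} := measurable_zeta _ hN
  have hmp : MeasurePreserving
      (⇑(MeasurableEquiv.piFinSuccAbove (fun _ : Fin (n + 1) => ℝ) (Fin.last n)).symm)
      ((volume : Measure ℝ).prod (volume : Measure (Fin n → ℝ))) volume := by
    have := (measurePreserving_piFinSuccAbove
      (fun _ : Fin (n + 1) => (volume : Measure ℝ)) (Fin.last n)).symm
    simpa only [← volume_pi] using this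
  rw [← hmp.measure_preimage hE.nullMeasurableSet]
  have hpre : (⇑(MeasurableEquiv.piFinSuccAbove (fun _ : Fin (n + 1) => ℝ) (Fin.last n)).symm) ⁻¹'
      {y : Fin (n + 1) → ℝ | zeta (n + 1) y ∈ N}
      = {p : ℝ × (Fin n → ℝ) | p.1 - zeta n p.2 ∈ N} := by
    ext p
    have h1 : (MeasurableEquiv.piFinSuccAbove (fun _ : Fin (n + 1) => ℝ) (Fin.last n)).symm p
        = insLast p.1 p.2 := by
      rw [MeasurableEquiv.piFinSuccAbove_symm_apply]; rfl
    simp only [Set.mem_preimage, Set.mem_setOf_eq, h1, zeta_insertNth]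
  have hFmeas : MeasurableSet {p : ℝ × (Fin n → ℝ) | p.1 - zeta n p.2 ∈ N} :=
    (measurable_fst.sub ((measurable_zeta n).comp measurable_snd)) hN
  rw [hpre, Measure.prod_apply_symm hFmeas]
  have hz : ∀ z : Fin n → ℝ,
      (volume : Measure ℝ) ((fun t : ℝ => (t, z)) ⁻¹' {p : ℝ × (Fin n → ℝ) | p.1 - zeta n p.2 ∈ N})
        = 0 := by
    intro z
    have hmp2 := (measurePreserving_sub_right (volume : Measure ℝ) (zeta n z)).measure_preimage
      hN.nullMeasurableSet
    simpa [Set.preimage_setOf_eq, h0, Set.preimage] using hmp2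
  exact (lintegral_congr fun z => hz z).trans lintegral_zero

lemma final_step (n : ℕ) (A : ℝ≥0∞) (a B C : ℝ) (hA : A ≤ ENNReal.ofReal a)
    (hann : 0 ≤ a) (hBnn : 0 ≤ B) :
    (A ^ n / (Nat.factorial n : ℝ≥0∞)) *
        (ENNReal.ofReal (B ^ ((1 : ℝ) / 2)) * ENNReal.ofReal (C ^ ((1 : ℝ) / 2)))
      ≤ ENNReal.ofReal ((a ^ n / (Nat.factorial n : ℝ)) * B ^ ((1 : ℝ) / 2) *
          C ^ ((1 : ℝ) / 2)) := by
  have hfac : (0 : ℝ) < (Nat.factorial n : ℝ) := by exact_mod_cast n.factorial_pos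
  have hdiv : (ENNReal.ofReal a) ^ n / (Nat.factorial n : ℝ≥0∞)
      = ENNReal.ofReal (a ^ n / (Nat.factorial n : ℝ)) := by
    rw [ENNReal.ofReal_div_of_pos hfac, ENNReal.ofReal_pow hann, ENNReal.ofReal_natCast]
  calc (A ^ n / (Nat.factorial n : ℝ≥0∞)) *
        (ENNReal.ofReal (B ^ ((1 : ℝ) / 2)) * ENNReal.ofReal (C ^ ((1 : ℝ) / 2)))
      ≤ ((ENNReal.ofReal a) ^ n / (Nat.factorial n : ℝ≥0∞)) *
        (ENNReal.ofReal (B ^ ((1 : ℝ) / 2)) * ENNReal.ofReal (C ^ ((1 : ℝ) / 2))) :=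
        mul_le_mul_left (ENNReal.div_le_div_right (pow_le_pow_left' hA n) _) _
    _ = ENNReal.ofReal ((a ^ n / (Nat.factorial n : ℝ)) * B ^ ((1 : ℝ) / 2) *
          C ^ ((1 : ℝ) / 2)) := by
        rw [hdiv, ENNReal.ofReal_mul (mul_nonneg (div_nonneg (pow_nonneg hann n) hfac.le)
            (Real.rpow_nonneg hBnn _)),
          ENNReal.ofReal_mul (div_nonneg (pow_nonneg hann n) hfac.le), mul_assoc]

lemma main_aux (s : ℝ) (hs : 0 ≤ s) (n : ℕ) (x : ℝ) (hx : 0 ≤ x)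
    (u : ℝ → ℝ) (hu : Measurable u)
    (hu2 : IntegrableOn (fun t : ℝ => (1 + t) ^ (2 * s) * u t ^ 2) (Set.Ioi (0 : ℝ)))
    (ψ : ℝ → ℂ) (hψm : Measurable ψ) (hψ2 : MemLp ψ 2 volume) :
    (∫⁻ y in {y : Fin (n + 1) → ℝ | x ≤ y 0 ∧ Monotone y},
        ENNReal.ofReal ((∏ i, |u (y i)|) * (1 + y (Fin.last n)) ^ s *
          ‖ψ (zeta (n + 1) y)‖))
      ≤ ((∫⁻ t in Set.Ici x, ENNReal.ofReal |u t|) ^ n / (Nat.factorial n : ℝ≥0∞)) *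
          (ENNReal.ofReal ((∫ t in Set.Ioi (0 : ℝ), (1 + t) ^ (2 * s) * u t ^ 2) ^ ((1 : ℝ) / 2)) *
           ENNReal.ofReal ((∫ t : ℝ, ‖ψ t‖ ^ 2) ^ ((1 : ℝ) / 2))) := by
  classical
  set fI : ℝ → ℝ≥0∞ := fun t => ENNReal.ofReal |u t| with hfI
  have hfIm : Measurable fI := ENNReal.measurable_ofReal.comp hu.abs
  set w : ℝ → ℝ≥0∞ := fun t => ENNReal.ofReal (|u t| * (1 + t) ^ s) with hw
  have hwm : Measurable w := ENNReal.measurable_ofReal.comp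
    (hu.abs.mul ((Real.continuous_rpow_const hs).measurable.comp
      (measurable_const.add measurable_id)))
  set g : ℝ → ℝ≥0∞ := fun r => ENNReal.ofReal (‖ψ r‖) with hg
  have hgm : Measurable g := ENNReal.measurable_ofReal.comp
    (continuous_norm.measurable.comp hψm)
  set F : (Fin (n + 1) → ℝ) → ℝ≥0∞ := fun y =>
    ENNReal.ofReal ((∏ i, |u (y i)|) * (1 + y (Fin.last n)) ^ s *
      ‖ψ (zeta (n + 1) y)‖) with hF
  have hFm : Measurable F := by
    apply ENNReal.measurable_ofReal.comp
    refine Measurable.mul (Measurable.mul ?_ ?_) ?_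
    · exact Finset.measurable_prod _ fun i _ => hu.abs.comp (measurable_pi_apply i)
    · exact (Real.continuous_rpow_const hs).measurable.comp
        (measurable_const.add (measurable_pi_apply _))
    · exact continuous_norm.measurable.comp (hψm.comp (measurable_zeta _))
  set S' : Set (Fin (n + 1) → ℝ) := {y | x ≤ y 0 ∧ Monotone y} with hS'def
  have hS' : MeasurableSet S' := by
    have : S' = {y : Fin (n + 1) → ℝ | x ≤ y 0} ∩ {y : Fin (n + 1) → ℝ | Monotone y} := rfl
    rw [this]
    exact (measurableSet_le measurable_const (measurable_pi_apply 0)).inter measurableSet_monotone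
  set S'' : Set (Fin n → ℝ) := {z | Monotone z ∧ ∀ i, x ≤ z i} with hS''def
  have hS'' : MeasurableSet S'' := measurableSet_monoCube x
  set B : ℝ := ∫ t in Set.Ioi (0 : ℝ), (1 + t) ^ (2 * s) * u t ^ 2 with hB
  have hBnn : 0 ≤ B := setIntegral_nonneg measurableSet_Ioi fun t ht =>
    mul_nonneg (Real.rpow_nonneg (by simp only [Set.mem_Ioi] at ht; linarith) _) (sq_nonneg _)
  set C : ℝ := ∫ t : ℝ, ‖ψ t‖ ^ 2 with hC
  have hCnn : 0 ≤ C := integral_nonneg fun t => sq_nonneg _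
  have hCint : Integrable (fun t : ℝ => ‖ψ t‖ ^ 2) volume := by
    have := hψ2.integrable_norm_rpow two_ne_zero ENNReal.ofNat_ne_top
    have h2 : (2 : ℝ≥0∞).toReal = ((2 : ℕ) : ℝ) := by simp
    simpa [h2, Real.rpow_natCast] using this
  set K : ℝ≥0∞ := ENNReal.ofReal (B ^ ((1 : ℝ) / 2)) * ENNReal.ofReal (C ^ ((1 : ℝ) / 2))
    with hK
  -- the inner Cauchy–Schwarz estimate
  have inner : ∀ c : ℝ, ∫⁻ t in Set.Ici x, w t * g (t - c) ≤ K := by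
    intro c
    have hconj : Real.HolderConjugate 2 2 := Real.HolderConjugate.two_two
    have hCS := ENNReal.lintegral_mul_le_Lp_mul_Lq (μ := volume.restrict (Set.Ici x)) hconj
      (f := w) (g := fun t => g (t - c)) hwm.aemeasurable
      ((hgm.comp (measurable_id.sub measurable_const)).aemeasurable)
    refine le_trans hCS ?_
    have hwpart : (∫⁻ t in Set.Ici x, w t ^ (2 : ℝ)) ^ ((1 : ℝ) / 2)
        ≤ ENNReal.ofReal (B ^ ((1 : ℝ) / 2)) := by
      have h2 : ∫⁻ t in Set.Ici x, w t ^ (2 : ℝ) ≤ ENNReal.ofReal B := by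
        calc ∫⁻ t in Set.Ici x, w t ^ (2 : ℝ)
            ≤ ∫⁻ t in Set.Ici (0 : ℝ), w t ^ (2 : ℝ) :=
              lintegral_mono_set (Set.Ici_subset_Ici.mpr hx)
          _ = ∫⁻ t in Set.Ioi (0 : ℝ), w t ^ (2 : ℝ) := by rw [restrict_Ioi_eq_restrict_Ici]
          _ = ∫⁻ t in Set.Ioi (0 : ℝ), ENNReal.ofReal ((1 + t) ^ (2 * s) * u t ^ 2) := by
              refine setLIntegral_congr_fun measurableSet_Ioi (fun t ht => ?_)
              simp only [Set.mem_Ioi] at ht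
              have h1t : (0 : ℝ) < 1 + t := by linarith
              rw [hw]
              rw [ENNReal.ofReal_rpow_of_nonneg
                (mul_nonneg (abs_nonneg _) (Real.rpow_nonneg h1t.le _)) (by norm_num)]
              congr 1
              have hpow : ((1 + t) ^ s) ^ (2 : ℕ) = (1 + t) ^ (2 * s) := by
                rw [← Real.rpow_natCast ((1 + t) ^ s) 2, ← Real.rpow_mul h1t.le]
                congr 1
                push_cast
                ring
              have h2' : (|u t| * (1 + t) ^ s) ^ (2 : ℝ)
                  = (|u t| * (1 + t) ^ s) ^ (2 : ℕ) := by
                rw [← Real.rpow_natCast (|u t| * (1 + t) ^ s) 2]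
                norm_num
              rw [h2', mul_pow, sq_abs, hpow, mul_comm]
          _ = ENNReal.ofReal B := by
              rw [hB]
              refine (ofReal_integral_eq_lintegral_ofReal hu2 ?_).symm
              refine (ae_restrict_iff' measurableSet_Ioi).mpr (ae_of_all _ fun t ht => ?_)
              simp only [Set.mem_Ioi] at ht
              exact mul_nonneg (Real.rpow_nonneg (by linarith) _) (sq_nonneg _)
      calc (∫⁻ t in Set.Ici x, w t ^ (2 : ℝ)) ^ ((1 : ℝ) / 2)
          ≤ (ENNReal.ofReal B) ^ ((1 : ℝ) / 2) := ENNReal.rpow_le_rpow h2 (by norm_num)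
        _ = ENNReal.ofReal (B ^ ((1 : ℝ) / 2)) :=
            ENNReal.ofReal_rpow_of_nonneg hBnn (by norm_num)
    have hgpart : (∫⁻ t in Set.Ici x, (fun t => g (t - c)) t ^ (2 : ℝ)) ^ ((1 : ℝ) / 2)
        ≤ ENNReal.ofReal (C ^ ((1 : ℝ) / 2)) := by
      have h3 : ∫⁻ t in Set.Ici x, g (t - c) ^ (2 : ℝ) ≤ ENNReal.ofReal C := by
        calc ∫⁻ t in Set.Ici x, g (t - c) ^ (2 : ℝ)
            ≤ ∫⁻ t : ℝ, g (t - c) ^ (2 : ℝ) := setLIntegral_le_lintegral _ _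
          _ = ∫⁻ t : ℝ, g t ^ (2 : ℝ) := by
              have := lintegral_add_right_eq_self (μ := (volume : Measure ℝ))
                (fun t : ℝ => g t ^ (2 : ℝ)) (-c)
              simpa [sub_eq_add_neg] using this
          _ = ∫⁻ t : ℝ, ENNReal.ofReal (‖ψ t‖ ^ 2) := by
              refine lintegral_congr fun t => ?_
              rw [hg, ENNReal.ofReal_rpow_of_nonneg (norm_nonneg _) (by norm_num)]
              congr 1
              rw [← Real.rpow_natCast (‖ψ t‖) 2]
              norm_num
          _ = ENNReal.ofReal C := by
              rw [hC]
              exact (ofReal_integral_eq_lintegral_ofReal hCint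
                (ae_of_all _ fun t => sq_nonneg _)).symm
      calc (∫⁻ t in Set.Ici x, g (t - c) ^ (2 : ℝ)) ^ ((1 : ℝ) / 2)
          ≤ (ENNReal.ofReal C) ^ ((1 : ℝ) / 2) := ENNReal.rpow_le_rpow h3 (by norm_num)
        _ = ENNReal.ofReal (C ^ ((1 : ℝ) / 2)) :=
            ENNReal.ofReal_rpow_of_nonneg hCnn (by norm_num)
    rw [hK]
    exact mul_le_mul' hwpart hgpart
  -- transfer to the product space
  set e := MeasurableEquiv.piFinSuccAbove (fun _ : Fin (n + 1) => ℝ) (Fin.last n) with he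
  have hmp : MeasurePreserving (⇑e.symm)
      ((volume : Measure ℝ).prod (volume : Measure (Fin n → ℝ))) volume := by
    have := (measurePreserving_piFinSuccAbove
      (fun _ : Fin (n + 1) => (volume : Measure ℝ)) (Fin.last n)).symm
    simpa only [← volume_pi] using this
  have hesymm : ∀ p : ℝ × (Fin n → ℝ), e.symm p = insLast p.1 p.2 := by
    intro p
    rw [he, MeasurableEquiv.piFinSuccAbove_symm_apply]
    rfl
  -- pointwise bound
  have keybound : ∀ (z : Fin n → ℝ) (t : ℝ),
      S'.indicator F (insLast t z)
        ≤ S''.indicator (fun z' => ∏ i, fI (z' i)) z *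
          (Set.Ici x).indicator (fun t' => w t' * g (t' - zeta n z)) t := by
    intro z t
    by_cases hy : insLast t z ∈ S'
    · rw [Set.indicator_of_mem hy]
      obtain ⟨hy0, hymono⟩ := hy
      have hyt : insLast t z (Fin.last n) = t := insLast_last t z
      have hxt : x ≤ t := by
        have h1 : insLast t z 0 ≤ insLast t z (Fin.last n) := hymono (Fin.zero_le _)
        rw [hyt] at h1
        exact le_trans hy0 h1
      have hmz : Monotone z := by
        intro a b hab
        rw [← insLast_castSucc t z a, ← insLast_castSucc t z b]
        exact hymono (Fin.castSucc_le_castSucc_iff.mpr hab)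
      have hxz : ∀ k, x ≤ z k := by
        intro k
        rw [← insLast_castSucc t z k]
        exact le_trans hy0 (hymono (Fin.zero_le _))
      rw [Set.indicator_of_mem (show z ∈ S'' from ⟨hmz, hxz⟩),
        Set.indicator_of_mem (show t ∈ Set.Ici x from hxt)]
      apply le_of_eq
      have h1t : (0 : ℝ) < 1 + t := by linarith
      rw [hF]
      simp only [zeta_insertNth, hyt]
      rw [Fin.prod_univ_castSucc]
      simp only [insLast_castSucc, insLast_last]
      rw [show (∏ k : Fin n, |u (z k)|) * |u t| * (1 + t) ^ s *
            ‖ψ (t - zeta n z)‖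
          = (∏ k : Fin n, |u (z k)|) * ((|u t| * (1 + t) ^ s) *
            ‖ψ (t - zeta n z)‖) by ring]
      rw [ENNReal.ofReal_mul (Finset.prod_nonneg fun i _ => abs_nonneg _),
        ENNReal.ofReal_mul (mul_nonneg (abs_nonneg _) (Real.rpow_nonneg h1t.le _)),
        ENNReal.ofReal_prod_of_nonneg (fun i _ => abs_nonneg _)]
    · rw [Set.indicator_of_notMem hy]
      exact zero_le
  -- main chain
  calc (∫⁻ y in S', F y)
      = ∫⁻ y : Fin (n + 1) → ℝ, S'.indicator F y := (lintegral_indicator hS' F).symm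
    _ = ∫⁻ p : ℝ × (Fin n → ℝ), S'.indicator F (e.symm p)
          ∂((volume : Measure ℝ).prod (volume : Measure (Fin n → ℝ))) :=
        (hmp.lintegral_comp_emb (MeasurableEquiv.measurableEmbedding _) _).symm
    _ = ∫⁻ z : Fin n → ℝ, ∫⁻ t : ℝ, S'.indicator F (e.symm (t, z)) :=
        lintegral_prod_symm _ ((hFm.indicator hS').comp e.symm.measurable).aemeasurable
    _ ≤ ∫⁻ z : Fin n → ℝ, S''.indicator (fun z' => ∏ i, fI (z' i)) z * K := by
        refine lintegral_mono fun z => ?_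
        calc ∫⁻ t : ℝ, S'.indicator F (e.symm (t, z))
            ≤ ∫⁻ t : ℝ, S''.indicator (fun z' => ∏ i, fI (z' i)) z *
                (Set.Ici x).indicator (fun t' => w t' * g (t' - zeta n z)) t := by
              refine lintegral_mono fun t => ?_
              rw [hesymm]
              exact keybound z t
          _ = S''.indicator (fun z' => ∏ i, fI (z' i)) z *
                ∫⁻ t : ℝ, (Set.Ici x).indicator (fun t' => w t' * g (t' - zeta n z)) t :=
              lintegral_const_mul _ ((hwm.mul (hgm.comp
                (measurable_id.sub measurable_const))).indicator measurableSet_Ici)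
          _ = S''.indicator (fun z' => ∏ i, fI (z' i)) z *
                ∫⁻ t in Set.Ici x, w t * g (t - zeta n z) := by
              rw [lintegral_indicator measurableSet_Ici]
          _ ≤ S''.indicator (fun z' => ∏ i, fI (z' i)) z * K :=
              mul_le_mul_right (inner (zeta n z)) _
    _ = (∫⁻ z : Fin n → ℝ, S''.indicator (fun z' => ∏ i, fI (z' i)) z) * K :=
        lintegral_mul_const _ ((Finset.measurable_prod _ fun i _ =>
          hfIm.comp (measurable_pi_apply i)).indicator hS'')
    _ ≤ ((∫⁻ t in Set.Ici x, fI t) ^ n / (Nat.factorial n : ℝ≥0∞)) * K :=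
        mul_le_mul_left (simplex_le n x fI hfIm) K

end

end SimplexAux

open SimplexAux in
set_option maxHeartbeats 1000000 in
/-- The basic weighted estimate on the simplex integrals arising in
the multilinear expansion of the ZS–AKNS Jost solutions: for `s ≥ 0`, `m ≥ 1`, `x ≥ 0`,
`u` with `u ∈ L¹(0,∞)` and `u ∈ L^{2,s}(0,∞)`, and `φ ∈ L²(ℝ)`,

`∫_{Δ_m(x)} |u(y₁)|⋯|u(y_m)| (1+y_m)^s |φ(ζ_m(y))| dy
    ≤ (‖u‖_{L¹(0,∞)}^{m−1}/(m−1)!) ‖u‖_{L^{2,s}(0,∞)} ‖φ‖_{L²(ℝ)}`,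

where `Δ_m(x) = {x ≤ y₁ ≤ ⋯ ≤ y_m}` and `ζ_m(y) = Σ_{j=0}^{m−1} (−1)^j y_{m−j}`
(0-indexed: `y_{m-j} = y (Fin.rev j)`). -/
theorem simplex_weighted_bound (s : ℝ) (hs : 0 ≤ s) (m : ℕ) (hm : 1 ≤ m)
    (x : ℝ) (hx : 0 ≤ x) (u : ℝ → ℝ) (hu : Measurable u)
    (hu1 : IntegrableOn u (Set.Ioi (0 : ℝ)))
    (hu2 : IntegrableOn (fun t : ℝ => (1 + t) ^ (2 * s) * u t ^ 2) (Set.Ioi (0 : ℝ)))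
    (φ : ℝ → ℂ) (hφ : MemLp φ 2 volume) :
    (∫⁻ y in {y : Fin m → ℝ | x ≤ y ⟨0, by omega⟩ ∧ Monotone y},
        ENNReal.ofReal ((∏ i : Fin m, |u (y i)|) * (1 + y ⟨m - 1, by omega⟩) ^ s *
          ‖φ (∑ j : Fin m, (-1 : ℝ) ^ (j : ℕ) * y j.rev)‖))
      ≤ ENNReal.ofReal
          (((∫ t in Set.Ioi (0 : ℝ), |u t|) ^ (m - 1) / (Nat.factorial (m - 1) : ℝ)) *
            (∫ t in Set.Ioi (0 : ℝ), (1 + t) ^ (2 * s) * u t ^ 2) ^ ((1 : ℝ) / 2) *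
            (∫ t : ℝ, ‖φ t‖ ^ 2) ^ ((1 : ℝ) / 2)) := by
  classical
  obtain ⟨n, rfl⟩ : ∃ n, m = n + 1 := ⟨m - 1, by omega⟩
  -- replace `φ` by a measurable representative `ψ`
  have hφae := hφ.aestronglyMeasurable
  set ψ : ℝ → ℂ := hφae.mk φ with hψdef
  have hψm : Measurable ψ := hφae.stronglyMeasurable_mk.measurable
  have heq : φ =ᵐ[volume] ψ := hφae.ae_eq_mk
  have hψ2 : MemLp ψ 2 volume := hφ.ae_eq heq
  have hC : (∫ t : ℝ, ‖φ t‖ ^ 2) = ∫ t : ℝ, ‖ψ t‖ ^ 2 := by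
    refine integral_congr_ae ?_
    filter_upwards [heq] with t ht
    rw [ht]
  have h0 : (⟨0, by omega⟩ : Fin (n + 1)) = 0 := by simp [Fin.ext_iff]
  have hl : (⟨n + 1 - 1, by omega⟩ : Fin (n + 1)) = Fin.last n := by simp [Fin.ext_iff]
  -- LHS with φ equals LHS with ψ
  have hNnull : volume {r : ℝ | φ r ≠ ψ r} = 0 := by
    have := heq
    rwa [Filter.EventuallyEq, ae_iff] at this
  set N' := toMeasurable volume {r : ℝ | φ r ≠ ψ r} with hN'def
  have hN'm : MeasurableSet N' := measurableSet_toMeasurable _ _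
  have hN'0 : volume N' = 0 := by rw [hN'def, measure_toMeasurable]; exact hNnull
  have hzn := zeta_preimage_null (n := n) hN'm hN'0
  have haeeq : ∀ᵐ y : Fin (n + 1) → ℝ,
      ENNReal.ofReal ((∏ i : Fin (n + 1), |u (y i)|) * (1 + y ⟨n + 1 - 1, by omega⟩) ^ s *
          ‖φ (∑ j : Fin (n + 1), (-1 : ℝ) ^ (j : ℕ) * y j.rev)‖)
        = ENNReal.ofReal ((∏ i : Fin (n + 1), |u (y i)|) * (1 + y ⟨n + 1 - 1, by omega⟩) ^ s *
          ‖ψ (∑ j : Fin (n + 1), (-1 : ℝ) ^ (j : ℕ) * y j.rev)‖) := by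
    rw [ae_iff]
    refine measure_mono_null ?_ hzn
    intro y hy
    simp only [Set.mem_setOf_eq] at hy ⊢
    by_contra hyn
    apply hy
    have hphi : φ (∑ j : Fin (n + 1), (-1 : ℝ) ^ (j : ℕ) * y j.rev)
        = ψ (∑ j : Fin (n + 1), (-1 : ℝ) ^ (j : ℕ) * y j.rev) := by
      by_contra hne
      exact hyn (subset_toMeasurable _ _
        (show zeta (n + 1) y ∈ {r : ℝ | φ r ≠ ψ r} from hne))
    rw [hphi]
  calc (∫⁻ y in {y : Fin (n + 1) → ℝ | x ≤ y ⟨0, by omega⟩ ∧ Monotone y},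
        ENNReal.ofReal ((∏ i : Fin (n + 1), |u (y i)|) * (1 + y ⟨n + 1 - 1, by omega⟩) ^ s *
          ‖φ (∑ j : Fin (n + 1), (-1 : ℝ) ^ (j : ℕ) * y j.rev)‖))
      = ∫⁻ y in {y : Fin (n + 1) → ℝ | x ≤ y ⟨0, by omega⟩ ∧ Monotone y},
        ENNReal.ofReal ((∏ i : Fin (n + 1), |u (y i)|) * (1 + y ⟨n + 1 - 1, by omega⟩) ^ s *
          ‖ψ (∑ j : Fin (n + 1), (-1 : ℝ) ^ (j : ℕ) * y j.rev)‖) :=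
        lintegral_congr_ae (ae_restrict_of_ae haeeq)
    _ ≤ ENNReal.ofReal
          (((∫ t in Set.Ioi (0 : ℝ), |u t|) ^ (n + 1 - 1) / (Nat.factorial (n + 1 - 1) : ℝ)) *
            (∫ t in Set.Ioi (0 : ℝ), (1 + t) ^ (2 * s) * u t ^ 2) ^ ((1 : ℝ) / 2) *
            (∫ t : ℝ, ‖ψ t‖ ^ 2) ^ ((1 : ℝ) / 2)) := by
      simp only [h0, hl, Nat.add_sub_cancel]
      refine le_trans (main_aux s hs n x hx u hu hu2 ψ hψm hψ2) ?_
      have hann : 0 ≤ ∫ t in Set.Ioi (0 : ℝ), |u t| :=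
        setIntegral_nonneg measurableSet_Ioi fun t _ => abs_nonneg _
      have hBnn : 0 ≤ ∫ t in Set.Ioi (0 : ℝ), (1 + t) ^ (2 * s) * u t ^ 2 :=
        setIntegral_nonneg measurableSet_Ioi fun t ht =>
          mul_nonneg (Real.rpow_nonneg (by simp only [Set.mem_Ioi] at ht; linarith) _)
            (sq_nonneg _)
      have hA : (∫⁻ t in Set.Ici x, ENNReal.ofReal |u t|)
          ≤ ENNReal.ofReal (∫ t in Set.Ioi (0 : ℝ), |u t|) := by
        calc (∫⁻ t in Set.Ici x, ENNReal.ofReal |u t|)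
            ≤ ∫⁻ t in Set.Ici (0 : ℝ), ENNReal.ofReal |u t| :=
              lintegral_mono_set (Set.Ici_subset_Ici.mpr hx)
          _ = ∫⁻ t in Set.Ioi (0 : ℝ), ENNReal.ofReal |u t| := by
              rw [restrict_Ioi_eq_restrict_Ici]
          _ = ENNReal.ofReal (∫ t in Set.Ioi (0 : ℝ), |u t|) :=
              (ofReal_integral_eq_lintegral_ofReal hu1.abs
                (ae_of_all _ fun t => abs_nonneg _)).symm
      exact final_step n _ _ _ _ hA hann hBnn
    _ = ENNReal.ofReal
          (((∫ t in Set.Ioi (0 : ℝ), |u t|) ^ (n + 1 - 1) / (Nat.factorial (n + 1 - 1) : ℝ)) *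
            (∫ t in Set.Ioi (0 : ℝ), (1 + t) ^ (2 * s) * u t ^ 2) ^ ((1 : ℝ) / 2) *
            (∫ t : ℝ, ‖φ t‖ ^ 2) ^ ((1 : ℝ) / 2)) := by rw [hC]
end

section
/- Let s ≥ 0, let n ≥ 1 be an integer, let x₀ ≥ 0, and let F : ℝ → ℂ be measurable with M := ∫_{x₀}^∞ |F(t)| dt < ∞ and W := ∫_{x₀}^∞ (1+x)^{2s} |F(x)|² dx < ∞. For x ≥ x₀ define P_n(x) := ∫_{[0,∞)^{2n}} |F(x+t₁)| · (∏_{j=1}^{2n−1} |F(x+t_j+t_{j+1})|) · |F(x+t_{2n})| dt₁ ⋯ dt_{2n}. Then ∫_{x₀}^∞ (1+x)^{2s} P_n(x)² dx ≤ M^{4n} · W. In particular, the n-th term G_n(x) = ∫_{[0,∞)^{2n}} F(x+t₁)·∏_{j=1}^{2n−1} F(x+t_j+t_{j+1})·F(x+t_{2n}) dt of the multilinear expansion of the Gelfand–Levitan–Marchenko tail satisfies ∫_{x₀}^∞ (1+x)^{2s} |G_n(x)|² dx ≤ (∫_{x₀}^∞|F|)^{4n} ∫_{x₀}^∞ (1+x)^{2s}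 |F(x)|² dx. -/
open MeasureTheory ENNReal

/-- `P_n(x) = ∫_{[0,∞)^{2n}} f(x+t₁) · ∏_{j=1}^{2n−1} f(x+t_j+t_{j+1}) · f(x+t_{2n}) dt`
(absolute-value chain integral of the `n`-th term of the Gelfand–Levitan–Marchenko
multilinear expansion), as a lower Lebesgue integral. -/
noncomputable def chainP (f : ℝ → ℝ) (n : ℕ) (hn : 1 ≤ n) (x : ℝ) : ℝ≥0∞ :=
  ∫⁻ t in {t : Fin (2 * n) → ℝ | ∀ i, 0 ≤ t i},
    ENNReal.ofReal (f (x + t ⟨0, by omega⟩)) *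
    (∏ j : Fin (2 * n - 1),
      ENNReal.ofReal (f (x + t ⟨j.1, by have := j.isLt; omega⟩
        + t ⟨j.1 + 1, by have := j.isLt; omega⟩))) *
    ENNReal.ofReal (f (x + t ⟨2 * n - 1, by omega⟩))

/-- `G_n(x) = ∫_{[0,∞)^{2n}} F(x+t₁) · ∏_{j=1}^{2n−1} F(x+t_j+t_{j+1}) · F(x+t_{2n}) dt`,
the `n`-th term of the multilinear expansion of the Gelfand–Levitan–Marchenko tail. -/
noncomputable def glmTerm (F : ℝ → ℂ) (n : ℕ) (hn : 1 ≤ n) (x : ℝ) : ℂ :=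
  ∫ t in {t : Fin (2 * n) → ℝ | ∀ i, 0 ≤ t i},
    F (x + t ⟨0, by omega⟩) *
    (∏ j : Fin (2 * n - 1),
      F (x + t ⟨j.1, by have := j.isLt; omega⟩ + t ⟨j.1 + 1, by have := j.isLt; omega⟩)) *
    F (x + t ⟨2 * n - 1, by omega⟩)

section GLMAux
open NNReal Set

namespace GLM

noncomputable def CC (G : ℝ → ℝ≥0∞) : ℕ → ℝ → ℝ → ℝ≥0∞
  | 0 => fun x u => ∫⁻ a in Ioi (0:ℝ), G (u + a) * G (x + a)
  | m+1 => fun x u => ∫⁻ a in Ioi (0:ℝ), G (u + a) * CC G m x (x + a)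

noncomputable def EE (G Φ : ℝ → ℝ≥0∞) : ℕ → ℝ → ℝ → ℝ≥0∞
  | 0 => fun x u => ∫⁻ a in Ioi (0:ℝ), G (u + a) * Φ (x + a)
  | m+1 => fun x u => ∫⁻ a in Ioi (0:ℝ), G (u + a) * EE G Φ m x (x + a)

noncomputable def Uop (G : ℝ → ℝ≥0∞) (x₀ : ℝ) (Ψ : ℝ → ℝ≥0∞) : ℝ → ℝ≥0∞ :=
  fun t => ∫⁻ y in Ioi x₀, Ψ y * G (y + t)

noncomputable def Vop (G : ℝ → ℝ≥0∞) (Ψ : ℝ → ℝ≥0∞) : ℝ → ℝ≥0∞ :=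
  fun v => ∫⁻ t in Ioi (0:ℝ), Ψ t * G (v + t)

lemma lintegral_Ioi_shift (f : ℝ → ℝ≥0∞) (c : ℝ) :
    ∫⁻ a in Ioi (0:ℝ), f (c + a) = ∫⁻ y in Ioi c, f y := by
  have h := (measurePreserving_add_left (volume : Measure ℝ) c).setLIntegral_comp_preimage_emb
    (MeasurableEquiv.addLeft c).measurableEmbedding f (Ioi c)
  have hpre : (fun a : ℝ => c + a) ⁻¹' (Ioi c) = Ioi (0:ℝ) := by
    ext a; simp [lt_add_iff_pos_right]
  rw [← hpre]
  exact h

lemma lintegral_Ioi_shift' (f : ℝ → ℝ≥0∞) (c t : ℝ) :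
    ∫⁻ v in Ioi c, f (v + t) = ∫⁻ y in Ioi (c + t), f y := by
  have h := (measurePreserving_add_right (volume : Measure ℝ) t).setLIntegral_comp_preimage_emb
    (MeasurableEquiv.addRight t).measurableEmbedding f (Ioi (c + t))
  have hpre : (fun v : ℝ => v + t) ⁻¹' (Ioi (c + t)) = Ioi c := by
    ext a; simp
  rw [← hpre]
  exact h

/-- AM-GM in `ℝ≥0∞`. -/
lemma ennreal_two_mul_le (p q : ℝ≥0∞) : 2 * (p * q) ≤ p ^ 2 + q ^ 2 := by
  rcases eq_or_ne p 0 with rfl | hp0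
  · simp
  rcases eq_or_ne q 0 with rfl | hq0
  · simp
  have htop : (⊤:ℝ≥0∞) ^ 2 = ⊤ := by rw [pow_two, ENNReal.top_mul_top]
  rcases eq_or_ne p ⊤ with rfl | hpt
  · rw [htop, top_add]; exact le_top
  rcases eq_or_ne q ⊤ with rfl | hqt
  · rw [htop, add_top]; exact le_top
  lift p to ℝ≥0 using hpt
  lift q to ℝ≥0 using hqt
  rw [← ENNReal.coe_ofNat, ← ENNReal.coe_mul, ← ENNReal.coe_mul, ← ENNReal.coe_pow,
    ← ENNReal.coe_pow, ← ENNReal.coe_add, ENNReal.coe_le_coe, ← NNReal.coe_le_coe]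
  push_cast
  nlinarith [sq_nonneg ((p:ℝ) - (q:ℝ))]


section Meas

variable {G Φ Ψ : ℝ → ℝ≥0∞}

lemma measurable_CC (hG : Measurable G) (m : ℕ) :
    Measurable (fun p : ℝ × ℝ => CC G m p.1 p.2) := by
  induction m with
  | zero =>
    simp only [CC]
    exact Measurable.lintegral_prod_right'
      ((hG.comp (measurable_fst.snd.add measurable_snd)).mul
        (hG.comp (measurable_fst.fst.add measurable_snd)))
  | succ m ih =>
    simp only [CC]
    exact Measurable.lintegral_prod_right'
      ((hG.comp (measurable_fst.snd.add measurable_snd)).mul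
        (ih.comp (measurable_fst.fst.prodMk (measurable_fst.fst.add measurable_snd))))

lemma measurable_EE (hG : Measurable G) (hΦ : Measurable Φ) (m : ℕ) :
    Measurable (fun p : ℝ × ℝ => EE G Φ m p.1 p.2) := by
  induction m with
  | zero =>
    simp only [EE]
    exact Measurable.lintegral_prod_right'
      ((hG.comp (measurable_fst.snd.add measurable_snd)).mul
        (hΦ.comp (measurable_fst.fst.add measurable_snd)))
  | succ m ih =>
    simp only [EE]
    exact Measurable.lintegral_prod_right'
      ((hG.comp (measurable_fst.snd.add measurable_snd)).mul
        (ih.comp (measurable_fst.fst.prodMk (measurable_fst.fst.add measurable_snd))))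

lemma measurable_Uop (hG : Measurable G) (hΨ : Measurable Ψ) (x₀ : ℝ) :
    Measurable (Uop G x₀ Ψ) := by
  unfold Uop
  exact Measurable.lintegral_prod_right'
    ((hΨ.comp measurable_snd).mul (hG.comp (measurable_snd.add measurable_fst)))

lemma measurable_Vop (hG : Measurable G) (hΨ : Measurable Ψ) :
    Measurable (Vop G Ψ) := by
  unfold Vop
  exact Measurable.lintegral_prod_right'
    ((hΨ.comp measurable_snd).mul (hG.comp (measurable_fst.add measurable_snd)))

end Meas

section CycleLemmas

variable {G Φ Ψ : ℝ → ℝ≥0∞} {x₀ : ℝ}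

lemma EE_one_le {x : ℝ} (hx : x₀ ≤ x) (u : ℝ) :
    EE G Φ 1 x u ≤ Vop G (Uop G x₀ Φ) u := by
  simp only [EE, Vop]
  refine lintegral_mono fun a => ?_
  rw [mul_comm]
  refine mul_le_mul_left ?_ _
  calc ∫⁻ b in Ioi (0:ℝ), G (x + a + b) * Φ (x + b)
      = ∫⁻ b in Ioi (0:ℝ), Φ (x + b) * G ((x + b) + a) := by
        refine lintegral_congr fun b => ?_
        rw [mul_comm, add_right_comm]
    _ = ∫⁻ y in Ioi x, Φ y * G (y + a) := lintegral_Ioi_shift (fun y => Φ y * G (y + a)) x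
    _ ≤ ∫⁻ y in Ioi x₀, Φ y * G (y + a) := lintegral_mono_set (Ioi_subset_Ioi hx)
    _ = Uop G x₀ Φ a := rfl

lemma EE_cycle_red {x : ℝ} (hx : x₀ ≤ x) (m : ℕ) (u : ℝ) :
    EE G Φ (m + 2) x u ≤ EE G (Vop G (Uop G x₀ Φ)) m x u := by
  induction m generalizing u with
  | zero =>
    show EE G Φ 2 x u ≤ EE G (Vop G (Uop G x₀ Φ)) 0 x u
    simp only [EE]
    exact lintegral_mono fun a => mul_le_mul_right (EE_one_le hx (x + a)) _
  | succ m ih =>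
    show EE G Φ (m + 3) x u ≤ EE G (Vop G (Uop G x₀ Φ)) (m + 1) x u
    simp only [EE]
    exact lintegral_mono fun a => mul_le_mul_right (ih (x + a)) _

lemma Uop_norm (hG : Measurable G) (hΨ : Measurable Ψ) :
    ∫⁻ t in Ioi (0:ℝ), Uop G x₀ Ψ t
      ≤ (∫⁻ y in Ioi x₀, G y) * ∫⁻ y in Ioi x₀, Ψ y := by
  unfold Uop
  rw [lintegral_lintegral_swap]
  · calc ∫⁻ y in Ioi x₀, ∫⁻ t in Ioi (0:ℝ), Ψ y * G (y + t)
        = ∫⁻ y in Ioi x₀, Ψ y * ∫⁻ t in Ioi (0:ℝ), G (y + t) := by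
          refine lintegral_congr fun y => ?_
          exact lintegral_const_mul _ (hG.comp (measurable_const.add measurable_id))
      _ = ∫⁻ y in Ioi x₀, Ψ y * ∫⁻ z in Ioi y, G z := by
          refine lintegral_congr fun y => ?_
          rw [lintegral_Ioi_shift]
      _ ≤ ∫⁻ y in Ioi x₀, Ψ y * ∫⁻ z in Ioi x₀, G z := by
          refine setLIntegral_mono' measurableSet_Ioi fun y hy => ?_
          exact mul_le_mul_right (lintegral_mono_set (Ioi_subset_Ioi (le_of_lt hy))) _
      _ = (∫⁻ y in Ioi x₀, Ψ y) * ∫⁻ z in Ioi x₀, G z := lintegral_mul_const _ hΨ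
      _ = (∫⁻ y in Ioi x₀, G y) * ∫⁻ y in Ioi x₀, Ψ y := mul_comm _ _
  · exact ((hΨ.comp measurable_snd).mul
      (hG.comp (measurable_snd.add measurable_fst))).aemeasurable

lemma Vop_norm (hG : Measurable G) (hΨ : Measurable Ψ) :
    ∫⁻ v in Ioi x₀, Vop G Ψ v
      ≤ (∫⁻ y in Ioi x₀, G y) * ∫⁻ t in Ioi (0:ℝ), Ψ t := by
  unfold Vop
  rw [lintegral_lintegral_swap]
  · calc ∫⁻ t in Ioi (0:ℝ), ∫⁻ v in Ioi x₀, Ψ t * G (v + t)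
        = ∫⁻ t in Ioi (0:ℝ), Ψ t * ∫⁻ v in Ioi x₀, G (v + t) := by
          refine lintegral_congr fun t => ?_
          exact lintegral_const_mul _ (hG.comp (measurable_id.add measurable_const))
      _ = ∫⁻ t in Ioi (0:ℝ), Ψ t * ∫⁻ z in Ioi (x₀ + t), G z := by
          refine lintegral_congr fun t => ?_
          rw [lintegral_Ioi_shift']
      _ ≤ ∫⁻ t in Ioi (0:ℝ), Ψ t * ∫⁻ z in Ioi x₀, G z := by
          refine setLIntegral_mono' measurableSet_Ioi fun t ht => ?_
          refine mul_le_mul_right (lintegral_mono_set (Ioi_subset_Ioi ?_)) _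
          linarith [le_of_lt (Set.mem_Ioi.mp ht)]
      _ = (∫⁻ t in Ioi (0:ℝ), Ψ t) * ∫⁻ z in Ioi x₀, G z := lintegral_mul_const _ hΨ
      _ = (∫⁻ y in Ioi x₀, G y) * ∫⁻ t in Ioi (0:ℝ), Ψ t := mul_comm _ _
  · exact ((hΨ.comp measurable_snd).mul
      (hG.comp (measurable_fst.add measurable_snd))).aemeasurable

lemma cyc_main (hG : Measurable G) (j : ℕ) :
    ∀ (Ψ : ℝ → ℝ≥0∞), Measurable Ψ →
    ∫⁻ x in Ioi x₀, EE G Ψ (2*j+1) x x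
      ≤ (∫⁻ y in Ioi x₀, G y) ^ (2*j+2) * ∫⁻ y in Ioi x₀, Ψ y := by
  induction j with
  | zero =>
    intro Ψ hΨ
    calc ∫⁻ x in Ioi x₀, EE G Ψ (2*0+1) x x
        ≤ ∫⁻ x in Ioi x₀, Vop G (Uop G x₀ Ψ) x := by
          refine setLIntegral_mono' measurableSet_Ioi fun x hx => ?_
          exact EE_one_le (le_of_lt hx) x
      _ ≤ (∫⁻ y in Ioi x₀, G y) * ∫⁻ t in Ioi (0:ℝ), Uop G x₀ Ψ t :=
          Vop_norm hG (measurable_Uop hG hΨ x₀)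
      _ ≤ (∫⁻ y in Ioi x₀, G y) * ((∫⁻ y in Ioi x₀, G y) * ∫⁻ y in Ioi x₀, Ψ y) :=
          mul_le_mul_right (Uop_norm hG hΨ) _
      _ = (∫⁻ y in Ioi x₀, G y) ^ (2*0+2) * ∫⁻ y in Ioi x₀, Ψ y := by ring
  | succ j ih =>
    intro Ψ hΨ
    have harith : 2*(j+1)+1 = (2*j+1) + 2 := by ring
    rw [harith]
    calc ∫⁻ x in Ioi x₀, EE G Ψ ((2*j+1)+2) x x
        ≤ ∫⁻ x in Ioi x₀, EE G (Vop G (Uop G x₀ Ψ)) (2*j+1) x x := by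
          refine setLIntegral_mono' measurableSet_Ioi fun x hx => ?_
          exact EE_cycle_red (le_of_lt hx) (2*j+1) x
      _ ≤ (∫⁻ y in Ioi x₀, G y) ^ (2*j+2) * ∫⁻ y in Ioi x₀, Vop G (Uop G x₀ Ψ) y :=
          ih _ (measurable_Vop hG (measurable_Uop hG hΨ x₀))
      _ ≤ (∫⁻ y in Ioi x₀, G y) ^ (2*j+2) *
            ((∫⁻ y in Ioi x₀, G y) * ∫⁻ t in Ioi (0:ℝ), Uop G x₀ Ψ t) :=
          mul_le_mul_right (Vop_norm hG (measurable_Uop hG hΨ x₀)) _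
      _ ≤ (∫⁻ y in Ioi x₀, G y) ^ (2*j+2) *
            ((∫⁻ y in Ioi x₀, G y) * ((∫⁻ y in Ioi x₀, G y) * ∫⁻ y in Ioi x₀, Ψ y)) := by
          refine mul_le_mul_right (mul_le_mul_right (Uop_norm hG hΨ) _) _
      _ = (∫⁻ y in Ioi x₀, G y) ^ (2*(j+1)+2) * ∫⁻ y in Ioi x₀, Ψ y := by ring
  -- done

end CycleLemmas


section PhaseB

variable {G : ℝ → ℝ≥0∞} {x₀ s : ℝ}

/-- Expand `c * (∫ k)²` as a double integral. -/
lemma sq_expand (c : ℝ≥0∞) {k : ℝ → ℝ≥0∞} (hk : Measurable k) :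
    c * (∫⁻ a in Ioi (0:ℝ), k a) ^ 2
      = ∫⁻ a in Ioi (0:ℝ), ∫⁻ b in Ioi (0:ℝ), c * (k a * k b) := by
  have h1 : (∫⁻ a in Ioi (0:ℝ), k a) ^ 2
      = ∫⁻ a in Ioi (0:ℝ), ∫⁻ b in Ioi (0:ℝ), k a * k b := by
    rw [pow_two, ← lintegral_mul_const _ hk]
    exact lintegral_congr fun a => (lintegral_const_mul _ hk).symm
  have hC : Measurable fun a => ∫⁻ b in Ioi (0:ℝ), k a * k b :=
    Measurable.lintegral_prod_right' ((hk.comp measurable_fst).mul (hk.comp measurable_snd))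
  rw [h1, ← lintegral_const_mul c hC]
  exact lintegral_congr fun a => (lintegral_const_mul c (hk.const_mul (k a))).symm

/-- Reduce a double chain integral with a one-sided extra factor. -/
lemma dbl_reduce (hG : Measurable G) (u : ℝ) {Y : ℝ → ℝ≥0∞} (hY : Measurable Y) :
    ∫⁻ a in Ioi (0:ℝ), ∫⁻ b in Ioi (0:ℝ), (G (u + a) * G (u + b)) * Y a
      = (∫⁻ y in Ioi u, G y) * ∫⁻ a in Ioi (0:ℝ), G (u + a) * Y a := by
  have hGu : Measurable fun a : ℝ => G (u + a) :=
    hG.comp (measurable_const.add measurable_id)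
  calc ∫⁻ a in Ioi (0:ℝ), ∫⁻ b in Ioi (0:ℝ), (G (u + a) * G (u + b)) * Y a
      = ∫⁻ a in Ioi (0:ℝ), (G (u + a) * Y a) * ∫⁻ b in Ioi (0:ℝ), G (u + b) := by
        refine lintegral_congr fun a => ?_
        rw [← lintegral_const_mul _ hGu]
        refine lintegral_congr fun b => ?_
        ring
    _ = (∫⁻ a in Ioi (0:ℝ), G (u + a) * Y a) * ∫⁻ b in Ioi (0:ℝ), G (u + b) :=
        lintegral_mul_const _ (hGu.mul hY)
    _ = (∫⁻ y in Ioi u, G y) * ∫⁻ a in Ioi (0:ℝ), G (u + a) * Y a := by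
        rw [lintegral_Ioi_shift, mul_comm]

lemma dbl_reduce' (hG : Measurable G) (u : ℝ) {Y : ℝ → ℝ≥0∞} (hY : Measurable Y) :
    ∫⁻ a in Ioi (0:ℝ), ∫⁻ b in Ioi (0:ℝ), (G (u + a) * G (u + b)) * Y b
      = (∫⁻ y in Ioi u, G y) * ∫⁻ a in Ioi (0:ℝ), G (u + a) * Y a := by
  have hGu : Measurable fun a : ℝ => G (u + a) :=
    hG.comp (measurable_const.add measurable_id)
  calc ∫⁻ a in Ioi (0:ℝ), ∫⁻ b in Ioi (0:ℝ), (G (u + a) * G (u + b)) * Y b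
      = ∫⁻ a in Ioi (0:ℝ), G (u + a) * ∫⁻ b in Ioi (0:ℝ), G (u + b) * Y b := by
        refine lintegral_congr fun a => ?_
        rw [← lintegral_const_mul _ (f := fun b => G (u + b) * Y b) (hGu.mul hY)]
        refine lintegral_congr fun b => ?_
        ring
    _ = (∫⁻ a in Ioi (0:ℝ), G (u + a)) * ∫⁻ b in Ioi (0:ℝ), G (u + b) * Y b :=
        lintegral_mul_const _ hGu
    _ = (∫⁻ y in Ioi u, G y) * ∫⁻ a in Ioi (0:ℝ), G (u + a) * Y a := by
        rw [lintegral_Ioi_shift]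

/-- The weight-splitting inequality. -/
lemma weight_split (hs : 0 ≤ s) {x a b : ℝ} (hx : 0 ≤ x) (ha : 0 ≤ a) (hb : 0 ≤ b)
    (p q : ℝ≥0∞) :
    2 * ENNReal.ofReal ((1 + x) ^ (2*s)) * (p * q)
      ≤ ENNReal.ofReal ((1 + (x + a)) ^ (2*s)) * p ^ 2
        + ENNReal.ofReal ((1 + (x + b)) ^ (2*s)) * q ^ 2 := by
  have h1x : (0:ℝ) < 1 + x := by linarith
  have hwr : (1 + x) ^ (2*s) ≤ (1 + (x + a)) ^ s * (1 + (x + b)) ^ s := by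
    have h2 : (1 + x) ^ (2*s) = (1 + x) ^ s * (1 + x) ^ s := by
      rw [two_mul, Real.rpow_add h1x]
    rw [h2]
    have hma : (1 + x) ^ s ≤ (1 + (x + a)) ^ s :=
      Real.rpow_le_rpow (le_of_lt h1x) (by linarith) hs
    have hmb : (1 + x) ^ s ≤ (1 + (x + b)) ^ s :=
      Real.rpow_le_rpow (le_of_lt h1x) (by linarith) hs
    exact mul_le_mul hma hmb (Real.rpow_nonneg (le_of_lt h1x) s) (Real.rpow_nonneg (by linarith) s)
  have hofr : ENNReal.ofReal ((1 + x) ^ (2*s))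
      ≤ ENNReal.ofReal ((1 + (x + a)) ^ s) * ENNReal.ofReal ((1 + (x + b)) ^ s) := by
    rw [← ENNReal.ofReal_mul (Real.rpow_nonneg (by linarith) s)]
    exact ENNReal.ofReal_le_ofReal hwr
  set va := ENNReal.ofReal ((1 + (x + a)) ^ s)
  set vb := ENNReal.ofReal ((1 + (x + b)) ^ s)
  have key : 2 * (va * vb) * (p * q) ≤ (va * p) ^ 2 + (vb * q) ^ 2 := by
    have := ennreal_two_mul_le (va * p) (vb * q)
    calc 2 * (va * vb) * (p * q) = 2 * ((va * p) * (vb * q)) := by ring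
      _ ≤ (va * p) ^ 2 + (vb * q) ^ 2 := this
  have hva2 : va ^ 2 = ENNReal.ofReal ((1 + (x + a)) ^ (2*s)) := by
    rw [← ENNReal.ofReal_pow (Real.rpow_nonneg (by linarith) s), ← Real.rpow_natCast _ 2,
      ← Real.rpow_mul (by linarith)]
    norm_num [mul_comm]
  have hvb2 : vb ^ 2 = ENNReal.ofReal ((1 + (x + b)) ^ (2*s)) := by
    rw [← ENNReal.ofReal_pow (Real.rpow_nonneg (by linarith) s), ← Real.rpow_natCast _ 2,
      ← Real.rpow_mul (by linarith)]
    norm_num [mul_comm]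
  calc 2 * ENNReal.ofReal ((1 + x) ^ (2*s)) * (p * q)
      ≤ 2 * (va * vb) * (p * q) := by
        exact mul_le_mul_left (mul_le_mul_right hofr 2) _
    _ ≤ (va * p) ^ 2 + (vb * q) ^ 2 := key
    _ = va ^ 2 * p ^ 2 + vb ^ 2 * q ^ 2 := by ring
    _ = ENNReal.ofReal ((1 + (x + a)) ^ (2*s)) * p ^ 2
        + ENNReal.ofReal ((1 + (x + b)) ^ (2*s)) * q ^ 2 := by rw [hva2, hvb2]
lemma dbl_sum (hG : Measurable G) (u : ℝ) {Y : ℝ → ℝ≥0∞} (hY : Measurable Y) :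
    ∫⁻ a in Ioi (0:ℝ), ∫⁻ b in Ioi (0:ℝ), (G (u + a) * G (u + b)) * (Y a + Y b)
      = 2 * ((∫⁻ y in Ioi u, G y) * ∫⁻ a in Ioi (0:ℝ), G (u + a) * Y a) := by
  have hGu : Measurable fun a : ℝ => G (u + a) :=
    hG.comp (measurable_const.add measurable_id)
  have hsplit : ∫⁻ a in Ioi (0:ℝ), ∫⁻ b in Ioi (0:ℝ), (G (u + a) * G (u + b)) * (Y a + Y b)
      = (∫⁻ a in Ioi (0:ℝ), ∫⁻ b in Ioi (0:ℝ), (G (u + a) * G (u + b)) * Y a)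
        + ∫⁻ a in Ioi (0:ℝ), ∫⁻ b in Ioi (0:ℝ), (G (u + a) * G (u + b)) * Y b := by
    have hin : ∀ a : ℝ, ∫⁻ b in Ioi (0:ℝ), (G (u + a) * G (u + b)) * (Y a + Y b)
        = (∫⁻ b in Ioi (0:ℝ), (G (u + a) * G (u + b)) * Y a)
          + ∫⁻ b in Ioi (0:ℝ), (G (u + a) * G (u + b)) * Y b := by
      intro a
      rw [← lintegral_add_left (f := fun b => G (u + a) * G (u + b) * Y a) (((hGu.const_mul _).mul (measurable_const)))]
      · exact lintegral_congr fun b => by ring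
    calc ∫⁻ a in Ioi (0:ℝ), ∫⁻ b in Ioi (0:ℝ), (G (u + a) * G (u + b)) * (Y a + Y b)
        = ∫⁻ a in Ioi (0:ℝ), ((∫⁻ b in Ioi (0:ℝ), (G (u + a) * G (u + b)) * Y a)
            + ∫⁻ b in Ioi (0:ℝ), (G (u + a) * G (u + b)) * Y b) :=
          lintegral_congr hin
      _ = _ := by
          refine lintegral_add_left ?_ _
          exact Measurable.lintegral_prod_right'
            ((((hGu.comp measurable_fst).mul (hGu.comp measurable_snd))).mul
              (hY.comp measurable_fst))
  rw [hsplit, dbl_reduce hG u hY, dbl_reduce' hG u hY, two_mul]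

lemma mainB (hs : 0 ≤ s) (hx₀ : 0 ≤ x₀) (hG : Measurable G) (m : ℕ) :
    ∀ {x u : ℝ}, x₀ ≤ x → x₀ ≤ u →
    ENNReal.ofReal ((1 + x) ^ (2*s)) * CC G m x u ^ 2
      ≤ (∫⁻ y in Ioi x₀, G y) ^ (m+1)
        * EE G (fun y => ENNReal.ofReal ((1 + y) ^ (2*s)) * G y ^ 2) m x u := by
  set M' := ∫⁻ y in Ioi x₀, G y with hM'
  set Φw : ℝ → ℝ≥0∞ := fun y => ENNReal.ofReal ((1 + y) ^ (2*s)) * G y ^ 2 with hΦw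
  have hΦwm : Measurable Φw :=
    ((measurable_id.const_add (1:ℝ)).pow measurable_const).ennreal_ofReal.mul (hG.pow_const 2)
  induction m with
  | zero =>
    intro x u hx hu
    set k : ℝ → ℝ≥0∞ := fun a => G (u + a) * G (x + a) with hkdef
    have hk : Measurable k :=
      (hG.comp (measurable_const.add measurable_id)).mul
        (hG.comp (measurable_const.add measurable_id))
    refine (ENNReal.mul_le_mul_iff_right (two_ne_zero) ENNReal.ofNat_ne_top).mp ?_
    have hexp : 2 * (ENNReal.ofReal ((1 + x) ^ (2*s)) * CC G 0 x u ^ 2)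
        = ∫⁻ a in Ioi (0:ℝ), ∫⁻ b in Ioi (0:ℝ),
            (2 * ENNReal.ofReal ((1 + x) ^ (2*s))) * (k a * k b) := by
      rw [← mul_assoc]
      exact sq_expand _ hk
    have hZm : Measurable fun a : ℝ => Φw (x + a) :=
      hΦwm.comp (measurable_const.add measurable_id)
    calc 2 * (ENNReal.ofReal ((1 + x) ^ (2*s)) * CC G 0 x u ^ 2)
        = ∫⁻ a in Ioi (0:ℝ), ∫⁻ b in Ioi (0:ℝ),
            (2 * ENNReal.ofReal ((1 + x) ^ (2*s))) * (k a * k b) := hexp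
      _ ≤ ∫⁻ a in Ioi (0:ℝ), ∫⁻ b in Ioi (0:ℝ),
            (G (u + a) * G (u + b)) * (Φw (x + a) + Φw (x + b)) := by
          refine setLIntegral_mono' measurableSet_Ioi fun a ha => ?_
          refine setLIntegral_mono' measurableSet_Ioi fun b hb => ?_
          have hw := weight_split hs (x := x) (a := a) (b := b)
            (le_trans hx₀ hx) (le_of_lt ha) (le_of_lt hb) (G (x + a)) (G (x + b))
          calc (2 * ENNReal.ofReal ((1 + x) ^ (2*s))) * (k a * k b)
              = (G (u + a) * G (u + b))
                  * (2 * ENNReal.ofReal ((1 + x) ^ (2*s)) * (G (x + a) * G (x + b))) := by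
                simp only [hkdef]; ring
            _ ≤ (G (u + a) * G (u + b)) * (Φw (x + a) + Φw (x + b)) := by
                refine mul_le_mul_right ?_ _
                simpa [hΦw] using hw
      _ = 2 * ((∫⁻ y in Ioi u, G y) * ∫⁻ a in Ioi (0:ℝ), G (u + a) * Φw (x + a)) :=
          dbl_sum hG u hZm
      _ ≤ 2 * (M' ^ (0+1) * EE G Φw 0 x u) := by
          refine mul_le_mul_right ?_ 2
          refine mul_le_mul' ?_ ?_
          · rw [pow_one]
            exact lintegral_mono_set (Ioi_subset_Ioi hu)
          · exact le_of_eq rfl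
  | succ m ih =>
    intro x u hx hu
    set k : ℝ → ℝ≥0∞ := fun a => G (u + a) * CC G m x (x + a) with hkdef
    have hCCm : Measurable fun a : ℝ => CC G m x (x + a) :=
      (measurable_CC hG m).comp
        (measurable_const.prodMk (measurable_const.add measurable_id))
    have hk : Measurable k :=
      (hG.comp (measurable_const.add measurable_id)).mul hCCm
    have hEEm : Measurable fun a : ℝ => EE G Φw m x (x + a) :=
      (measurable_EE hG hΦwm m).comp
        (measurable_const.prodMk (measurable_const.add measurable_id))
    set Z : ℝ → ℝ≥0∞ := fun a => M' ^ (m+1) * EE G Φw m x (x + a) with hZdef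
    have hZm : Measurable Z := hEEm.const_mul _
    refine (ENNReal.mul_le_mul_iff_right (two_ne_zero) ENNReal.ofNat_ne_top).mp ?_
    calc 2 * (ENNReal.ofReal ((1 + x) ^ (2*s)) * CC G (m+1) x u ^ 2)
        = ∫⁻ a in Ioi (0:ℝ), ∫⁻ b in Ioi (0:ℝ),
            (2 * ENNReal.ofReal ((1 + x) ^ (2*s))) * (k a * k b) := by
          rw [← mul_assoc]
          exact sq_expand _ hk
      _ ≤ ∫⁻ a in Ioi (0:ℝ), ∫⁻ b in Ioi (0:ℝ),
            (G (u + a) * G (u + b)) * (Z a + Z b) := by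
          refine setLIntegral_mono' measurableSet_Ioi fun a ha => ?_
          refine setLIntegral_mono' measurableSet_Ioi fun b hb => ?_
          have h2 : 2 * (CC G m x (x + a) * CC G m x (x + b))
              ≤ CC G m x (x + a) ^ 2 + CC G m x (x + b) ^ 2 :=
            ennreal_two_mul_le _ _
          have h3 : ENNReal.ofReal ((1 + x) ^ (2*s))
                * (2 * (CC G m x (x + a) * CC G m x (x + b)))
              ≤ Z a + Z b := by
            calc ENNReal.ofReal ((1 + x) ^ (2*s))
                  * (2 * (CC G m x (x + a) * CC G m x (x + b)))
                ≤ ENNReal.ofReal ((1 + x) ^ (2*s))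
                  * (CC G m x (x + a) ^ 2 + CC G m x (x + b) ^ 2) :=
                  mul_le_mul_right h2 _
              _ = ENNReal.ofReal ((1 + x) ^ (2*s)) * CC G m x (x + a) ^ 2
                  + ENNReal.ofReal ((1 + x) ^ (2*s)) * CC G m x (x + b) ^ 2 := by ring
              _ ≤ Z a + Z b := by
                  refine add_le_add ?_ ?_
                  · exact ih hx (le_trans hx (by linarith [le_of_lt (Set.mem_Ioi.mp ha)]))
                  · exact ih hx (le_trans hx (by linarith [le_of_lt (Set.mem_Ioi.mp hb)]))
          calc (2 * ENNReal.ofReal ((1 + x) ^ (2*s))) * (k a * k b)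
              = (G (u + a) * G (u + b))
                  * (ENNReal.ofReal ((1 + x) ^ (2*s))
                    * (2 * (CC G m x (x + a) * CC G m x (x + b)))) := by
                simp only [hkdef]; ring
            _ ≤ (G (u + a) * G (u + b)) * (Z a + Z b) := mul_le_mul_right h3 _
      _ = 2 * ((∫⁻ y in Ioi u, G y) * ∫⁻ a in Ioi (0:ℝ), G (u + a) * Z a) :=
          dbl_sum hG u hZm
      _ = 2 * ((∫⁻ y in Ioi u, G y) * (M' ^ (m+1) * EE G Φw (m+1) x u)) := by
          have : ∫⁻ a in Ioi (0:ℝ), G (u + a) * Z a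
              = M' ^ (m+1) * ∫⁻ a in Ioi (0:ℝ), G (u + a) * EE G Φw m x (x + a) := by
            have hmul : Measurable fun a : ℝ => G (u + a) * EE G Φw m x (x + a) :=
              (hG.comp (measurable_const.add measurable_id)).mul hEEm
            rw [← lintegral_const_mul _ hmul]
            exact lintegral_congr fun a => by simp only [hZdef]; ring
          rw [this]
          rfl
      _ ≤ 2 * (M' ^ (m+1+1) * EE G Φw (m+1) x u) := by
          refine mul_le_mul_right ?_ 2
          have htail : (∫⁻ y in Ioi u, G y) ≤ M' :=
            lintegral_mono_set (Ioi_subset_Ioi hu)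
          calc (∫⁻ y in Ioi u, G y) * (M' ^ (m+1) * EE G Φw (m+1) x u)
              ≤ M' * (M' ^ (m+1) * EE G Φw (m+1) x u) := mul_le_mul_left htail _
            _ = M' ^ (m+1+1) * EE G Φw (m+1) x u := by ring

end PhaseB

section PhaseA

variable {G : ℝ → ℝ≥0∞}

def Sset (m : ℕ) : Set (Fin m → ℝ) := {t | ∀ i, 0 ≤ t i}

lemma measurableSet_Sset (m : ℕ) : MeasurableSet (Sset m) := by
  have h : Sset m = ⋂ i, {t : Fin m → ℝ | 0 ≤ t i} := by
    ext t; simp [Sset]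
  rw [h]
  exact MeasurableSet.iInter fun i => measurableSet_le measurable_const (measurable_pi_apply i)

lemma lintegral_S_succ (k : ℕ) (H : (Fin (k+1) → ℝ) → ℝ≥0∞) (hH : Measurable H) :
    ∫⁻ t in Sset (k+1), H t
      = ∫⁻ a in Ioi (0:ℝ), ∫⁻ r in Sset k, H (Fin.cons a r) := by
  have hesymm : ∀ (a : ℝ) (r : Fin k → ℝ),
      (MeasurableEquiv.piFinSuccAbove (fun _ : Fin (k+1) => ℝ) 0).symm (a, r)
        = Fin.cons a r := by
    intro a r
    simp [MeasurableEquiv.piFinSuccAbove_symm_apply, Fin.insertNthEquiv, Fin.insertNth_zero]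
  have hmp := (measurePreserving_piFinSuccAbove
    (fun _ : Fin (k+1) => (volume : Measure ℝ)) 0).symm
  have hemb := (MeasurableEquiv.piFinSuccAbove
    (fun _ : Fin (k+1) => ℝ) 0).symm.measurableEmbedding
  have h1 := hmp.setLIntegral_comp_preimage_emb hemb H (Sset (k+1))
  have hpre : (⇑(MeasurableEquiv.piFinSuccAbove (fun _ : Fin (k+1) => ℝ) 0).symm)
      ⁻¹' (Sset (k+1)) = (Ici (0:ℝ)) ×ˢ (Sset k) := by
    ext p
    obtain ⟨a, r⟩ := p
    simp only [Set.mem_preimage, hesymm, Sset, Set.mem_setOf_eq, Set.mem_prod, Set.mem_Ici]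
    constructor
    · intro h
      exact ⟨by simpa using h 0, fun i => by simpa using h i.succ⟩
    · intro h i
      refine Fin.cases ?_ ?_ i
      · simpa using h.1
      · intro j; simpa using h.2 j
  calc ∫⁻ t in Sset (k+1), H t
      = ∫⁻ t in Sset (k+1), H t ∂(Measure.pi fun _ => volume) := by rw [← volume_pi]
    _ = ∫⁻ p in (⇑(MeasurableEquiv.piFinSuccAbove (fun _ : Fin (k+1) => ℝ) 0).symm)
          ⁻¹' (Sset (k+1)),
          H ((MeasurableEquiv.piFinSuccAbove (fun _ : Fin (k+1) => ℝ) 0).symm p)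
          ∂((volume : Measure ℝ).prod (Measure.pi fun _ : Fin k => (volume : Measure ℝ))) :=
        h1.symm
    _ = ∫⁻ p in (Ici (0:ℝ)) ×ˢ (Sset k),
          H ((MeasurableEquiv.piFinSuccAbove (fun _ : Fin (k+1) => ℝ) 0).symm p)
          ∂((volume : Measure ℝ).prod (volume : Measure (Fin k → ℝ))) := by
        rw [hpre, ← volume_pi]
    _ = ∫⁻ p in (Ici (0:ℝ)) ×ˢ (Sset k), H (Fin.cons p.1 p.2)
          ∂((volume : Measure ℝ).prod (volume : Measure (Fin k → ℝ))) := by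
        refine lintegral_congr fun p => ?_
        rw [← hesymm p.1 p.2]
    _ = ∫⁻ a in Ici (0:ℝ), ∫⁻ r in Sset k, H (Fin.cons a r) := by
        rw [← Measure.prod_restrict]
        refine lintegral_prod _ ?_
        have hcons : Measurable fun p : ℝ × (Fin k → ℝ) => (Fin.cons p.1 p.2 : Fin (k+1) → ℝ) := by
          rw [measurable_pi_iff]
          intro i
          refine Fin.cases ?_ ?_ i
          · simpa using measurable_fst
          · intro j; simp only [Fin.cons_succ]; exact (measurable_pi_apply j).comp measurable_snd
        exact (hH.comp hcons).aemeasurable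
    _ = ∫⁻ a in Ioi (0:ℝ), ∫⁻ r in Sset k, H (Fin.cons a r) :=
        (setLIntegral_congr (Ioi_ae_eq_Ici)).symm

lemma Sset_zero : Sset 0 = Set.univ := by
  ext t; simp [Sset]

lemma lintegral_S_zero (c : ℝ≥0∞) : ∫⁻ _ in Sset 0, c = c := by
  rw [Sset_zero, Measure.restrict_univ, lintegral_const]
  simp [volume_pi, Measure.pi_univ]

lemma iterA' (hG : Measurable G) (x : ℝ) : ∀ (k : ℕ) (u : ℝ),
    (∫⁻ t in Sset (k+1),
      G (u + t ⟨0, by omega⟩) *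
      (∏ j : Fin k, G (x + t ⟨j.1, by have := j.isLt; omega⟩
          + t ⟨j.1+1, by have := j.isLt; omega⟩)) *
      G (x + t ⟨k, by omega⟩))
    = CC G k x u := by
  intro k
  induction k with
  | zero =>
    intro u
    have hH : Measurable fun t : Fin 1 → ℝ =>
        G (u + t ⟨0, by omega⟩) * (∏ j : Fin 0, G (x + t ⟨j.1, by have := j.isLt; omega⟩
          + t ⟨j.1+1, by have := j.isLt; omega⟩)) * G (x + t ⟨0, by omega⟩) := by
      simp only [Finset.univ_eq_empty, Finset.prod_empty, mul_one]
      exact (hG.comp (measurable_const.add (measurable_pi_apply _))).mul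
        (hG.comp (measurable_const.add (measurable_pi_apply _)))
    rw [lintegral_S_succ 0 _ hH]
    have h0 : ∀ h : 0 < 1, (⟨0, h⟩ : Fin 1) = 0 := fun _ => rfl
    simp only [Finset.univ_eq_empty, Finset.prod_empty, mul_one, h0, Fin.cons_zero, CC]
    exact setLIntegral_congr_fun measurableSet_Ioi
      (fun a _ => lintegral_S_zero _)
  | succ k ih =>
    intro u
    have hmeasB : ∀ v : ℝ, Measurable fun t : Fin (k+1) → ℝ =>
        G (v + t ⟨0, by omega⟩) * (∏ j : Fin k, G (x + t ⟨j.1, by have := j.isLt; omega⟩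
          + t ⟨j.1+1, by have := j.isLt; omega⟩)) * G (x + t ⟨k, by omega⟩) := by
      intro v
      refine Measurable.mul (Measurable.mul ?_ ?_) ?_
      · exact hG.comp (measurable_const.add (measurable_pi_apply _))
      · exact Finset.measurable_prod _ fun j _ =>
          hG.comp ((measurable_const.add (measurable_pi_apply _)).add (measurable_pi_apply _))
      · exact hG.comp (measurable_const.add (measurable_pi_apply _))
    have hH : Measurable fun t : Fin (k+2) → ℝ =>
        G (u + t ⟨0, by omega⟩) * (∏ j : Fin (k+1), G (x + t ⟨j.1, by have := j.isLt; omega⟩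
          + t ⟨j.1+1, by have := j.isLt; omega⟩)) * G (x + t ⟨k+1, by omega⟩) := by
      refine Measurable.mul (Measurable.mul ?_ ?_) ?_
      · exact hG.comp (measurable_const.add (measurable_pi_apply _))
      · exact Finset.measurable_prod _ fun j _ =>
          hG.comp ((measurable_const.add (measurable_pi_apply _)).add (measurable_pi_apply _))
      · exact hG.comp (measurable_const.add (measurable_pi_apply _))
    rw [lintegral_S_succ (k+1) _ hH]
    have hstep : ∀ a : ℝ, (∫⁻ r in Sset (k+1),
        G (u + (Fin.cons a r : Fin (k+2) → ℝ) ⟨0, by omega⟩) *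
        (∏ j : Fin (k+1), G (x + (Fin.cons a r : Fin (k+2) → ℝ) ⟨j.1, by have := j.isLt; omega⟩
          + (Fin.cons a r : Fin (k+2) → ℝ) ⟨j.1+1, by have := j.isLt; omega⟩)) *
        G (x + (Fin.cons a r : Fin (k+2) → ℝ) ⟨k+1, by omega⟩))
        = G (u + a) * CC G k x (x + a) := by
      intro a
      rw [← ih (x + a), ← lintegral_const_mul _ (hmeasB (x + a))]
      refine setLIntegral_congr_fun (measurableSet_Sset _)
        (fun r _ => ?_)
      have hz : ∀ h : (0:ℕ) < k+2, (Fin.cons a r : Fin (k+2) → ℝ) ⟨0, h⟩ = a := fun _ => rfl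
      have hsucc : ∀ (i : ℕ) (h : i + 1 < k + 2),
          (Fin.cons a r : Fin (k+2) → ℝ) ⟨i+1, h⟩ = r ⟨i, by omega⟩ := by
        intro i h
        have he : (⟨i+1, h⟩ : Fin (k+2)) = Fin.succ ⟨i, by omega⟩ := rfl
        rw [he, Fin.cons_succ]
      rw [Fin.prod_univ_succ]
      simp only [Fin.val_succ, Fin.val_zero, hz, hsucc, Fin.cons_zero]
      ring
    calc ∫⁻ a in Ioi (0:ℝ), ∫⁻ r in Sset (k+1),
          G (u + (Fin.cons a r : Fin (k+2) → ℝ) ⟨0, by omega⟩) *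
          (∏ j : Fin (k+1), G (x + (Fin.cons a r : Fin (k+2) → ℝ) ⟨j.1, by have := j.isLt; omega⟩
            + (Fin.cons a r : Fin (k+2) → ℝ) ⟨j.1+1, by have := j.isLt; omega⟩)) *
          G (x + (Fin.cons a r : Fin (k+2) → ℝ) ⟨k+1, by omega⟩)
        = ∫⁻ a in Ioi (0:ℝ), G (u + a) * CC G k x (x + a) :=
          setLIntegral_congr_fun measurableSet_Ioi
            (fun a _ => hstep a)
      _ = CC G (k+1) x u := rfl

lemma iterA (hG : Measurable G) (m : ℕ) (hm : 0 < m) (x u : ℝ) :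
    (∫⁻ t in Sset m,
      G (u + t ⟨0, hm⟩) *
      (∏ j : Fin (m-1), G (x + t ⟨j.1, by have := j.isLt; omega⟩
          + t ⟨j.1+1, by have := j.isLt; omega⟩)) *
      G (x + t ⟨m-1, by omega⟩))
    = CC G (m-1) x u := by
  match m, hm with
  | (k+1), _ => exact iterA' hG x k u

end PhaseA

end GLM

end GLMAux

/-- With `M = ∫_{x₀}^∞ |F| < ∞` and
`W = ∫_{x₀}^∞ (1+x)^{2s}|F(x)|² dx < ∞`, one has
`∫_{x₀}^∞ (1+x)^{2s} P_n(x)² dx ≤ M^{4n} W`; in particular the `n`-th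
Gelfand–Levitan–Marchenko term satisfies
`∫_{x₀}^∞ (1+x)^{2s} |G_n(x)|² dx ≤ M^{4n} W`. -/
theorem glm_term_weighted_bound (s : ℝ) (hs : 0 ≤ s) (n : ℕ) (hn : 1 ≤ n)
    (x₀ : ℝ) (hx₀ : 0 ≤ x₀) (F : ℝ → ℂ) (hF : Measurable F)
    (hM : IntegrableOn F (Set.Ioi x₀))
    (hW : IntegrableOn (fun x : ℝ => (1 + x) ^ (2 * s) * ‖F x‖ ^ 2)
      (Set.Ioi x₀)) :
    (∫⁻ x in Set.Ioi x₀, ENNReal.ofReal ((1 + x) ^ (2 * s)) *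
        chainP (fun t => ‖F t‖) n hn x ^ 2)
      ≤ ENNReal.ofReal ((∫ t in Set.Ioi x₀, ‖F t‖) ^ (4 * n) *
          ∫ x in Set.Ioi x₀, (1 + x) ^ (2 * s) * ‖F x‖ ^ 2) ∧
    (∫⁻ x in Set.Ioi x₀, ENNReal.ofReal ((1 + x) ^ (2 * s)) *
        ENNReal.ofReal (‖glmTerm F n hn x‖ ^ 2))
      ≤ ENNReal.ofReal ((∫ t in Set.Ioi x₀, ‖F t‖) ^ (4 * n) *
          ∫ x in Set.Ioi x₀, (1 + x) ^ (2 * s) * ‖F x‖ ^ 2) := by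
  classical
  set G : ℝ → ℝ≥0∞ := fun y => ENNReal.ofReal (‖F y‖) with hGdef
  have habs : Measurable fun t : ℝ => ‖F t‖ := by
    exact hF.norm
  have hG : Measurable G := habs.ennreal_ofReal
  set Φw : ℝ → ℝ≥0∞ := fun y => ENNReal.ofReal ((1 + y) ^ (2 * s)) * G y ^ 2 with hΦwdef
  have hΦw : Measurable Φw :=
    ((measurable_id.const_add (1:ℝ)).pow measurable_const).ennreal_ofReal.mul (hG.pow_const 2)
  set M' : ℝ≥0∞ := ∫⁻ y in Set.Ioi x₀, G y with hM'def
  set W' : ℝ≥0∞ := ∫⁻ y in Set.Ioi x₀, Φw y with hW'def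
  have hbr : ∀ x : ℝ, chainP (fun t => ‖F t‖) n hn x = GLM.CC G (2*n-1) x x :=
    fun x => GLM.iterA hG (2*n) (by omega) x x
  have harith1 : 2*n-1+1 = 2*n := by omega
  have harith2 : 2*(n-1)+1 = 2*n-1 := by omega
  have harith3 : 2*(n-1)+2 = 2*n := by omega
  have hEEmeas : Measurable fun x : ℝ => GLM.EE G Φw (2*n-1) x x :=
    (GLM.measurable_EE hG hΦw _).comp (measurable_id.prodMk measurable_id)
  have key1 : (∫⁻ x in Set.Ioi x₀, ENNReal.ofReal ((1 + x) ^ (2 * s)) *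
      chainP (fun t => ‖F t‖) n hn x ^ 2) ≤ M' ^ (4*n) * W' := by
    calc (∫⁻ x in Set.Ioi x₀, ENNReal.ofReal ((1 + x) ^ (2 * s)) *
        chainP (fun t => ‖F t‖) n hn x ^ 2)
        = ∫⁻ x in Set.Ioi x₀,
            ENNReal.ofReal ((1 + x) ^ (2 * s)) * GLM.CC G (2*n-1) x x ^ 2 := by
          refine setLIntegral_congr_fun measurableSet_Ioi
            (fun x _ => ?_)
          rw [hbr x]
      _ ≤ ∫⁻ x in Set.Ioi x₀, M' ^ (2*n) * GLM.EE G Φw (2*n-1) x x := by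
          refine setLIntegral_mono' measurableSet_Ioi fun x hx => ?_
          have h := GLM.mainB hs hx₀ hG (2*n-1)
            (le_of_lt (Set.mem_Ioi.mp hx)) (le_of_lt (Set.mem_Ioi.mp hx))
          rwa [harith1] at h
      _ = M' ^ (2*n) * ∫⁻ x in Set.Ioi x₀, GLM.EE G Φw (2*n-1) x x :=
          lintegral_const_mul _ hEEmeas
      _ ≤ M' ^ (2*n) * (M' ^ (2*n) * W') := by
          refine mul_le_mul_right ?_ _
          have h := GLM.cyc_main (x₀ := x₀) hG (n-1) Φw hΦw
          rw [harith2, harith3] at h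
          exact h
      _ = M' ^ (4*n) * W' := by
          rw [← mul_assoc, ← pow_add]
          congr 2
          omega
  have hMint : Integrable (fun t => ‖F t‖) (volume.restrict (Set.Ioi x₀)) := by
    exact hM.norm
  have hMnn : (0:ℝ) ≤ ∫ t in Set.Ioi x₀, ‖F t‖ :=
    integral_nonneg fun t => norm_nonneg _
  have hMeq : ENNReal.ofReal (∫ t in Set.Ioi x₀, ‖F t‖) = M' := by
    rw [ofReal_integral_eq_lintegral_ofReal hMint
      (Filter.Eventually.of_forall fun t => norm_nonneg _)]
  have hWeq : ENNReal.ofReal (∫ x in Set.Ioi x₀, (1 + x) ^ (2 * s) * ‖F x‖ ^ 2)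
      = W' := by
    rw [ofReal_integral_eq_lintegral_ofReal hW ?nn]
    · refine setLIntegral_congr_fun measurableSet_Ioi
        (fun x hx => ?_)
      have h1x : (0:ℝ) ≤ 1 + x := by
        have := Set.mem_Ioi.mp hx; linarith
      rw [ENNReal.ofReal_mul (Real.rpow_nonneg h1x _),
        ENNReal.ofReal_pow (norm_nonneg _)]
    case nn =>
      refine (ae_restrict_iff' measurableSet_Ioi).2
        (Filter.Eventually.of_forall fun x hx => ?_)
      have h1x : (0:ℝ) ≤ 1 + x := by
        have := Set.mem_Ioi.mp hx; linarith
      exact mul_nonneg (Real.rpow_nonneg h1x _) (pow_nonneg (norm_nonneg _) 2)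
  have hRHS : ENNReal.ofReal ((∫ t in Set.Ioi x₀, ‖F t‖) ^ (4*n) *
      ∫ x in Set.Ioi x₀, (1 + x) ^ (2 * s) * ‖F x‖ ^ 2) = M' ^ (4*n) * W' := by
    rw [ENNReal.ofReal_mul (pow_nonneg hMnn _), ENNReal.ofReal_pow hMnn, hMeq, hWeq]
  constructor
  · rw [hRHS]; exact key1
  · have hpt : ∀ x : ℝ, ENNReal.ofReal (‖glmTerm F n hn x‖ ^ 2)
        ≤ chainP (fun t => ‖F t‖) n hn x ^ 2 := by
      intro x
      have hXeq : chainP (fun t => ‖F t‖) n hn x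
          = ∫⁻ t in {t : Fin (2*n) → ℝ | ∀ i, 0 ≤ t i},
              ENNReal.ofReal ‖F (x + t ⟨0, by omega⟩) *
                (∏ j : Fin (2*n-1), F (x + t ⟨j.1, by have := j.isLt; omega⟩
                  + t ⟨j.1+1, by have := j.isLt; omega⟩)) *
                F (x + t ⟨2*n-1, by omega⟩)‖ := by
        refine setLIntegral_congr_fun (GLM.measurableSet_Sset (2*n))
          (fun t _ => ?_)
        rw [norm_mul, norm_mul, norm_prod]
        rw [ENNReal.ofReal_mul (by positivity), ENNReal.ofReal_mul (by positivity),
          ENNReal.ofReal_prod_of_nonneg (fun i _ => norm_nonneg _)]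
      have hnorm : ‖glmTerm F n hn x‖
          ≤ (chainP (fun t => ‖F t‖) n hn x).toReal := by
        rw [hXeq]
        exact norm_integral_le_lintegral_norm _
      have h1 : ENNReal.ofReal (‖glmTerm F n hn x‖)
          ≤ chainP (fun t => ‖F t‖) n hn x := by
        refine le_trans (ENNReal.ofReal_le_ofReal ?_) ENNReal.ofReal_toReal_le
        simpa using hnorm
      calc ENNReal.ofReal (‖glmTerm F n hn x‖ ^ 2)
          = ENNReal.ofReal (‖glmTerm F n hn x‖) ^ 2 :=
            ENNReal.ofReal_pow (norm_nonneg _) 2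
        _ ≤ chainP (fun t => ‖F t‖) n hn x ^ 2 := by
            rw [pow_two, pow_two]
            exact mul_le_mul' h1 h1
    refine le_trans (lintegral_mono fun x => mul_le_mul_right (hpt x) _) ?_
    rw [hRHS]
    exact key1
end

section
/- Let s ≥ 0, x₀ ≥ 0, and let F : ℝ → ℂ be measurable with M := ∫_{x₀}^∞ |F(t)| dt < 1 and W := ∫_{x₀}^∞ (1+x)^{2s} |F(x)|² dx < ∞. For x ≥ x₀ and n ≥ 1 set P_n(x) := ∫_{[0,∞)^{2n}} |F(x+t₁)| · ∏_{j=1}^{2n−1} |F(x+t_j+t_{j+1})| · |F(x+t_{2n})| dt. Then the series S(x) := Σ_{n=1}^∞ P_n(x) converges for almost every x > x₀, and ∫_{x₀}^∞ (1+x)^{2s} S(x)² dx ≤ (M²/(1−M²))² · W. Consequently the Gelfand–Levitan–Marchenko tail G(x) = Σ_{n=1}^∞ G_n(x), which satisfies |G(x)| ≤ S(x), belongs to the weighted space L^{2,s}(x₀, ∞) with ‖G‖_{L^{2,s}(x₀,∞)} ≤ (M²/(1−M²)) · W^{1/2}. -/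
open MeasureTheory ENNReal

namespace GlmAux

open Set

noncomputable def Ch (g : ℝ → ℝ≥0∞) : ℕ → (ℝ → ℝ → ℝ≥0∞) → ℝ → ℝ → ℝ≥0∞
  | 0, Ψ => Ψ
  | m + 1, Ψ => fun x a => ∫⁻ b in Ioi (0 : ℝ), g (x + a + b) * Ch g m Ψ x b

variable {g : ℝ → ℝ≥0∞}

lemma Ch_zero (Ψ : ℝ → ℝ → ℝ≥0∞) : Ch g 0 Ψ = Ψ := rfl

lemma Ch_succ (m : ℕ) (Ψ : ℝ → ℝ → ℝ≥0∞) (x a : ℝ) :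
    Ch g (m + 1) Ψ x a = ∫⁻ b in Ioi (0 : ℝ), g (x + a + b) * Ch g m Ψ x b := rfl

lemma Ch_congr {Ψ Ψ' : ℝ → ℝ → ℝ≥0∞} (m : ℕ) (x : ℝ) (h : Ψ x = Ψ' x) :
    Ch g m Ψ x = Ch g m Ψ' x := by
  induction m with
  | zero => exact h
  | succ m ih => funext a; simp only [Ch_succ, ih]

lemma meas_Ch (hg : Measurable g) {Ψ : ℝ → ℝ → ℝ≥0∞}
    (hΨ : Measurable fun p : ℝ × ℝ => Ψ p.1 p.2) (m : ℕ) :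
    Measurable fun p : ℝ × ℝ => Ch g m Ψ p.1 p.2 := by
  induction m with
  | zero => exact hΨ
  | succ m ih =>
    have h1 : Measurable fun q : (ℝ × ℝ) × ℝ => g (q.1.1 + q.1.2 + q.2) *
        Ch g m Ψ q.1.1 q.2 := by
      refine Measurable.mul ?_ ?_
      · exact hg.comp (show Measurable fun q : (ℝ × ℝ) × ℝ => q.1.1 + q.1.2 + q.2 by fun_prop)
      · exact ih.comp (show Measurable fun q : (ℝ × ℝ) × ℝ => (q.1.1, q.2) by fun_prop)
    exact h1.lintegral_prod_right'

/-- substitution `y = c + a` for set-lintegrals over `Ioi`. -/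
lemma lint_shift (φ : ℝ → ℝ≥0∞) (t c : ℝ) :
    ∫⁻ a in Ioi t, φ (c + a) = ∫⁻ y in Ioi (c + t), φ y := by
  rw [← lintegral_indicator measurableSet_Ioi, ← lintegral_indicator measurableSet_Ioi,
    ← lintegral_add_left_eq_self (fun y => (Ioi (c + t)).indicator φ y) c]
  congr 1
  funext a
  by_cases h : a ∈ Ioi t
  · rw [Set.indicator_of_mem h, Set.indicator_of_mem]
    simpa using h
  · rw [Set.indicator_of_notMem h, Set.indicator_of_notMem]
    simpa using h

lemma shift_bound {x₀ : ℝ} (c t : ℝ) (h : x₀ ≤ c + t) :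
    ∫⁻ a in Ioi t, g (c + a) ≤ ∫⁻ y in Ioi x₀, g y := by
  rw [lint_shift]
  exact lintegral_mono_set (Ioi_subset_Ioi h)

/-- mass bound for chains. -/
lemma ch_mass_le (hg : Measurable g) {Ψ : ℝ → ℝ → ℝ≥0∞}
    (hΨ : Measurable fun p : ℝ × ℝ => Ψ p.1 p.2)
    {x₀ x : ℝ} (hx : x₀ ≤ x) {C : ℝ≥0∞} (hC : ∫⁻ b in Ioi (0 : ℝ), Ψ x b ≤ C) (m : ℕ) :
    ∫⁻ a in Ioi (0 : ℝ), Ch g m Ψ x a ≤ (∫⁻ t in Ioi x₀, g t) ^ m * C := by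
  induction m with
  | zero => simpa [Ch_zero] using hC
  | succ m ih =>
    have hswap : ∫⁻ a in Ioi (0:ℝ), Ch g (m+1) Ψ x a
        = ∫⁻ b in Ioi (0:ℝ), ∫⁻ a in Ioi (0:ℝ), g (x + a + b) * Ch g m Ψ x b := by
      simp only [Ch_succ]
      refine lintegral_lintegral_swap ?_
      apply Measurable.aemeasurable
      refine Measurable.mul (hg.comp (show Measurable fun p : ℝ × ℝ => x + p.1 + p.2 by fun_prop)) ?_
      exact (meas_Ch hg hΨ m).comp (show Measurable fun p : ℝ × ℝ => (x, p.2) by fun_prop)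
    rw [hswap]
    have hb : ∀ b ∈ Ioi (0:ℝ),
        (∫⁻ a in Ioi (0:ℝ), g (x + a + b) * Ch g m Ψ x b)
          ≤ (∫⁻ t in Ioi x₀, g t) * Ch g m Ψ x b := by
      intro b hb
      have h1 : (∫⁻ a in Ioi (0:ℝ), g (x + a + b) * Ch g m Ψ x b)
          = (∫⁻ a in Ioi (0:ℝ), g ((x + b) + a)) * Ch g m Ψ x b := by
        rw [← lintegral_mul_const (Ch g m Ψ x b)
          (show Measurable fun a : ℝ => g (x + b + a) from hg.comp (by fun_prop))]
        congr 1; funext a; ring_nf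
      rw [h1]
      refine mul_le_mul_left ?_ _
      exact shift_bound (x + b) 0 (by simp only [mem_Ioi] at hb; linarith)
    calc ∫⁻ b in Ioi (0:ℝ), ∫⁻ a in Ioi (0:ℝ), g (x + a + b) * Ch g m Ψ x b
        ≤ ∫⁻ b in Ioi (0:ℝ), (∫⁻ t in Ioi x₀, g t) * Ch g m Ψ x b :=
          setLIntegral_mono' measurableSet_Ioi hb
      _ = (∫⁻ t in Ioi x₀, g t) * ∫⁻ b in Ioi (0:ℝ), Ch g m Ψ x b := by
          rw [lintegral_const_mul _
            (show Measurable fun b : ℝ => Ch g m Ψ x b from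
              (meas_Ch hg hΨ m).comp (by fun_prop : Measurable fun b : ℝ => (x, b)))]
      _ ≤ (∫⁻ t in Ioi x₀, g t) * ((∫⁻ t in Ioi x₀, g t) ^ m * C) := mul_le_mul_right ih _
      _ = (∫⁻ t in Ioi x₀, g t) ^ (m + 1) * C := by ring


lemma ch_step (m : ℕ) (x : ℝ) (φ : ℝ → ℝ≥0∞) :
    Ch g m (fun _ b => ∫⁻ c in Ioi (0:ℝ), g (x + b + c) * φ c) x
      = Ch g (m + 1) (fun _ b => φ b) x := by
  induction m with
  | zero => funext b; rfl
  | succ m ih =>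
    funext a
    simp only [Ch_succ, ih]

lemma ch_rev (hg : Measurable g) (m : ℕ) (x : ℝ) :
    ∀ (φ ψ : ℝ → ℝ≥0∞), Measurable φ → Measurable ψ →
    ∫⁻ a in Ioi (0:ℝ), φ a * Ch g m (fun _ b => ψ b) x a
      = ∫⁻ a in Ioi (0:ℝ), ψ a * Ch g m (fun _ b => φ b) x a := by
  induction m with
  | zero =>
    intro φ ψ _ _
    simp only [Ch_zero]
    congr 1; funext a; exact mul_comm _ _
  | succ m ih =>
    intro φ ψ hφ hψ
    have hmΨ : ∀ (ψ' : ℝ → ℝ≥0∞), Measurable ψ' →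
        Measurable fun p : ℝ × ℝ => (fun (_ : ℝ) b => ψ' b) p.1 p.2 := by
      intro ψ' h; exact h.comp measurable_snd
    have hmCh : ∀ (ψ' : ℝ → ℝ≥0∞), Measurable ψ' →
        Measurable fun b : ℝ => Ch g m (fun _ b => ψ' b) x b := by
      intro ψ' h
      exact (meas_Ch hg (hmΨ ψ' h) m).comp (by fun_prop : Measurable fun b : ℝ => (x, b))
    set φ' : ℝ → ℝ≥0∞ := fun b => ∫⁻ c in Ioi (0:ℝ), g (x + b + c) * φ c with hφ'def
    have hφ' : Measurable φ' :=
      (Measurable.mul (hg.comp (show Measurable fun p : ℝ × ℝ => x + p.1 + p.2 by fun_prop))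
        (hφ.comp measurable_snd)).lintegral_prod_right'
    have step1 : ∫⁻ a in Ioi (0:ℝ), φ a * Ch g (m+1) (fun _ b => ψ b) x a
        = ∫⁻ b in Ioi (0:ℝ), φ' b * Ch g m (fun _ b => ψ b) x b := by
      have e1 : ∀ a : ℝ, φ a * Ch g (m+1) (fun _ b => ψ b) x a
          = ∫⁻ b in Ioi (0:ℝ), φ a * (g (x + a + b) * Ch g m (fun _ b => ψ b) x b) := by
        intro a
        rw [Ch_succ, lintegral_const_mul]
        exact Measurable.mul (hg.comp (by fun_prop)) (hmCh ψ hψ)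
      rw [lintegral_congr e1]
      have hsw : AEMeasurable (Function.uncurry fun a b =>
          φ a * (g (x + a + b) * Ch g m (fun _ b => ψ b) x b))
          ((volume.restrict (Ioi (0:ℝ))).prod (volume.restrict (Ioi (0:ℝ)))) := by
        apply Measurable.aemeasurable
        refine Measurable.mul (hφ.comp measurable_fst) ?_
        refine Measurable.mul (hg.comp (show Measurable fun p : ℝ × ℝ => x + p.1 + p.2 by fun_prop)) ?_
        exact (hmCh ψ hψ).comp measurable_snd
      rw [lintegral_lintegral_swap hsw]
      congr 1; funext b
      have e2 : ∀ a : ℝ, φ a * (g (x + a + b) * Ch g m (fun _ b => ψ b) x b)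
          = (g (x + b + a) * φ a) * Ch g m (fun _ b => ψ b) x b := by
        intro a
        have : x + a + b = x + b + a := by ring
        rw [this]; ring
      rw [lintegral_congr e2]
      rw [lintegral_mul_const]
      exact Measurable.mul (hg.comp (by fun_prop)) hφ
    rw [step1, ih φ' ψ hφ' hψ]
    congr 1; funext a
    congr 1
    have : Ch g m (fun _ b => φ' b) x = Ch g (m+1) (fun _ b => φ b) x := ch_step m x φ
    rw [this]


lemma claim' (hg : Measurable g) (x₀ u : ℝ) (hu : x₀ ≤ u) (k : ℕ) :
    ∀ (γ : ℝ), 0 ≤ γ →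
    (∫⁻ x in Ioi x₀, ∫⁻ d in Ioi (0:ℝ),
        g ((x + γ) + d) * Ch g (2*k) (fun _ b => g (u + b)) x d)
      ≤ (∫⁻ t in Ioi x₀, g t) ^ (2*k+2) := by
  have hΨu : Measurable fun p : ℝ × ℝ => (fun (_ : ℝ) b => g (u + b)) p.1 p.2 :=
    hg.comp (by fun_prop : Measurable fun p : ℝ × ℝ => u + p.2)
  have mCh : ∀ j, Measurable fun p : ℝ × ℝ => Ch g j (fun _ b => g (u + b)) p.1 p.2 :=
    fun j => meas_Ch hg hΨu j
  have mChb : ∀ j (b : ℝ), Measurable fun x : ℝ => Ch g j (fun _ b => g (u + b)) x b :=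
    fun j b => (mCh j).comp (by fun_prop : Measurable fun x : ℝ => (x, b))
  induction k with
  | zero =>
    intro γ hγ
    simp only [Nat.mul_zero, Ch_zero]
    have hsw : (∫⁻ x in Ioi x₀, ∫⁻ d in Ioi (0:ℝ), g ((x + γ) + d) * g (u + d))
        = ∫⁻ d in Ioi (0:ℝ), ∫⁻ x in Ioi x₀, g ((x + γ) + d) * g (u + d) := by
      refine lintegral_lintegral_swap (Measurable.aemeasurable ?_)
      exact Measurable.mul (hg.comp (by fun_prop)) (hg.comp (by fun_prop))
    rw [hsw]
    have hd : ∀ d ∈ Ioi (0:ℝ),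
        (∫⁻ x in Ioi x₀, g ((x + γ) + d) * g (u + d))
          ≤ (∫⁻ t in Ioi x₀, g t) * g (u + d) := by
      intro d hd
      have e1 : (∫⁻ x in Ioi x₀, g ((x + γ) + d) * g (u + d))
          = (∫⁻ x in Ioi x₀, g ((γ + d) + x)) * g (u + d) := by
        rw [← lintegral_mul_const (g (u + d))
          (show Measurable fun x : ℝ => g ((γ + d) + x) from hg.comp (by fun_prop))]
        congr 1; funext x; congr 2; ring
      rw [e1]
      refine mul_le_mul_left (shift_bound (γ + d) x₀ ?_) _
      simp only [mem_Ioi] at hd; linarith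
    calc ∫⁻ d in Ioi (0:ℝ), ∫⁻ x in Ioi x₀, g ((x + γ) + d) * g (u + d)
        ≤ ∫⁻ d in Ioi (0:ℝ), (∫⁻ t in Ioi x₀, g t) * g (u + d) :=
          setLIntegral_mono' measurableSet_Ioi hd
      _ = (∫⁻ t in Ioi x₀, g t) * ∫⁻ d in Ioi (0:ℝ), g (u + d) :=
          lintegral_const_mul _ (hg.comp (by fun_prop))
      _ ≤ (∫⁻ t in Ioi x₀, g t) * (∫⁻ t in Ioi x₀, g t) :=
          mul_le_mul_right (shift_bound u 0 (by linarith)) _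
      _ = (∫⁻ t in Ioi x₀, g t) ^ (2*0+2) := by ring
  | succ k ih =>
    intro γ hγ
    set M := ∫⁻ t in Ioi x₀, g t with hM
    have hidx : 2*(k+1) = (2*k+1)+1 := by ring
    rw [hidx]
    set Ψu : ℝ → ℝ → ℝ≥0∞ := fun _ b => g (u + b) with hΨudef
    set inner : ℝ → ℝ → ℝ≥0∞ :=
      fun x p => ∫⁻ b in Ioi (0:ℝ), g ((p - γ) + b) * Ch g (2*k+1) Ψu x b with hinner
    have m_inner : Measurable fun r : ℝ × ℝ => inner r.1 r.2 := by
      refine Measurable.lintegral_prod_right'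
        (f := fun q : (ℝ × ℝ) × ℝ => g ((q.1.2 - γ) + q.2) * Ch g (2*k+1) Ψu q.1.1 q.2) ?_
      exact Measurable.mul (hg.comp (by fun_prop))
        ((mCh (2*k+1)).comp (show Measurable fun q : (ℝ × ℝ) × ℝ => (q.1.1, q.2) by fun_prop))
    have E : ∀ x : ℝ, (∫⁻ d in Ioi (0:ℝ), g ((x + γ) + d) * Ch g ((2*k+1)+1) Ψu x d)
        = ∫⁻ p in Ioi (x + γ), g p * inner x p := by
      intro x
      have e0 : ∀ d : ℝ, g ((x + γ) + d) * Ch g ((2*k+1)+1) Ψu x d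
          = (fun w => g w * Ch g ((2*k+1)+1) Ψu x (w - (x + γ))) ((x + γ) + d) := by
        intro d; simp only [add_sub_cancel_left]
      rw [lintegral_congr e0,
        lint_shift (fun w => g w * Ch g ((2*k+1)+1) Ψu x (w - (x + γ))) 0 (x + γ), add_zero]
      congr 1; funext p
      congr 1
      rw [Ch_succ]
      congr 1; funext b
      congr 2
      ring
    rw [lintegral_congr fun x => E x]
    have relax : (∫⁻ x in Ioi x₀, ∫⁻ p in Ioi (x + γ), g p * inner x p)
        ≤ ∫⁻ x in Ioi x₀, ∫⁻ p in Ioi (x₀ + γ), g p * inner x p := by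
      refine setLIntegral_mono' measurableSet_Ioi (fun x hx => ?_)
      refine lintegral_mono_set (Ioi_subset_Ioi ?_)
      simp only [mem_Ioi] at hx; linarith
    refine le_trans relax ?_
    have hsw1 : (∫⁻ x in Ioi x₀, ∫⁻ p in Ioi (x₀ + γ), g p * inner x p)
        = ∫⁻ p in Ioi (x₀ + γ), ∫⁻ x in Ioi x₀, g p * inner x p := by
      refine lintegral_lintegral_swap (Measurable.aemeasurable ?_)
      exact Measurable.mul (hg.comp measurable_snd) m_inner
    rw [hsw1]
    have hp : ∀ p ∈ Ioi (x₀ + γ),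
        (∫⁻ x in Ioi x₀, g p * inner x p) ≤ g p * (M * M ^ (2*k+2)) := by
      intro p hp
      simp only [mem_Ioi] at hp
      rw [lintegral_const_mul _ (show Measurable fun x : ℝ => inner x p from
        m_inner.comp (by fun_prop : Measurable fun x : ℝ => (x, p)))]
      refine mul_le_mul_right ?_ _
      have hsw2 : (∫⁻ x in Ioi x₀, inner x p)
          = ∫⁻ b in Ioi (0:ℝ), ∫⁻ x in Ioi x₀, g ((p - γ) + b) * Ch g (2*k+1) Ψu x b := by
        refine lintegral_lintegral_swap (Measurable.aemeasurable ?_)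
        exact Measurable.mul (hg.comp (by fun_prop))
          ((mCh (2*k+1)).comp (show Measurable fun q : ℝ × ℝ => (q.1, q.2) by fun_prop))
      rw [hsw2]
      have hb : ∀ b ∈ Ioi (0:ℝ),
          (∫⁻ x in Ioi x₀, g ((p - γ) + b) * Ch g (2*k+1) Ψu x b)
            ≤ g ((p - γ) + b) * M ^ (2*k+2) := by
        intro b hb
        simp only [mem_Ioi] at hb
        rw [lintegral_const_mul _ (mChb (2*k+1) b)]
        refine mul_le_mul_right ?_ _
        have hunf : ∀ x : ℝ, Ch g (2*k+1) Ψu x b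
            = ∫⁻ e in Ioi (0:ℝ), g ((x + b) + e) * Ch g (2*k) Ψu x e := by
          intro x; rw [Ch_succ]
        rw [lintegral_congr hunf]
        exact ih b (le_of_lt hb)
      calc ∫⁻ b in Ioi (0:ℝ), ∫⁻ x in Ioi x₀, g ((p - γ) + b) * Ch g (2*k+1) Ψu x b
          ≤ ∫⁻ b in Ioi (0:ℝ), g ((p - γ) + b) * M ^ (2*k+2) :=
            setLIntegral_mono' measurableSet_Ioi hb
        _ = (∫⁻ b in Ioi (0:ℝ), g ((p - γ) + b)) * M ^ (2*k+2) :=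
            lintegral_mul_const _ (hg.comp (by fun_prop))
        _ ≤ M * M ^ (2*k+2) :=
            mul_le_mul_left (shift_bound (p - γ) 0 (by linarith)) _
    calc ∫⁻ p in Ioi (x₀ + γ), ∫⁻ x in Ioi x₀, g p * inner x p
        ≤ ∫⁻ p in Ioi (x₀ + γ), g p * (M * M ^ (2*k+2)) :=
          setLIntegral_mono' measurableSet_Ioi hp
      _ = (∫⁻ p in Ioi (x₀ + γ), g p) * (M * M ^ (2*k+2)) :=
          lintegral_mul_const _ hg
      _ ≤ M * (M * M ^ (2*k+2)) := by
          refine mul_le_mul_left (lintegral_mono_set (Ioi_subset_Ioi (by linarith))) _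
      _ = M ^ (2*(k+1)+2) := by ring


lemma amgm (a b : ℝ≥0∞) : 2 * (a * b) ≤ a ^ 2 + b ^ 2 := by
  rcases eq_or_ne a ⊤ with ha | ha
  · subst ha
    have : (⊤ : ℝ≥0∞) ^ 2 = ⊤ := by simp [pow_two]
    rw [this]; exact le_top.trans (le_add_right le_rfl)
  rcases eq_or_ne b ⊤ with hb | hb
  · subst hb
    have : (⊤ : ℝ≥0∞) ^ 2 = ⊤ := by simp [pow_two]
    rw [this]
    exact le_top.trans (le_add_left le_rfl)
  lift a to NNReal using ha
  lift b to NNReal using hb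
  have hn : 2 * (a * b) ≤ a ^ 2 + b ^ 2 := by
    rw [← NNReal.coe_le_coe]
    push_cast
    nlinarith [sq_nonneg ((a : ℝ) - (b : ℝ))]
  calc (2 : ℝ≥0∞) * (↑a * ↑b) = ((2 * (a * b) : NNReal) : ℝ≥0∞) := by push_cast; ring
    _ ≤ ((a ^ 2 + b ^ 2 : NNReal) : ℝ≥0∞) := by exact_mod_cast hn
    _ = (a : ℝ≥0∞) ^ 2 + (b : ℝ≥0∞) ^ 2 := by push_cast; ring

lemma abound (hg : Measurable g) {h : ℝ → ℝ≥0∞} (hh : Measurable h) (x₀ : ℝ) (k : ℕ) :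
    (∫⁻ x in Ioi x₀, ∫⁻ a in Ioi (0:ℝ),
        (h (x + a)) ^ 2 * Ch g (2*k+1) (fun y b => g (y + b)) x a)
      ≤ (∫⁻ t in Ioi x₀, g t) ^ (2*k+2) * ∫⁻ y in Ioi x₀, (h y) ^ 2 := by
  set M := ∫⁻ t in Ioi x₀, g t with hM
  have hTc : Measurable fun p : ℝ × ℝ => (fun (y : ℝ) b => g (y + b)) p.1 p.2 :=
    hg.comp (by fun_prop : Measurable fun p : ℝ × ℝ => p.1 + p.2)
  have mG : Measurable fun r : ℝ × ℝ => ∫⁻ b in Ioi (0:ℝ),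
      g (r.2 + b) * Ch g (2*k) (fun y b => g (y + b)) r.1 b := by
    refine Measurable.lintegral_prod_right'
      (f := fun q : (ℝ × ℝ) × ℝ => g (q.1.2 + q.2) * Ch g (2*k) (fun y b => g (y + b)) q.1.1 q.2) ?_
    exact Measurable.mul (hg.comp (by fun_prop))
      ((meas_Ch hg hTc (2*k)).comp (show Measurable fun q : (ℝ × ℝ) × ℝ => (q.1.1, q.2) by fun_prop))
  have E : ∀ x : ℝ, (∫⁻ a in Ioi (0:ℝ), (h (x + a)) ^ 2 * Ch g (2*k+1) (fun y b => g (y + b)) x a)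
      = ∫⁻ w in Ioi x, (h w) ^ 2 * ∫⁻ b in Ioi (0:ℝ),
          g (w + b) * Ch g (2*k) (fun y b => g (y + b)) x b := by
    intro x
    have e0 : ∀ a : ℝ, (h (x + a)) ^ 2 * Ch g (2*k+1) (fun y b => g (y + b)) x a
        = (fun w => (h w) ^ 2 * ∫⁻ b in Ioi (0:ℝ),
            g (w + b) * Ch g (2*k) (fun y b => g (y + b)) x b) (x + a) := by
      intro a
      rw [Ch_succ]
    rw [lintegral_congr e0,
      lint_shift (fun w => (h w) ^ 2 * ∫⁻ b in Ioi (0:ℝ),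
        g (w + b) * Ch g (2*k) (fun y b => g (y + b)) x b) 0 x, add_zero]
  rw [lintegral_congr fun x => E x]
  have relax : (∫⁻ x in Ioi x₀, ∫⁻ w in Ioi x, (h w) ^ 2 * ∫⁻ b in Ioi (0:ℝ),
        g (w + b) * Ch g (2*k) (fun y b => g (y + b)) x b)
      ≤ ∫⁻ x in Ioi x₀, ∫⁻ w in Ioi x₀, (h w) ^ 2 * ∫⁻ b in Ioi (0:ℝ),
        g (w + b) * Ch g (2*k) (fun y b => g (y + b)) x b := by
    refine setLIntegral_mono' measurableSet_Ioi (fun x hx => ?_)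
    exact lintegral_mono_set (Ioi_subset_Ioi (le_of_lt (by simpa using hx)))
  refine le_trans relax ?_
  have hsw : (∫⁻ x in Ioi x₀, ∫⁻ w in Ioi x₀, (h w) ^ 2 * ∫⁻ b in Ioi (0:ℝ),
        g (w + b) * Ch g (2*k) (fun y b => g (y + b)) x b)
      = ∫⁻ w in Ioi x₀, ∫⁻ x in Ioi x₀, (h w) ^ 2 * ∫⁻ b in Ioi (0:ℝ),
        g (w + b) * Ch g (2*k) (fun y b => g (y + b)) x b := by
    refine lintegral_lintegral_swap (Measurable.aemeasurable ?_)
    exact Measurable.mul ((hh.comp measurable_snd).pow_const 2)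
      (mG.comp (show Measurable fun q : ℝ × ℝ => (q.1, q.2) by fun_prop))
  rw [hsw]
  have hw : ∀ w ∈ Ioi x₀,
      (∫⁻ x in Ioi x₀, (h w) ^ 2 * ∫⁻ b in Ioi (0:ℝ),
        g (w + b) * Ch g (2*k) (fun y b => g (y + b)) x b)
      ≤ (h w) ^ 2 * M ^ (2*k+2) := by
    intro w hw
    simp only [mem_Ioi] at hw
    rw [lintegral_const_mul _ (show Measurable fun x : ℝ => ∫⁻ b in Ioi (0:ℝ),
      g (w + b) * Ch g (2*k) (fun y b => g (y + b)) x b from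
        mG.comp (by fun_prop : Measurable fun x : ℝ => (x, w)))]
    refine mul_le_mul_right ?_ _
    have hrev : ∀ x : ℝ, (∫⁻ b in Ioi (0:ℝ), g (w + b) * Ch g (2*k) (fun y b => g (y + b)) x b)
        = ∫⁻ c in Ioi (0:ℝ), g ((x + 0) + c) * Ch g (2*k) (fun _ b => g (w + b)) x c := by
      intro x
      have h1 : Ch g (2*k) (fun y b => g (y + b)) x = Ch g (2*k) (fun _ b => g (x + b)) x :=
        Ch_congr (2*k) x rfl
      rw [h1, ch_rev hg (2*k) x (fun b => g (w + b)) (fun b => g (x + b))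
        (hg.comp (by fun_prop)) (hg.comp (by fun_prop))]
      congr 1; funext c
      congr 2
      ring
    rw [lintegral_congr hrev]
    exact claim' hg x₀ w (le_of_lt hw) k 0 le_rfl
  calc ∫⁻ w in Ioi x₀, ∫⁻ x in Ioi x₀, (h w) ^ 2 * ∫⁻ b in Ioi (0:ℝ),
        g (w + b) * Ch g (2*k) (fun y b => g (y + b)) x b
      ≤ ∫⁻ w in Ioi x₀, (h w) ^ 2 * M ^ (2*k+2) :=
        setLIntegral_mono' measurableSet_Ioi hw
    _ = (∫⁻ w in Ioi x₀, (h w) ^ 2) * M ^ (2*k+2) :=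
        lintegral_mul_const _ (hh.pow_const 2)
    _ = M ^ (2*k+2) * ∫⁻ y in Ioi x₀, (h y) ^ 2 := mul_comm _ _


lemma nbound (hg : Measurable g) {h w1 : ℝ → ℝ≥0∞} (hh : Measurable h) (x₀ : ℝ)
    (hcomp : ∀ x ∈ Ioi x₀, ∀ a ∈ Ioi (0:ℝ), w1 x * g (x + a) ≤ h (x + a)) (k : ℕ) :
    (∫⁻ x in Ioi x₀, (w1 x) ^ 2 *
        (∫⁻ a in Ioi (0:ℝ), g (x + a) * Ch g (2*k+1) (fun y b => g (y + b)) x a) ^ 2)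
      ≤ (∫⁻ t in Ioi x₀, g t) ^ (4*k+4) * ∫⁻ y in Ioi x₀, (h y) ^ 2 := by
  set M := ∫⁻ t in Ioi x₀, g t with hM
  have hTc : Measurable fun p : ℝ × ℝ => (fun (y : ℝ) b => g (y + b)) p.1 p.2 :=
    hg.comp (by fun_prop : Measurable fun p : ℝ × ℝ => p.1 + p.2)
  have mT : ∀ x : ℝ, Measurable fun a : ℝ => Ch g (2*k+1) (fun y b => g (y + b)) x a :=
    fun x => (meas_Ch hg hTc (2*k+1)).comp (by fun_prop : Measurable fun a : ℝ => (x, a))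
  have mD : Measurable fun x : ℝ => ∫⁻ a in Ioi (0:ℝ),
      (h (x + a)) ^ 2 * Ch g (2*k+1) (fun y b => g (y + b)) x a := by
    refine Measurable.lintegral_prod_right'
      (f := fun q : ℝ × ℝ => (h (q.1 + q.2)) ^ 2 * Ch g (2*k+1) (fun y b => g (y + b)) q.1 q.2) ?_
    exact Measurable.mul
      ((hh.comp (by fun_prop : Measurable fun q : ℝ × ℝ => q.1 + q.2)).pow_const 2)
      (meas_Ch hg hTc (2*k+1))
  have key : ∀ x ∈ Ioi x₀,
      (w1 x) ^ 2 * (∫⁻ a in Ioi (0:ℝ), g (x + a) * Ch g (2*k+1) (fun y b => g (y + b)) x a) ^ 2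
        ≤ M ^ (2*k+2) *
          ∫⁻ a in Ioi (0:ℝ), (h (x + a)) ^ 2 * Ch g (2*k+1) (fun y b => g (y + b)) x a := by
    intro x hx
    have hx' : x₀ < x := by simpa using hx
    set T : ℝ → ℝ≥0∞ := fun a => Ch g (2*k+1) (fun y b => g (y + b)) x a with hT
    have mT' : Measurable T := mT x
    set Q := ∫⁻ a in Ioi (0:ℝ), h (x + a) * T a with hQdef
    have mHT : Measurable fun a : ℝ => h (x + a) * T a :=
      Measurable.mul (hh.comp (by fun_prop)) mT'
    have mh2T : Measurable fun a : ℝ => (h (x + a)) ^ 2 * T a :=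
      Measurable.mul ((hh.comp (by fun_prop)).pow_const 2) mT'
    have hstep1 : w1 x * (∫⁻ a in Ioi (0:ℝ), g (x + a) * T a) ≤ Q := by
      rw [← lintegral_const_mul _ (show Measurable fun a : ℝ => g (x + a) * T a from
        Measurable.mul (hg.comp (by fun_prop)) mT')]
      refine setLIntegral_mono' measurableSet_Ioi (fun a ha => ?_)
      rw [← mul_assoc]
      exact mul_le_mul_left (hcomp x (mem_Ioi.2 hx') a ha) _
    set C := ∫⁻ a in Ioi (0:ℝ), T a with hCdef
    set D := ∫⁻ a in Ioi (0:ℝ), (h (x + a)) ^ 2 * T a with hDdef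
    have hCle : C ≤ M ^ (2*k+2) := by
      have h1 := ch_mass_le hg (Ψ := fun y b => g (y + b)) hTc (le_of_lt hx')
        (C := M) (shift_bound (x₀ := x₀) x 0 (by linarith)) (2*k+1)
      calc C ≤ M ^ (2*k+1) * M := h1
        _ = M ^ (2*k+2) := by ring
    have hQ2 : Q ^ 2 ≤ C * D := by
      have e1 : Q ^ 2 = ∫⁻ a in Ioi (0:ℝ), ∫⁻ a' in Ioi (0:ℝ),
          (h (x + a) * T a) * (h (x + a') * T a') := by
        rw [pow_two, hQdef, ← lintegral_mul_const _ mHT]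
        exact lintegral_congr fun a => (lintegral_const_mul _ mHT).symm
      have mouter : Measurable fun a : ℝ => ∫⁻ a' in Ioi (0:ℝ),
          (h (x + a) * T a) * (h (x + a') * T a') := by
        refine Measurable.lintegral_prod_right'
          (f := fun q : ℝ × ℝ => (h (x + q.1) * T q.1) * (h (x + q.2) * T q.2)) ?_
        exact (mHT.comp measurable_fst).mul (mHT.comp measurable_snd)
      have e2 : 2 * Q ^ 2 ≤ 2 * (C * D) := by
        calc 2 * Q ^ 2
            = ∫⁻ a in Ioi (0:ℝ), 2 * ∫⁻ a' in Ioi (0:ℝ),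
                (h (x + a) * T a) * (h (x + a') * T a') := by
              rw [e1, lintegral_const_mul _ mouter]
          _ = ∫⁻ a in Ioi (0:ℝ), ∫⁻ a' in Ioi (0:ℝ),
                2 * ((h (x + a) * T a) * (h (x + a') * T a')) := by
              exact lintegral_congr fun a =>
                (lintegral_const_mul _ (mHT.const_mul (h (x + a) * T a))).symm
          _ ≤ ∫⁻ a in Ioi (0:ℝ), ∫⁻ a' in Ioi (0:ℝ),
                ((h (x + a)) ^ 2 * T a) * T a' + T a * ((h (x + a')) ^ 2 * T a') := by
              refine setLIntegral_mono' measurableSet_Ioi (fun a _ => ?_)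
              refine setLIntegral_mono' measurableSet_Ioi (fun a' _ => ?_)
              calc 2 * ((h (x + a) * T a) * (h (x + a') * T a'))
                  = (2 * (h (x + a) * h (x + a'))) * (T a * T a') := by ring
                _ ≤ ((h (x + a)) ^ 2 + (h (x + a')) ^ 2) * (T a * T a') :=
                    mul_le_mul_left (amgm _ _) _
                _ = ((h (x + a)) ^ 2 * T a) * T a' + T a * ((h (x + a')) ^ 2 * T a') := by ring
          _ = ∫⁻ a in Ioi (0:ℝ), (((h (x + a)) ^ 2 * T a) * C + T a * D) := by
              refine lintegral_congr fun a => ?_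
              rw [lintegral_add_left (mT'.const_mul _)]
              rw [lintegral_const_mul _ mT', lintegral_const_mul _ mh2T]
          _ = D * C + C * D := by
              rw [lintegral_add_left (mh2T.mul_const _)]
              rw [lintegral_mul_const _ mh2T, lintegral_mul_const _ mT']
          _ = 2 * (C * D) := by ring
      exact (ENNReal.mul_le_mul_iff_right (by norm_num) (by norm_num)).mp e2
    calc (w1 x) ^ 2 * (∫⁻ a in Ioi (0:ℝ), g (x + a) * T a) ^ 2
        = (w1 x * ∫⁻ a in Ioi (0:ℝ), g (x + a) * T a) ^ 2 := (mul_pow _ _ 2).symm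
      _ ≤ Q ^ 2 := pow_le_pow_left' hstep1 2
      _ ≤ C * D := hQ2
      _ ≤ M ^ (2*k+2) * D := mul_le_mul_left hCle _
  calc (∫⁻ x in Ioi x₀, (w1 x) ^ 2 *
        (∫⁻ a in Ioi (0:ℝ), g (x + a) * Ch g (2*k+1) (fun y b => g (y + b)) x a) ^ 2)
      ≤ ∫⁻ x in Ioi x₀, M ^ (2*k+2) * ∫⁻ a in Ioi (0:ℝ),
          (h (x + a)) ^ 2 * Ch g (2*k+1) (fun y b => g (y + b)) x a :=
        setLIntegral_mono' measurableSet_Ioi key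
    _ = M ^ (2*k+2) * ∫⁻ x in Ioi x₀, ∫⁻ a in Ioi (0:ℝ),
          (h (x + a)) ^ 2 * Ch g (2*k+1) (fun y b => g (y + b)) x a :=
        lintegral_const_mul _ mD
    _ ≤ M ^ (2*k+2) * (M ^ (2*k+2) * ∫⁻ y in Ioi x₀, (h y) ^ 2) :=
        mul_le_mul_right (abound hg hh x₀ k) _
    _ = M ^ (4*k+4) * ∫⁻ y in Ioi x₀, (h y) ^ 2 := by
        rw [← mul_assoc, ← pow_add]
        congr 2
        omega



lemma nonneg_set_meas (m : ℕ) : MeasurableSet {t : Fin m → ℝ | ∀ i, 0 ≤ t i} := by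
  have h : {t : Fin m → ℝ | ∀ i, 0 ≤ t i} = ⋂ i, {t : Fin m → ℝ | 0 ≤ t i} := by
    ext t; simp [Set.mem_iInter]
  rw [h]
  exact MeasurableSet.iInter fun i =>
    measurableSet_le measurable_const (measurable_pi_apply i)

lemma measurable_cons {m : ℕ} (a : ℝ) :
    Measurable fun s : Fin m → ℝ => (Fin.cons a s : Fin (m+1) → ℝ) := by
  rw [measurable_pi_iff]
  intro i
  refine Fin.cases ?_ ?_ i
  · simpa using measurable_const
  · intro j; simpa using measurable_pi_apply j

lemma peel {m : ℕ} (Ψ : (Fin (m+1) → ℝ) → ℝ≥0∞) (hΨ : Measurable Ψ) :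
    ∫⁻ t in {t : Fin (m+1) → ℝ | ∀ i, 0 ≤ t i}, Ψ t
      = ∫⁻ a in Ici (0:ℝ), ∫⁻ s in {s : Fin m → ℝ | ∀ i, 0 ≤ s i}, Ψ (Fin.cons a s) := by
  have hmp := (MeasureTheory.volume_preserving_piFinSuccAbove (fun _ : Fin (m+1) => ℝ) 0).symm
  have hS := nonneg_set_meas (m+1)
  rw [← lintegral_indicator hS]
  rw [← hmp.lintegral_comp (hΨ.indicator hS)]
  have hsymm : ∀ p : ℝ × (Fin m → ℝ),
      (MeasurableEquiv.piFinSuccAbove (fun _ : Fin (m+1) => ℝ) 0).symm p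
        = Fin.cons p.1 p.2 := by
    intro p
    rw [MeasurableEquiv.piFinSuccAbove_symm_apply]
    simp [Fin.insertNthEquiv, Fin.insertNth_zero]
  rw [MeasureTheory.Measure.volume_eq_prod]
  rw [lintegral_prod
    (fun p : ℝ × (Fin m → ℝ) => ({t : Fin (m+1) → ℝ | ∀ i, 0 ≤ t i}.indicator Ψ)
      ((MeasurableEquiv.piFinSuccAbove (fun _ : Fin (m+1) => ℝ) 0).symm p))
    (((hΨ.indicator hS).comp (MeasurableEquiv.measurable _)).aemeasurable)]
  have key : ∀ a : ℝ,
      (∫⁻ s : Fin m → ℝ, ({t : Fin (m+1) → ℝ | ∀ i, 0 ≤ t i}.indicator Ψ)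
          ((MeasurableEquiv.piFinSuccAbove (fun _ : Fin (m+1) => ℝ) 0).symm (a, s)))
        = (Ici (0:ℝ)).indicator
            (fun a => ∫⁻ s in {s : Fin m → ℝ | ∀ i, 0 ≤ s i}, Ψ (Fin.cons a s)) a := by
    intro a
    by_cases ha : (0:ℝ) ≤ a
    · rw [Set.indicator_of_mem (mem_Ici.2 ha)]
      rw [← lintegral_indicator (nonneg_set_meas m)]
      refine lintegral_congr fun s => ?_
      rw [hsymm (a, s)]
      by_cases hs : ∀ i, (0:ℝ) ≤ s i
      · have hmem1 : Fin.cons a s ∈ {t : Fin (m+1) → ℝ | ∀ i, 0 ≤ t i} := by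
          intro i
          refine Fin.cases ?_ ?_ i
          · simpa using ha
          · intro j; simpa using hs j
        rw [Set.indicator_of_mem hmem1,
          Set.indicator_of_mem (show s ∈ {s : Fin m → ℝ | ∀ i, 0 ≤ s i} from hs)]
      · have hmem1 : Fin.cons a s ∉ {t : Fin (m+1) → ℝ | ∀ i, 0 ≤ t i} := by
          intro hmem
          exact hs fun j => by simpa using hmem j.succ
        rw [Set.indicator_of_notMem hmem1,
          Set.indicator_of_notMem (show s ∉ {s : Fin m → ℝ | ∀ i, 0 ≤ s i} from hs)]
    · rw [Set.indicator_of_notMem (by simpa using ha)]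
      have hz : ∀ s : Fin m → ℝ,
          ({t : Fin (m+1) → ℝ | ∀ i, 0 ≤ t i}.indicator Ψ) (Fin.cons a s) = 0 := by
        intro s
        apply Set.indicator_of_notMem
        intro hmem
        exact ha (by simpa using hmem 0)
      calc (∫⁻ s : Fin m → ℝ, ({t : Fin (m+1) → ℝ | ∀ i, 0 ≤ t i}.indicator Ψ)
            ((MeasurableEquiv.piFinSuccAbove (fun _ : Fin (m+1) => ℝ) 0).symm (a, s)))
          = ∫⁻ _s : Fin m → ℝ, 0 := by
            refine lintegral_congr fun s => ?_
            rw [hsymm (a, s), hz s]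
        _ = 0 := lintegral_zero
  rw [lintegral_congr key, lintegral_indicator measurableSet_Ici]



lemma dim1 (φ : (Fin 1 → ℝ) → ℝ≥0∞) (hφ : Measurable φ) :
    ∫⁻ t in {t : Fin 1 → ℝ | ∀ i, 0 ≤ t i}, φ t = ∫⁻ b in Ici (0:ℝ), φ (fun _ => b) := by
  have hmp : MeasurePreserving (MeasurableEquiv.funUnique (Fin 1) ℝ).symm volume volume :=
    (MeasureTheory.volume_preserving_funUnique (Fin 1) ℝ).symm
  have hS := nonneg_set_meas 1
  rw [← lintegral_indicator hS]
  rw [← hmp.lintegral_comp (hφ.indicator hS)]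
  have hsymm : ∀ b : ℝ, (MeasurableEquiv.funUnique (Fin 1) ℝ).symm b = fun _ => b := by
    intro b
    funext i
    simp [MeasurableEquiv.funUnique]
  have key : ∀ b : ℝ,
      ({t : Fin 1 → ℝ | ∀ i, 0 ≤ t i}.indicator φ) ((MeasurableEquiv.funUnique (Fin 1) ℝ).symm b)
        = (Ici (0:ℝ)).indicator (fun b => φ (fun _ => b)) b := by
    intro b
    rw [hsymm b]
    by_cases hb : (0:ℝ) ≤ b
    · rw [Set.indicator_of_mem (show (fun _ => b) ∈ {t : Fin 1 → ℝ | ∀ i, 0 ≤ t i} from fun _ => hb),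
        Set.indicator_of_mem (mem_Ici.2 hb)]
    · rw [Set.indicator_of_notMem (show (fun _ => b) ∉ {t : Fin 1 → ℝ | ∀ i, 0 ≤ t i} from
          fun hmem => hb (hmem 0)),
        Set.indicator_of_notMem (by simpa using hb)]
  rw [lintegral_congr key, lintegral_indicator measurableSet_Ici]

lemma cons_mk_zero {m : ℕ} (b : ℝ) (s : Fin m → ℝ) (h : 0 < m + 1) :
    (Fin.cons b s : Fin (m+1) → ℝ) ⟨0, h⟩ = b := by
  have h0 : (⟨0, h⟩ : Fin (m+1)) = 0 := by ext; simp
  rw [h0, Fin.cons_zero]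

lemma cons_mk_succ {m : ℕ} (b : ℝ) (s : Fin m → ℝ) (i : ℕ) (h : i + 1 < m + 1) : (Fin.cons b s : Fin (m+1) → ℝ) ⟨i + 1, h⟩ = s ⟨i, by omega⟩ := by
  have h0 : (⟨i + 1, h⟩ : Fin (m+1)) = Fin.succ ⟨i, by omega⟩ := by ext; simp
  rw [h0, Fin.cons_succ]


lemma meas_chain (hg : Measurable g) (k : ℕ) (x a : ℝ) :
    Measurable fun s : Fin (k+1) → ℝ =>
      (g (x + a + s ⟨0, by omega⟩) *
        ∏ j : Fin k, g (x + s ⟨j.1, by have := j.isLt; omega⟩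
          + s ⟨j.1 + 1, by have := j.isLt; omega⟩)) *
      g (x + s ⟨k, by omega⟩) := by
  refine Measurable.mul (Measurable.mul ?_ ?_) ?_
  · exact hg.comp (measurable_const.add (measurable_pi_apply _))
  · refine Finset.measurable_prod _ fun j _ => ?_
    exact hg.comp ((measurable_const.add (measurable_pi_apply _)).add (measurable_pi_apply _))
  · exact hg.comp (measurable_const.add (measurable_pi_apply _))

lemma pi_to_ch (hg : Measurable g) (x : ℝ) : ∀ (k : ℕ) (a : ℝ),
    (∫⁻ s in {s : Fin (k+1) → ℝ | ∀ i, 0 ≤ s i},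
      (g (x + a + s ⟨0, by omega⟩) *
        ∏ j : Fin k, g (x + s ⟨j.1, by have := j.isLt; omega⟩
          + s ⟨j.1 + 1, by have := j.isLt; omega⟩)) *
      g (x + s ⟨k, by omega⟩))
      = Ch g (k+1) (fun y b => g (y + b)) x a := by
  intro k
  induction k with
  | zero =>
    intro a
    rw [dim1 _ (meas_chain hg 0 x a)]
    rw [← Measure.restrict_congr_set Ioi_ae_eq_Ici]
    refine lintegral_congr fun b => ?_
    simp [Ch]
  | succ k ih =>
    intro a
    rw [peel _ (meas_chain hg (k+1) x a)]
    have inner_eq : ∀ b : ℝ,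
        (∫⁻ s in {s : Fin (k+1) → ℝ | ∀ i, 0 ≤ s i},
          (g (x + a + (Fin.cons b s : Fin (k+2) → ℝ) ⟨0, by omega⟩) *
            ∏ j : Fin (k+1), g (x + (Fin.cons b s : Fin (k+2) → ℝ) ⟨j.1, by have := j.isLt; omega⟩
              + (Fin.cons b s : Fin (k+2) → ℝ) ⟨j.1 + 1, by have := j.isLt; omega⟩)) *
          g (x + (Fin.cons b s : Fin (k+2) → ℝ) ⟨k+1, by omega⟩))
        = g (x + a + b) * Ch g (k+1) (fun y b => g (y + b)) x b := by
      intro b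
      simp only [cons_mk_zero, Fin.prod_univ_succ, Fin.val_zero, Fin.val_succ, cons_mk_succ]
      have e : ∀ s : Fin (k+1) → ℝ,
          g (x + a + b) * (g (x + b + s ⟨0, by omega⟩) *
            ∏ j : Fin k, g (x + s ⟨j.1, by have := j.isLt; omega⟩
              + s ⟨j.1 + 1, by have := j.isLt; omega⟩)) * g (x + s ⟨k, by omega⟩)
          = g (x + a + b) * ((g (x + b + s ⟨0, by omega⟩) *
            ∏ j : Fin k, g (x + s ⟨j.1, by have := j.isLt; omega⟩
              + s ⟨j.1 + 1, by have := j.isLt; omega⟩)) * g (x + s ⟨k, by omega⟩)) :=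
        fun s => by ring
      rw [lintegral_congr e, lintegral_const_mul _ (meas_chain hg k x b), ih b]
    rw [lintegral_congr inner_eq]
    rw [← Measure.restrict_congr_set Ioi_ae_eq_Ici]
    rfl


lemma meas_chain2 (hg : Measurable g) (k : ℕ) (x : ℝ) :
    Measurable fun t : Fin (k+2) → ℝ =>
      (g (x + t ⟨0, by omega⟩) *
        ∏ j : Fin (k+1), g (x + t ⟨j.1, by have := j.isLt; omega⟩
          + t ⟨j.1 + 1, by have := j.isLt; omega⟩)) * g (x + t ⟨k+1, by omega⟩) := by
  refine Measurable.mul (Measurable.mul ?_ ?_) ?_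
  · exact hg.comp (measurable_const.add (measurable_pi_apply _))
  · refine Finset.measurable_prod _ fun j _ => ?_
    exact hg.comp ((measurable_const.add (measurable_pi_apply _)).add (measurable_pi_apply _))
  · exact hg.comp (measurable_const.add (measurable_pi_apply _))

lemma chainP_step1 (hg : Measurable g) (k : ℕ) (x : ℝ) :
    (∫⁻ t in {t : Fin (k+2) → ℝ | ∀ i, 0 ≤ t i},
      (g (x + t ⟨0, by omega⟩) *
        ∏ j : Fin (k+1), g (x + t ⟨j.1, by have := j.isLt; omega⟩
          + t ⟨j.1 + 1, by have := j.isLt; omega⟩)) * g (x + t ⟨k+1, by omega⟩))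
      = ∫⁻ a in Ioi (0:ℝ), g (x + a) * Ch g (k+1) (fun y b => g (y + b)) x a := by
  rw [peel _ (meas_chain2 hg k x)]
  have inner_eq : ∀ a : ℝ,
      (∫⁻ s in {s : Fin (k+1) → ℝ | ∀ i, 0 ≤ s i},
        (g (x + (Fin.cons a s : Fin (k+2) → ℝ) ⟨0, by omega⟩) *
          ∏ j : Fin (k+1), g (x + (Fin.cons a s : Fin (k+2) → ℝ) ⟨j.1, by have := j.isLt; omega⟩
            + (Fin.cons a s : Fin (k+2) → ℝ) ⟨j.1 + 1, by have := j.isLt; omega⟩)) *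
        g (x + (Fin.cons a s : Fin (k+2) → ℝ) ⟨k+1, by omega⟩))
      = g (x + a) * Ch g (k+1) (fun y b => g (y + b)) x a := by
    intro a
    simp only [cons_mk_zero, Fin.prod_univ_succ, Fin.val_zero, Fin.val_succ, cons_mk_succ]
    have e : ∀ s : Fin (k+1) → ℝ,
        g (x + a) * (g (x + a + s ⟨0, by omega⟩) *
          ∏ j : Fin k, g (x + s ⟨j.1, by have := j.isLt; omega⟩
            + s ⟨j.1 + 1, by have := j.isLt; omega⟩)) * g (x + s ⟨k, by omega⟩)
        = g (x + a) * ((g (x + a + s ⟨0, by omega⟩) *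
          ∏ j : Fin k, g (x + s ⟨j.1, by have := j.isLt; omega⟩
            + s ⟨j.1 + 1, by have := j.isLt; omega⟩)) * g (x + s ⟨k, by omega⟩)) :=
      fun s => by ring
    rw [lintegral_congr e, lintegral_const_mul _ (meas_chain hg k x a), pi_to_ch hg x k a]
  rw [lintegral_congr inner_eq, ← Measure.restrict_congr_set Ioi_ae_eq_Ici]


lemma chainP_repr (f : ℝ → ℝ) (hg : Measurable fun y => ENNReal.ofReal (f y))
    (n : ℕ) (hn : 1 ≤ n + 1) (x : ℝ) :
    chainP f (n + 1) hn x
      = ∫⁻ a in Ioi (0:ℝ), ENNReal.ofReal (f (x + a)) *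
          Ch (fun y => ENNReal.ofReal (f y)) (2*n+1)
            (fun y b => ENNReal.ofReal (f (y + b))) x a :=
  chainP_step1 hg (2*n) x


lemma glm_le_chain (F : ℝ → ℂ) (n : ℕ) (hn : 1 ≤ n) (x : ℝ) :
    (‖glmTerm F n hn x‖₊ : ℝ≥0∞) ≤ chainP (fun t => ‖F t‖) n hn x := by
  refine le_trans (enorm_integral_le_lintegral_enorm _) (le_of_eq ?_)
  refine lintegral_congr fun t => ?_
  simp only [enorm_mul, ofReal_norm_eq_enorm]
  simp only [enorm_eq_nnnorm, nnnorm_prod, ENNReal.coe_finset_prod]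

lemma enorm_tsum_le (z : ℕ → ℂ) :
    (‖∑' n, z n‖₊ : ℝ≥0∞) ≤ ∑' n, (‖z n‖₊ : ℝ≥0∞) := by
  by_cases htop : (∑' n, (‖z n‖₊ : ℝ≥0∞)) = ⊤
  · rw [htop]; exact le_top
  · have hsum : Summable fun n => ‖z n‖₊ := ENNReal.tsum_coe_ne_top_iff_summable.1 htop
    have hnorm : Summable fun n => ‖z n‖ := by
      simpa [← NNReal.summable_coe] using hsum
    have hz : Summable z := Summable.of_norm hnorm
    rw [← ENNReal.coe_tsum hsum]
    rw [ENNReal.coe_le_coe, ← NNReal.coe_le_coe]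
    push_cast [NNReal.coe_tsum]
    exact le_trans (norm_tsum_le_tsum_norm hnorm) (le_of_eq (by simp [coe_nnnorm]))


lemma sq_iSup (v : ℕ → ℝ≥0∞) (hmono : Monotone v) : (⨆ n, v n) ^ 2 = ⨆ n, (v n) ^ 2 := by
  apply le_antisymm
  · rw [pow_two, ENNReal.iSup_mul]
    refine iSup_le fun n => ?_
    rw [ENNReal.mul_iSup]
    refine iSup_le fun m => ?_
    refine le_iSup_of_le (max n m) ?_
    rw [pow_two]
    exact mul_le_mul' (hmono (le_max_left n m)) (hmono (le_max_right n m))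
  · exact iSup_le fun n => pow_le_pow_left' (le_iSup v n) 2

lemma mink (μ : Measure ℝ) (u : ℕ → ℝ → ℝ≥0∞) (hu : ∀ n, Measurable (u n)) (N : ℕ) :
    (∫⁻ x, (∑ n ∈ Finset.range N, u n x) ^ (2:ℝ) ∂μ) ^ (1/2:ℝ)
      ≤ ∑ n ∈ Finset.range N, (∫⁻ x, u n x ^ (2:ℝ) ∂μ) ^ (1/2:ℝ) := by
  induction N with
  | zero =>
    simp [ENNReal.zero_rpow_of_pos, ENNReal.zero_rpow_of_pos (by norm_num : (0:ℝ) < 2),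
      ENNReal.zero_rpow_of_pos (by norm_num : (0:ℝ) < 1/2)]
  | succ N ih =>
    have hsum : Measurable fun x => ∑ n ∈ Finset.range N, u n x :=
      Finset.measurable_sum _ fun n _ => hu n
    have hstep := ENNReal.lintegral_Lp_add_le (μ := μ)
      (f := fun x => ∑ n ∈ Finset.range N, u n x) (g := u N)
      hsum.aemeasurable (hu N).aemeasurable (by norm_num : (1:ℝ) ≤ 2)
    calc (∫⁻ x, (∑ n ∈ Finset.range (N+1), u n x) ^ (2:ℝ) ∂μ) ^ (1/2:ℝ)
        = (∫⁻ x, ((fun x => ∑ n ∈ Finset.range N, u n x) + u N) x ^ (2:ℝ) ∂μ) ^ (1/2:ℝ) := by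
          congr 1
          refine lintegral_congr fun x => ?_
          congr 1
          simp [Finset.sum_range_succ]
      _ ≤ (∫⁻ x, (∑ n ∈ Finset.range N, u n x) ^ (2:ℝ) ∂μ) ^ (1/2:ℝ)
            + (∫⁻ x, u N x ^ (2:ℝ) ∂μ) ^ (1/2:ℝ) := hstep
      _ ≤ (∑ n ∈ Finset.range N, (∫⁻ x, u n x ^ (2:ℝ) ∂μ) ^ (1/2:ℝ))
            + (∫⁻ x, u N x ^ (2:ℝ) ∂μ) ^ (1/2:ℝ) := add_le_add_left ih _
      _ = ∑ n ∈ Finset.range (N+1), (∫⁻ x, u n x ^ (2:ℝ) ∂μ) ^ (1/2:ℝ) := by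
          rw [Finset.sum_range_succ]

end GlmAux

/-- Let `M := ∫_{x₀}^∞ |F| < 1` and
`W := ∫_{x₀}^∞ (1+x)^{2s}|F(x)|² dx < ∞` (with `s ≥ 0`, `x₀ ≥ 0`).  Then the series
`S(x) = Σ_{n≥1} P_n(x)` converges for a.e. `x > x₀`,
`∫_{x₀}^∞ (1+x)^{2s} S(x)² dx ≤ (M²/(1−M²))² W`, and consequently the
Gelfand–Levitan–Marchenko tail `G = Σ_{n≥1} G_n` satisfies
`∫_{x₀}^∞ (1+x)^{2s} |G(x)|² dx ≤ (M²/(1−M²))² W`, i.e. `G ∈ L^{2,s}(x₀,∞)` with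
`‖G‖_{L^{2,s}(x₀,∞)} ≤ (M²/(1−M²)) W^{1/2}`. -/
theorem glm_tail_weighted_bound (s : ℝ) (hs : 0 ≤ s) (x₀ : ℝ) (hx₀ : 0 ≤ x₀)
    (F : ℝ → ℂ) (hF : Measurable F)
    (hM : IntegrableOn F (Set.Ioi x₀))
    (hM1 : (∫ t in Set.Ioi x₀, ‖F t‖) < 1)
    (hW : IntegrableOn (fun x : ℝ => (1 + x) ^ (2 * s) * ‖F x‖ ^ 2)
      (Set.Ioi x₀)) :
    (∀ᵐ x ∂(volume.restrict (Set.Ioi x₀)),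
      (∑' n : ℕ, chainP (fun t => ‖F t‖) (n + 1) (Nat.le_add_left 1 n) x) < ⊤) ∧
    (∫⁻ x in Set.Ioi x₀, ENNReal.ofReal ((1 + x) ^ (2 * s)) *
        (∑' n : ℕ, chainP (fun t => ‖F t‖) (n + 1) (Nat.le_add_left 1 n) x) ^ 2)
      ≤ ENNReal.ofReal
          (((∫ t in Set.Ioi x₀, ‖F t‖) ^ 2 /
              (1 - (∫ t in Set.Ioi x₀, ‖F t‖) ^ 2)) ^ 2 *
            ∫ x in Set.Ioi x₀, (1 + x) ^ (2 * s) * ‖F x‖ ^ 2) ∧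
    (∫⁻ x in Set.Ioi x₀, ENNReal.ofReal ((1 + x) ^ (2 * s)) *
        ENNReal.ofReal (‖∑' n : ℕ, glmTerm F (n + 1) (Nat.le_add_left 1 n) x‖ ^ 2))
      ≤ ENNReal.ofReal
          (((∫ t in Set.Ioi x₀, ‖F t‖) ^ 2 /
              (1 - (∫ t in Set.Ioi x₀, ‖F t‖) ^ 2)) ^ 2 *
            ∫ x in Set.Ioi x₀, (1 + x) ^ (2 * s) * ‖F x‖ ^ 2) := by
  classical
  set f : ℝ → ℝ := fun t => ‖F t‖ with hfdef
  have hfme : Measurable f := continuous_norm.measurable.comp hF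
  set g : ℝ → ℝ≥0∞ := fun y => ENNReal.ofReal (f y) with hgdef
  have hg : Measurable g := ENNReal.measurable_ofReal.comp hfme
  set M : ℝ := ∫ t in Set.Ioi x₀, ‖F t‖ with hMdef
  set W : ℝ := ∫ x in Set.Ioi x₀, (1 + x) ^ (2 * s) * ‖F x‖ ^ 2 with hWdef
  set M' : ℝ≥0∞ := ∫⁻ t in Set.Ioi x₀, g t with hM'def
  set h : ℝ → ℝ≥0∞ := fun y => ENNReal.ofReal ((1 + y) ^ s * ‖F y‖) with hhdef
  have hh : Measurable h := ENNReal.measurable_ofReal.comp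
    (((measurable_id.const_add 1).pow_const s).mul hfme)
  set w1 : ℝ → ℝ≥0∞ := fun x => ENNReal.ofReal ((1 + x) ^ s) with hw1def
  set W' : ℝ≥0∞ := ∫⁻ y in Set.Ioi x₀, (h y) ^ 2 with hW'def
  have habs : ∀ t : ℝ, 0 ≤ f t := fun t => norm_nonneg _
  have hM0 : 0 ≤ M := integral_nonneg (fun t => habs t)
  have hfint : Integrable f (volume.restrict (Set.Ioi x₀)) := by
    have := hM.norm
    simpa [hfdef] using this
  have hM'eq : M' = ENNReal.ofReal M := by
    rw [hM'def, hMdef]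
    exact (ofReal_integral_eq_lintegral_ofReal hfint
      (Filter.Eventually.of_forall habs)).symm
  have hM1' : M < 1 := hM1
  have hMsq : M ^ 2 < 1 := by nlinarith
  have h1M2 : (0 : ℝ) < 1 - M ^ 2 := by linarith
  have hW'eq : W' = ENNReal.ofReal W := by
    have e1 : ∫⁻ y in Set.Ioi x₀, (h y) ^ 2
        = ∫⁻ y in Set.Ioi x₀, ENNReal.ofReal ((1 + y) ^ (2 * s) * ‖F y‖ ^ 2) := by
      refine setLIntegral_congr_fun measurableSet_Ioi
        (fun y hy => ?_)
      have hy0 : (0:ℝ) ≤ 1 + y := by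
        simp only [Set.mem_Ioi] at hy; linarith
      rw [hhdef]
      rw [← ENNReal.ofReal_pow (mul_nonneg (Real.rpow_nonneg hy0 s) (habs y))]
      congr 1
      rw [mul_pow]
      congr 1
      rw [← Real.rpow_natCast ((1 + y) ^ s) 2, ← Real.rpow_mul hy0]
      norm_num
      ring_nf
    rw [hW'def, e1, hWdef]
    refine (ofReal_integral_eq_lintegral_ofReal hW ?_).symm
    filter_upwards [ae_restrict_mem measurableSet_Ioi] with y hy
    have hy0 : (0:ℝ) ≤ 1 + y := by
      simp only [Set.mem_Ioi] at hy; linarith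
    exact mul_nonneg (Real.rpow_nonneg hy0 _) (sq_nonneg _)
  -- the comparison hypothesis for nbound
  have hcomp : ∀ x ∈ Set.Ioi x₀, ∀ a ∈ Set.Ioi (0:ℝ), w1 x * g (x + a) ≤ h (x + a) := by
    intro x hx a ha
    simp only [Set.mem_Ioi] at hx ha
    have hx0 : (0:ℝ) ≤ 1 + x := by linarith
    rw [hw1def, hgdef, hhdef]
    rw [← ENNReal.ofReal_mul (Real.rpow_nonneg hx0 s)]
    refine ENNReal.ofReal_le_ofReal ?_
    refine mul_le_mul_of_nonneg_right ?_ (habs _)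
    exact Real.rpow_le_rpow hx0 (by linarith) hs
  -- measurability of chainP
  have hchainPmeas : ∀ n : ℕ, Measurable fun x =>
      chainP f (n + 1) (Nat.le_add_left 1 n) x := by
    intro n
    have e : (fun x => chainP f (n + 1) (Nat.le_add_left 1 n) x)
        = fun x => ∫⁻ a in Set.Ioi (0:ℝ), g (x + a) *
            GlmAux.Ch g (2*n+1) (fun y b => g (y + b)) x a :=
      funext fun x => GlmAux.chainP_repr f hg n _ x
    rw [e]
    refine Measurable.lintegral_prod_right'
      (f := fun q : ℝ × ℝ => g (q.1 + q.2) * GlmAux.Ch g (2*n+1) (fun y b => g (y + b)) q.1 q.2) ?_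
    exact (hg.comp (by fun_prop)).mul
      (GlmAux.meas_Ch hg (hg.comp (by fun_prop : Measurable fun p : ℝ × ℝ => p.1 + p.2)) (2*n+1))
  -- per-n squared bound
  have keyJ : ∀ n : ℕ,
      (∫⁻ x in Set.Ioi x₀, (w1 x * chainP f (n + 1) (Nat.le_add_left 1 n) x) ^ 2)
        ≤ (M' ^ (2*n+2)) ^ 2 * W' := by
    intro n
    have e : ∀ x : ℝ, (w1 x * chainP f (n + 1) (Nat.le_add_left 1 n) x) ^ 2
        = (w1 x) ^ 2 * (∫⁻ a in Set.Ioi (0:ℝ), g (x + a) *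
            GlmAux.Ch g (2*n+1) (fun y b => g (y + b)) x a) ^ 2 := by
      intro x
      rw [mul_pow, GlmAux.chainP_repr f hg n _ x]
    rw [lintegral_congr e]
    have hb := GlmAux.nbound hg (h := h) (w1 := w1) hh x₀ hcomp n
    refine le_trans hb (le_of_eq ?_)
    rw [← pow_mul]
    congr 2
    omega
  set u : ℕ → ℝ → ℝ≥0∞ := fun n x => w1 x * chainP f (n+1) (Nat.le_add_left 1 n) x with hudef
  have hw1meas : Measurable w1 :=
    ENNReal.measurable_ofReal.comp ((measurable_id.const_add 1).pow_const s)
  have humeas : ∀ n, Measurable (u n) := fun n => hw1meas.mul (hchainPmeas n)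
  have hwt : ∀ x ∈ Set.Ioi x₀, ENNReal.ofReal ((1+x)^(2*s)) = (w1 x)^2 := by
    intro x hx
    simp only [Set.mem_Ioi] at hx
    have hx0 : (0:ℝ) ≤ 1 + x := by linarith
    rw [hw1def, ← ENNReal.ofReal_pow (Real.rpow_nonneg hx0 s)]
    congr 1
    rw [← Real.rpow_natCast ((1 + x) ^ s) 2, ← Real.rpow_mul hx0]
    norm_num
    ring_nf
  have hL2 : (∫⁻ x in Set.Ioi x₀, ENNReal.ofReal ((1 + x) ^ (2 * s)) *
        (∑' n : ℕ, chainP f (n + 1) (Nat.le_add_left 1 n) x) ^ 2)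
      = ∫⁻ x in Set.Ioi x₀, (∑' n : ℕ, u n x) ^ 2 := by
    refine setLIntegral_congr_fun measurableSet_Ioi
      (fun x hx => ?_)
    rw [hwt x hx, ← mul_pow]
    congr 1
    exact (ENNReal.tsum_mul_left).symm
  have hrw2 : ∀ y : ℝ≥0∞, y ^ (2:ℝ) = y ^ 2 := fun y => by
    rw [← ENNReal.rpow_natCast y 2]; norm_num
  have hhalf : ∀ y : ℝ≥0∞, (y ^ 2) ^ (1/2:ℝ) = y := fun y => by
    rw [← ENNReal.rpow_natCast y 2, ← ENNReal.rpow_mul]; norm_num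
  set Stot : ℝ≥0∞ := (M' ^ 2 * W' ^ (1/2:ℝ)) * (1 - M' ^ 2)⁻¹ with hStotdef
  have h4 : (∑' n : ℕ, M' ^ (2*n+2) * W' ^ (1/2:ℝ)) = Stot := by
    have e : ∀ n : ℕ, M' ^ (2*n+2) * W' ^ (1/2:ℝ)
        = (M' ^ 2 * W' ^ (1/2:ℝ)) * (M' ^ 2) ^ n := by
      intro n
      rw [pow_add, pow_mul]
      ring
    rw [tsum_congr e, ENNReal.tsum_mul_left, ENNReal.tsum_geometric, hStotdef]
  have hNbd : ∀ N : ℕ, (∫⁻ x in Set.Ioi x₀, (∑ n ∈ Finset.range N, u n x) ^ 2) ≤ Stot ^ 2 := by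
    intro N
    set X := ∫⁻ x in Set.Ioi x₀, (∑ n ∈ Finset.range N, u n x) ^ 2 with hXdef
    have h1 : X ^ (1/2:ℝ) ≤ ∑ n ∈ Finset.range N,
        (∫⁻ x in Set.Ioi x₀, (u n x) ^ 2) ^ (1/2:ℝ) := by
      have hm := GlmAux.mink (volume.restrict (Set.Ioi x₀)) u humeas N
      rw [show (∫⁻ x in Set.Ioi x₀, (∑ n ∈ Finset.range N, u n x) ^ (2:ℝ)) = X from by
        rw [hXdef]; exact lintegral_congr fun x => hrw2 _] at hm
      refine hm.trans (le_of_eq (Finset.sum_congr rfl fun n _ => ?_))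
      congr 1
      exact lintegral_congr fun x => hrw2 _
    have h2 : ∀ n : ℕ, (∫⁻ x in Set.Ioi x₀, (u n x) ^ 2) ^ (1/2:ℝ)
        ≤ M' ^ (2*n+2) * W' ^ (1/2:ℝ) := by
      intro n
      refine le_trans (ENNReal.rpow_le_rpow (keyJ n) (by norm_num)) (le_of_eq ?_)
      rw [ENNReal.mul_rpow_of_nonneg _ _ (by norm_num : (0:ℝ) ≤ 1/2), hhalf]
    have h3 : X ^ (1/2:ℝ) ≤ Stot := by
      refine h1.trans ?_
      refine le_trans (Finset.sum_le_sum fun n _ => h2 n) ?_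
      rw [← h4]
      exact ENNReal.sum_le_tsum _
    have hXid : X = (X ^ (1/2:ℝ)) ^ 2 := by
      rw [← hrw2 (X ^ (1/2:ℝ)), ← ENNReal.rpow_mul]
      norm_num
    calc X = (X ^ (1/2:ℝ)) ^ 2 := hXid
      _ ≤ Stot ^ 2 := pow_le_pow_left' h3 2
  have hMCT : (∫⁻ x in Set.Ioi x₀, (∑' n : ℕ, u n x) ^ 2)
      = ⨆ N, ∫⁻ x in Set.Ioi x₀, (∑ n ∈ Finset.range N, u n x) ^ 2 := by
    have e : ∀ x : ℝ, (∑' n : ℕ, u n x) ^ 2 = ⨆ N, (∑ n ∈ Finset.range N, u n x) ^ 2 := by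
      intro x
      rw [ENNReal.tsum_eq_iSup_nat]
      exact GlmAux.sq_iSup _
        (fun N K hNK => Finset.sum_le_sum_of_subset (Finset.range_subset_range.2 hNK))
    rw [lintegral_congr e]
    exact lintegral_iSup
      (fun N => (Finset.measurable_sum _ fun n _ => humeas n).pow_const 2)
      (fun N K hNK x =>
        pow_le_pow_left' (Finset.sum_le_sum_of_subset (Finset.range_subset_range.2 hNK)) 2)
  have hmain2 : (∫⁻ x in Set.Ioi x₀, ENNReal.ofReal ((1 + x) ^ (2 * s)) *
        (∑' n : ℕ, chainP f (n + 1) (Nat.le_add_left 1 n) x) ^ 2) ≤ Stot ^ 2 := by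
    rw [hL2, hMCT]
    exact iSup_le hNbd
  have hsub : (1 : ℝ≥0∞) - M' ^ 2 = ENNReal.ofReal (1 - M ^ 2) := by
    rw [ENNReal.ofReal_sub 1 (pow_nonneg hM0 2), ENNReal.ofReal_one,
      ENNReal.ofReal_pow hM0, ← hM'eq]
  have hQ : M' ^ 2 * (1 - M' ^ 2)⁻¹ = ENNReal.ofReal (M ^ 2 / (1 - M ^ 2)) := by
    rw [div_eq_mul_inv, ENNReal.ofReal_mul (pow_nonneg hM0 2),
      ENNReal.ofReal_inv_of_pos h1M2, ← hsub, hM'eq, ENNReal.ofReal_pow hM0]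
  have hWhalf : (W' ^ (1/2:ℝ)) ^ 2 = W' := by
    rw [← hrw2 (W' ^ (1/2:ℝ)), ← ENNReal.rpow_mul]
    norm_num
  have hRHSeq : Stot ^ 2 = ENNReal.ofReal ((M ^ 2 / (1 - M ^ 2)) ^ 2 * W) := by
    have e1 : Stot ^ 2 = (M' ^ 2 * (1 - M' ^ 2)⁻¹) ^ 2 * W' := by
      rw [hStotdef]
      rw [show (M' ^ 2 * W' ^ (1/2:ℝ)) * (1 - M' ^ 2)⁻¹
        = (M' ^ 2 * (1 - M' ^ 2)⁻¹) * W' ^ (1/2:ℝ) from by ring]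
      rw [mul_pow, hWhalf]
    rw [e1, hQ, hW'eq, ← ENNReal.ofReal_pow (by positivity), ← ENNReal.ofReal_mul (by positivity)]
  have part2 : (∫⁻ x in Set.Ioi x₀, ENNReal.ofReal ((1 + x) ^ (2 * s)) *
        (∑' n : ℕ, chainP f (n + 1) (Nat.le_add_left 1 n) x) ^ 2)
      ≤ ENNReal.ofReal ((M ^ 2 / (1 - M ^ 2)) ^ 2 * W) :=
    hmain2.trans (le_of_eq hRHSeq)
  have part1 : ∀ᵐ x ∂(volume.restrict (Set.Ioi x₀)),
      (∑' n : ℕ, chainP f (n + 1) (Nat.le_add_left 1 n) x) < ⊤ := by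
    have hSmeas : Measurable fun x => ENNReal.ofReal ((1 + x) ^ (2 * s)) *
        (∑' n : ℕ, chainP f (n + 1) (Nat.le_add_left 1 n) x) ^ 2 :=
      (ENNReal.measurable_ofReal.comp ((measurable_id.const_add 1).pow_const (2*s))).mul
        ((Measurable.ennreal_tsum hchainPmeas).pow_const 2)
    have hne : (∫⁻ x in Set.Ioi x₀, ENNReal.ofReal ((1 + x) ^ (2 * s)) *
        (∑' n : ℕ, chainP f (n + 1) (Nat.le_add_left 1 n) x) ^ 2) ≠ ⊤ :=
      ne_top_of_le_ne_top ENNReal.ofReal_ne_top part2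
    filter_upwards [ae_lt_top hSmeas hne, ae_restrict_mem measurableSet_Ioi] with x hx hxm
    simp only [Set.mem_Ioi] at hxm
    rw [lt_top_iff_ne_top]
    intro hS
    apply hx.ne
    rw [hS]
    have h2 : (⊤ : ℝ≥0∞) ^ 2 = ⊤ := by simp [pow_two]
    rw [h2, ENNReal.mul_top]
    exact (ENNReal.ofReal_pos.2 (Real.rpow_pos_of_pos (by linarith) _)).ne'
  have part3 : (∫⁻ x in Set.Ioi x₀, ENNReal.ofReal ((1 + x) ^ (2 * s)) *
        ENNReal.ofReal (‖∑' n : ℕ, glmTerm F (n + 1) (Nat.le_add_left 1 n) x‖ ^ 2))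
      ≤ ENNReal.ofReal ((M ^ 2 / (1 - M ^ 2)) ^ 2 * W) := by
    refine le_trans ?_ part2
    refine lintegral_mono fun x => mul_le_mul_right ?_ _
    have h1 : ENNReal.ofReal (‖∑' n : ℕ, glmTerm F (n + 1) (Nat.le_add_left 1 n) x‖ ^ 2)
        = ((‖∑' n : ℕ, glmTerm F (n + 1) (Nat.le_add_left 1 n) x‖₊ : ℝ≥0∞)) ^ 2 := by
      rw [ENNReal.ofReal_pow (norm_nonneg _), ofReal_norm_eq_enorm, enorm_eq_nnnorm]
    rw [h1]
    refine le_trans (pow_le_pow_left' (GlmAux.enorm_tsum_le _) 2) ?_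
    refine pow_le_pow_left' (ENNReal.tsum_le_tsum fun n => ?_) 2
    exact GlmAux.glm_le_chain F (n+1) (Nat.le_add_left 1 n) x
  exact ⟨part1, part2, part3⟩
end
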